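/- arXiv:2212.13413 — 7 statements merged into one kernel-verified Lean document; each statement's English description precedes it below -/
import Mathlib

section
/- Let γ > 0, N ≥ 1, let a₀,…,a_N be real numbers and z₁,…,z_N complex numbers such that for every complex z with Re(z) > 0 one has (1/γ) ∑_{i=0}^{N} a_i/(z + i/γ) − 1 = −((z − 2/γ)/z) · (∏_{i=1}^{N}(z − z_i)) / (∏_{i=1}^{N}(z + i/γ)). Define ũ_S(z) = Γ(z) · (∏_{i=1}^{N} Γ(z + i/γ)) / (∏_{i=1}^{N} Γ(z − z_i)) (with 1/Γ interpreted as the entire reciprocal Gamma function). Then for every complex z with Re(z) > 0: −γ z ũ_S(z) + 2 ũ_S(z) = γ((1/γ) ∑_{i=0}^{N} a_i/(z + i/γ) − 1) · ũ_S(z+1). -/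
open Finset

private lemma mellin_aux (γ w G A B P Q : ℂ) (hγ : γ ≠ 0) (hw : w ≠ 0) (hP : P ≠ 0)
    (hQ : Q ≠ 0) (hB : B ≠ 0) :
    -γ * w * (G * A / B) + 2 * (G * A / B) =
      γ * (-((w - 2/γ) / w) * P / Q) * (w * G * (Q * A) / (P * B)) := by
  field_simp
  ring

/-- The explicit Gamma-product formula solves the stationary Mellin equation for the
selfsimilar profile of the fragmentation equation with polynomial daughter distribution. -/
theorem selfsimilar_profile_solves_mellin_equation (γ : ℝ) (hγ : 0 < γ) (N : ℕ) (hN : 1 ≤ N)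
    (a : ℕ → ℝ) (z : ℕ → ℂ)
    (hfact : ∀ w : ℂ, 0 < w.re →
      (1 / (γ:ℂ)) * ∑ i ∈ range (N+1), (a i : ℂ) / (w + (i:ℂ)/(γ:ℂ)) - 1 =
        -((w - 2/(γ:ℂ)) / w) *
          (∏ i ∈ Icc 1 N, (w - z i)) / (∏ i ∈ Icc 1 N, (w + (i:ℂ)/(γ:ℂ))))
    (uS : ℂ → ℂ)
    (huS : ∀ w : ℂ, uS w = Complex.Gamma w *
        (∏ i ∈ Icc 1 N, Complex.Gamma (w + (i:ℂ)/(γ:ℂ))) /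
        (∏ i ∈ Icc 1 N, Complex.Gamma (w - z i))) :
    ∀ w : ℂ, 0 < w.re →
      -(γ:ℂ) * w * uS w + 2 * uS w =
        (γ:ℂ) * ((1 / (γ:ℂ)) * ∑ i ∈ range (N+1), (a i : ℂ) / (w + (i:ℂ)/(γ:ℂ)) - 1) *
          uS (w + 1) := by
  intro w hw
  have hγ0 : (γ:ℂ) ≠ 0 := by exact_mod_cast hγ.ne'
  have hw0 : w ≠ 0 := by
    intro h; rw [h] at hw; simp at hw
  have hre : ∀ i : ℕ, 0 < (w + (i:ℂ)/(γ:ℂ)).re := by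
    intro i
    have h1 : (i:ℂ)/(γ:ℂ) = (((i:ℝ)/γ : ℝ) : ℂ) := by push_cast; ring
    rw [h1, Complex.add_re, Complex.ofReal_re]
    have : (0:ℝ) ≤ (i:ℝ)/γ := by positivity
    linarith
  have hQne : ∀ i ∈ Icc 1 N, w + (i:ℂ)/(γ:ℂ) ≠ 0 := by
    intro i _
    intro h
    have := hre i
    rw [h] at this; simp at this
  have hΓQne : ∀ i ∈ Icc 1 N, Complex.Gamma (w + (i:ℂ)/(γ:ℂ)) ≠ 0 := by
    intro i _
    exact Complex.Gamma_ne_zero_of_re_pos (hre i)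
  rw [hfact w hw, huS w, huS (w+1)]
  by_cases hB' : ∃ i ∈ Icc 1 N, Complex.Gamma (w + 1 - z i) = 0
  · obtain ⟨i, hi, h0⟩ := hB'
    have h1 : Complex.Gamma (w - z i) = 0 := by
      rw [Complex.Gamma_eq_zero_iff] at h0 ⊢
      obtain ⟨m, hm⟩ := h0
      exact ⟨m + 1, by push_cast; linear_combination hm⟩
    have hz1 : ∏ i ∈ Icc 1 N, Complex.Gamma (w + 1 - z i) = 0 :=
      Finset.prod_eq_zero hi h0
    have hz2 : ∏ i ∈ Icc 1 N, Complex.Gamma (w - z i) = 0 :=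
      Finset.prod_eq_zero hi h1
    rw [hz1, hz2]
    simp
  · push_neg at hB'
    by_cases hP : ∃ i ∈ Icc 1 N, w - z i = 0
    · obtain ⟨i, hi, h0⟩ := hP
      have h1 : Complex.Gamma (w - z i) = 0 := by rw [h0, Complex.Gamma_zero]
      have hz1 : ∏ i ∈ Icc 1 N, Complex.Gamma (w - z i) = 0 :=
        Finset.prod_eq_zero hi h1
      have hz2 : ∏ i ∈ Icc 1 N, (w - z i) = 0 := Finset.prod_eq_zero hi h0
      rw [hz1, hz2]
      simp
    · push_neg at hP
      have hΓBne : ∀ i ∈ Icc 1 N, Complex.Gamma (w - z i) ≠ 0 := by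
        intro i hi
        intro h
        apply hB' i hi
        have he : w + 1 - z i = (w - z i) + 1 := by ring
        rw [he, Complex.Gamma_add_one _ (hP i hi), h, mul_zero]
      have hΓ1 : Complex.Gamma (w + 1) = w * Complex.Gamma w :=
        Complex.Gamma_add_one w hw0
      have hA' : ∏ i ∈ Icc 1 N, Complex.Gamma (w + 1 + (i:ℂ)/(γ:ℂ)) =
          (∏ i ∈ Icc 1 N, (w + (i:ℂ)/(γ:ℂ))) *
            ∏ i ∈ Icc 1 N, Complex.Gamma (w + (i:ℂ)/(γ:ℂ)) := by
        rw [← Finset.prod_mul_distrib]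
        refine Finset.prod_congr rfl fun i hi => ?_
        have he : w + 1 + (i:ℂ)/(γ:ℂ) = (w + (i:ℂ)/(γ:ℂ)) + 1 := by ring
        rw [he, Complex.Gamma_add_one _ (hQne i hi)]
      have hB2 : ∏ i ∈ Icc 1 N, Complex.Gamma (w + 1 - z i) =
          (∏ i ∈ Icc 1 N, (w - z i)) * ∏ i ∈ Icc 1 N, Complex.Gamma (w - z i) := by
        rw [← Finset.prod_mul_distrib]
        refine Finset.prod_congr rfl fun i hi => ?_
        have he : w + 1 - z i = (w - z i) + 1 := by ring
        rw [he, Complex.Gamma_add_one _ (hP i hi)]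
      rw [hΓ1, hA', hB2]
      have hQ0 : (∏ i ∈ Icc 1 N, (w + (i:ℂ)/(γ:ℂ))) ≠ 0 := Finset.prod_ne_zero_iff.2 hQne
      have hP0 : (∏ i ∈ Icc 1 N, (w - z i)) ≠ 0 := Finset.prod_ne_zero_iff.2 hP
      have hBne : (∏ i ∈ Icc 1 N, Complex.Gamma (w - z i)) ≠ 0 :=
        Finset.prod_ne_zero_iff.2 hΓBne
      exact mellin_aux _ _ _ _ _ _ _ hγ0 hw0 hP0 hQ0 hBne
end

section
/- Let γ > 0 and a₀ > 2, and set β = (a₀ − 2)/(2γ). Define u_S(x) = (1/Γ(β)) ∫₁^∞ s^{−a₀/(2γ)} (s−1)^{β−1} e^{−s x} ds for x > 0. Then for every complex z with Re(z) > 0: ∫₀^∞ x^{z−1} u_S(x) dx = Γ(z + 1/γ) Γ(z) / Γ(z + a₀/(2γ)). -/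
open MeasureTheory Set Complex

lemma aux_real_int {p r : ℝ} (hp : 0 < p) (hr : 0 < r) :
    IntegrableOn (fun x : ℝ => x ^ (p - 1) * Real.exp (-(r * x))) (Ioi 0) := by
  have h := integrableOn_rpow_mul_exp_neg_mul_rpow (p := 1) (s := p - 1) (b := r)
    (by linarith) one_pos hr
  simpa [Real.rpow_one, neg_mul] using h

lemma aux_cpow_exp_int (z : ℂ) (hz : 0 < z.re) {r : ℝ} (hr : 0 < r) :
    IntegrableOn (fun x : ℝ => (x:ℂ) ^ (z-1) * Real.exp (-(r * x))) (Ioi 0) := by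
  have hb := aux_real_int hz hr
  refine Integrable.mono' hb ?_ ?_
  · refine ContinuousOn.aestronglyMeasurable (fun x hx => ?_) measurableSet_Ioi
    exact ((continuousAt_ofReal_cpow_const x _ (Or.inr (ne_of_gt hx))).mul
      ((Complex.continuous_ofReal.comp
        (Real.continuous_exp.comp (by continuity))).continuousAt)).continuousWithinAt
  · filter_upwards [ae_restrict_mem measurableSet_Ioi] with x hx
    rw [norm_mul, Complex.norm_real, Real.norm_of_nonneg (Real.exp_pos _).le,
      Complex.norm_cpow_eq_rpow_re_of_pos hx, sub_re, one_re]

lemma real_beta_int_aux (w c : ℂ) (hw : 0 < w.re) (hcw : 0 < (c-w).re) :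
    IntegrableOn (fun s : ℝ => (s:ℂ)^(-c) * ((s - 1 : ℝ):ℂ)^(w-1)) (Ioi 1) ∧
    ∫ s in Ioi (1:ℝ), (s:ℂ)^(-c) * ((s - 1 : ℝ):ℂ)^(w-1)
      = Complex.Gamma (c - w) * Complex.Gamma w / Complex.Gamma c := by
  set g : ℝ → ℂ := fun s => (s:ℂ)^(-c) * ((s - 1 : ℝ):ℂ)^(w-1) with hg
  have himg : (fun t : ℝ => t⁻¹) '' Ioo 0 1 = Ioi 1 := by
    ext x
    simp only [mem_image, mem_Ioo, mem_Ioi]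
    constructor
    · rintro ⟨t, ⟨h0, h1⟩, rfl⟩
      exact (one_lt_inv_iff₀).mpr ⟨h0, h1⟩
    · intro hx
      have hx0 : 0 < x := lt_trans one_pos hx
      exact ⟨x⁻¹, ⟨inv_pos.mpr hx0, inv_lt_one_of_one_lt₀ hx⟩, inv_inv x⟩
  have hderiv : ∀ t ∈ Ioo (0:ℝ) 1,
      HasDerivWithinAt (fun t : ℝ => t⁻¹) (-(t^2)⁻¹) (Ioo 0 1) t :=
    fun t ht => (hasDerivAt_inv (ne_of_gt ht.1)).hasDerivWithinAt
  have hinj : InjOn (fun t : ℝ => t⁻¹) (Ioo 0 1) := inv_injective.injOn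
  have key : ∀ t ∈ Ioo (0:ℝ) 1,
      |(-(t^2)⁻¹)| • g t⁻¹ = (t:ℂ)^(c - w - 1) * (1 - (t:ℂ))^(w-1) := by
    intro t ht
    obtain ⟨h0, h1⟩ := ht
    have hT : (t:ℂ) ≠ 0 := ofReal_ne_zero.mpr h0.ne'
    have harg : (t:ℂ).arg ≠ Real.pi := by
      rw [Complex.arg_ofReal_of_nonneg h0.le]
      exact Real.pi_ne_zero.symm
    have habs : |(-(t^2)⁻¹)| = (t^2)⁻¹ := by
      rw [abs_neg, abs_of_pos (by positivity)]
    have h2 : (((t^2)⁻¹ : ℝ) : ℂ) = (t:ℂ) ^ (-2 : ℂ) := by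
      push_cast
      rw [show (-2 : ℂ) = -((2:ℕ):ℂ) by norm_num, cpow_neg, cpow_natCast]
    have step1 : (((t⁻¹:ℝ)):ℂ)^(-c) = (t:ℂ)^c := by
      rw [ofReal_inv, inv_cpow _ _ harg, ← cpow_neg, neg_neg]
    have hsub : (t⁻¹ - 1 : ℝ) = (1 - t) * t⁻¹ := by field_simp
    have step2 : (((t⁻¹ - 1 : ℝ)):ℂ)^(w-1)
        = (((1 - t : ℝ)):ℂ)^(w-1) * (t:ℂ)^(1-w) := by
      rw [hsub, ofReal_mul, mul_cpow_ofReal_nonneg (by linarith) (by positivity),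
        ofReal_inv, inv_cpow _ _ harg, ← cpow_neg, neg_sub]
    have hgt : g t⁻¹ = (((t⁻¹:ℝ)):ℂ)^(-c) * (((t⁻¹ - 1 : ℝ)):ℂ)^(w-1) := rfl
    rw [habs, hgt, step1, step2, real_smul, h2]
    have h1t : (((1 - t : ℝ)):ℂ) = 1 - (t:ℂ) := by push_cast; ring
    rw [h1t]
    rw [show (t:ℂ) ^ (-2:ℂ) * ((t:ℂ)^c * ((1 - (t:ℂ))^(w-1) * (t:ℂ)^(1-w)))
        = ((t:ℂ)^(-2:ℂ) * (t:ℂ)^c * (t:ℂ)^(1-w)) * (1 - (t:ℂ))^(w-1) by ring,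
      ← cpow_add _ _ hT, ← cpow_add _ _ hT]
    congr 2
    ring
  have hbetaInt : IntegrableOn
      (fun t : ℝ => (t:ℂ)^(c - w - 1) * (1 - (t:ℂ))^(w-1)) (Ioo 0 1) := by
    have h := (Complex.betaIntegral_convergent hcw hw).1
    exact h.mono_set Ioo_subset_Ioc_self
  constructor
  · rw [← himg,
      integrableOn_image_iff_integrableOn_abs_deriv_smul measurableSet_Ioo hderiv hinj]
    exact hbetaInt.congr_fun (fun t ht => (key t ht).symm) measurableSet_Ioo
  · have heq : ∫ s in Ioi (1:ℝ), g s
        = ∫ t in Ioo (0:ℝ) 1, (t:ℂ)^(c - w - 1) * (1 - (t:ℂ))^(w-1) := by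
      rw [← himg,
        integral_image_eq_integral_abs_deriv_smul measurableSet_Ioo hderiv hinj g]
      exact setIntegral_congr_fun measurableSet_Ioo key
    have hbeta : ∫ t in Ioo (0:ℝ) 1, (t:ℂ)^(c - w - 1) * (1 - (t:ℂ))^(w-1)
        = Complex.betaIntegral (c - w) w := by
      rw [Complex.betaIntegral, intervalIntegral.integral_of_le zero_le_one,
        integral_Ioc_eq_integral_Ioo]
    have hΓc : Complex.Gamma c ≠ 0 := by
      apply Complex.Gamma_ne_zero_of_re_pos
      have : c.re = (c - w).re + w.re := by simp [Complex.sub_re]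
      rw [this]; linarith
    have hmul := Complex.Gamma_mul_Gamma_eq_betaIntegral hcw hw
    rw [sub_add_cancel] at hmul
    rw [heq, hbeta, eq_div_iff hΓc, mul_comm]
    exact hmul.symm

lemma real_beta_int {q b : ℝ} (hb : 0 < b) (hq : b < q) :
    IntegrableOn (fun s : ℝ => s ^ (-q) * (s-1) ^ (b-1)) (Ioi 1) := by
  have h := (real_beta_int_aux (b:ℂ) (q:ℂ) (by simpa using hb)
    (by rw [← Complex.ofReal_sub]; simpa using sub_pos.mpr hq)).1
  have h2 : IntegrableOn (fun s : ℝ => ‖(s:ℂ)^(-(q:ℂ)) * ((s - 1 : ℝ):ℂ)^((b:ℂ)-1)‖) (Ioi 1) := h.norm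
  refine IntegrableOn.congr_fun h2 (fun s hs => ?_) measurableSet_Ioi
  have hs1 : (1:ℝ) < s := hs
  rw [norm_mul,
    Complex.norm_cpow_eq_rpow_re_of_pos (by linarith),
    Complex.norm_cpow_eq_rpow_re_of_pos (by linarith : (0:ℝ) < s - 1)]
  simp [Complex.sub_re]


/-- Mellin transform of the selfsimilar profile for linear daughter distribution with `a₀ > 2`:
`∫₀^∞ x^{z−1} u_S(x) dx = Γ(z + 1/γ) Γ(z) / Γ(z + a₀/(2γ))` for `Re z > 0`. -/
theorem mellin_of_selfsimilar_profile (γ a₀ : ℝ) (hγ : 0 < γ) (ha : 2 < a₀)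
    (β : ℝ) (hβ : β = (a₀ - 2) / (2 * γ))
    (uS : ℝ → ℝ)
    (huS : ∀ x : ℝ, 0 < x → uS x = (1 / Real.Gamma β) *
      ∫ s in Ioi (1:ℝ), s ^ (-(a₀ / (2*γ))) * (s - 1) ^ (β - 1) * Real.exp (-(s * x))) :
    ∀ z : ℂ, 0 < z.re →
      ∫ x in Ioi (0:ℝ), (x:ℂ) ^ (z - 1) * (uS x : ℂ) =
        Complex.Gamma (z + 1/(γ:ℂ)) * Complex.Gamma z /
          Complex.Gamma (z + (a₀:ℂ)/(2*(γ:ℂ))) := by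
  intro z hz
  have hγ0 : γ ≠ 0 := hγ.ne'
  have hγC : (γ:ℂ) ≠ 0 := ofReal_ne_zero.mpr hγ0
  have hβpos : 0 < β := by
    rw [hβ]; exact div_pos (by linarith) (by linarith)
  set G : ℝ → ℝ := fun s => s ^ (-(a₀ / (2*γ))) * (s - 1) ^ (β - 1) with hG
  set c : ℂ := z + (a₀:ℂ)/(2*(γ:ℂ)) with hc
  set F : ℝ → ℝ → ℂ :=
    fun x s => (x:ℂ)^(z-1) * ((G s : ℝ):ℂ) * ((Real.exp (-(s*x)) : ℝ):ℂ) with hF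
  -- basic complex identities
  have hcβ : c - (β:ℂ) = z + 1/(γ:ℂ) := by
    rw [hc, hβ]
    push_cast
    field_simp
    ring
  have hrecβ : 0 < (c - (β:ℂ)).re := by
    rw [hcβ, show (1:ℂ)/(γ:ℂ) = ((1/γ : ℝ):ℂ) by push_cast; ring, Complex.add_re,
      Complex.ofReal_re]
    have : 0 < 1/γ := by positivity
    linarith
  have hβre : 0 < ((β:ℂ)).re := by simpa using hβpos
  have hGnn : ∀ s ∈ Ioi (1:ℝ), 0 ≤ G s := by
    intro s hs
    have hs1 : (1:ℝ) < s := hs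
    exact mul_nonneg (Real.rpow_nonneg (by linarith) _)
      (Real.rpow_nonneg (by linarith) _)
  -- Step 1: rewrite the integrand
  have hpt : ∀ x ∈ Ioi (0:ℝ), (x:ℂ)^(z-1) * (uS x : ℂ)
      = ((1/Real.Gamma β : ℝ):ℂ) * ∫ s in Ioi (1:ℝ), F x s := by
    intro x hx
    have hoI : ((∫ s in Ioi (1:ℝ), s ^ (-(a₀ / (2*γ))) * (s - 1) ^ (β - 1)
          * Real.exp (-(s * x)) : ℝ) : ℂ)
        = ∫ s in Ioi (1:ℝ), ((s ^ (-(a₀ / (2*γ))) * (s - 1) ^ (β - 1)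
          * Real.exp (-(s * x)) : ℝ) : ℂ) := integral_ofReal.symm
    rw [huS x hx, Complex.ofReal_mul, hoI, ← mul_assoc,
      mul_comm ((x:ℂ)^(z-1)) ((1/Real.Gamma β : ℝ):ℂ), mul_assoc, ← integral_const_mul]
    congr 1
    refine setIntegral_congr_fun measurableSet_Ioi (fun s _ => ?_)
    simp only [hF, hG]
    push_cast
    ring
  rw [setIntegral_congr_fun measurableSet_Ioi hpt, integral_const_mul]
  -- Step 2: Fubini
  have hFmeas : AEStronglyMeasurable (fun p : ℝ × ℝ => F p.1 p.2)
      ((volume.restrict (Ioi 0)).prod (volume.restrict (Ioi 1))) := by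
    rw [Measure.prod_restrict]
    refine ContinuousOn.aestronglyMeasurable (fun p hp => ?_)
      (measurableSet_Ioi.prod measurableSet_Ioi)
    simp only [mem_prod, mem_Ioi] at hp
    have c1 : ContinuousAt (fun p : ℝ × ℝ => ((p.1:ℂ))^(z-1)) p :=
      (continuousAt_ofReal_cpow_const p.1 _ (Or.inr hp.1.ne')).comp
        continuous_fst.continuousAt
    have cG : ContinuousAt G p.2 := by
      refine ContinuousAt.mul ?_ ?_
      · exact Real.continuousAt_rpow_const _ _ (Or.inl (ne_of_gt (lt_trans one_pos hp.2)))
      · exact (Real.continuousAt_rpow_const _ _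
          (Or.inl (by show p.2 - 1 ≠ 0; exact sub_ne_zero.mpr (ne_of_gt hp.2)))).comp
          (continuousAt_id.sub continuousAt_const)
    have c2 : ContinuousAt (fun p : ℝ × ℝ => ((G p.2 : ℝ):ℂ)) p :=
      Complex.continuous_ofReal.continuousAt.comp (cG.comp continuous_snd.continuousAt)
    have c3 : ContinuousAt (fun p : ℝ × ℝ => ((Real.exp (-(p.2 * p.1)) : ℝ):ℂ)) p := by
      apply Continuous.continuousAt
      exact Complex.continuous_ofReal.comp
        (Real.continuous_exp.comp (continuous_snd.mul continuous_fst).neg)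
    exact ((c1.mul c2).mul c3).continuousWithinAt
  set q : ℝ := z.re + a₀/(2*γ) with hqdef
  have hqβ : β < q := by
    rw [hqdef, hβ]
    have h3 : (a₀ - 2) / (2 * γ) ≤ a₀ / (2 * γ) := by
      apply div_le_div_of_nonneg_right ?_ (by linarith)
      linarith
    linarith
  have hFint : Integrable (fun p : ℝ × ℝ => F p.1 p.2)
      ((volume.restrict (Ioi 0)).prod (volume.restrict (Ioi 1))) := by
    rw [integrable_prod_iff' hFmeas]
    constructor
    · filter_upwards [ae_restrict_mem measurableSet_Ioi] with s hs
      have hs0 : (0:ℝ) < s := lt_trans one_pos hs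
      have h1 := aux_cpow_exp_int z hz hs0
      have : (fun x : ℝ => F x s)
          = fun x : ℝ => ((G s : ℝ):ℂ) * ((x:ℂ)^(z-1) * ((Real.exp (-(s*x)) : ℝ):ℂ)) := by
        funext x; simp only [hF]; ring
      rw [this]
      exact (h1.const_mul _)
    · have hnormint : ∀ s ∈ Ioi (1:ℝ),
          (∫ x in Ioi (0:ℝ), ‖F x s‖) = Real.Gamma z.re * (G s * (1/s) ^ z.re) := by
        intro s hs
        have hs0 : (0:ℝ) < s := lt_trans one_pos hs
        have heq : ∀ x ∈ Ioi (0:ℝ),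
            ‖F x s‖ = G s * (x ^ (z.re - 1) * Real.exp (-(s*x))) := by
          intro x hx
          simp only [hF]
          rw [norm_mul, norm_mul,
            Complex.norm_cpow_eq_rpow_re_of_pos hx, Complex.norm_real,
            Complex.norm_real, Real.norm_of_nonneg (hGnn s hs),
            Real.norm_of_nonneg (Real.exp_pos _).le, sub_re, one_re]
          ring
        rw [setIntegral_congr_fun measurableSet_Ioi heq, integral_const_mul,
          Real.integral_rpow_mul_exp_neg_mul_Ioi hz hs0]
        ring
      have hknown : IntegrableOn
          (fun s : ℝ => Real.Gamma z.re * (s ^ (-q) * (s-1) ^ (β-1))) (Ioi 1) :=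
        (real_beta_int hβpos hqβ).const_mul _
      refine hknown.congr_fun (fun s hs => ?_) measurableSet_Ioi
      have hs0 : (0:ℝ) < s := lt_trans one_pos hs
      rw [hnormint s hs]
      congr 1
      have h4 : (1/s) ^ z.re = s ^ (-z.re) := by
        rw [one_div, Real.inv_rpow hs0.le, ← Real.rpow_neg hs0.le]
      rw [h4]
      simp only [hG]
      rw [show s ^ (-(a₀ / (2*γ))) * (s-1) ^ (β-1) * s ^ (-z.re)
          = s ^ (-(a₀/(2*γ))) * s ^ (-z.re) * (s-1) ^ (β-1) from by ring,
        ← Real.rpow_add hs0]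
      congr 2
      rw [hqdef]
      ring
  have hFint' : Integrable (Function.uncurry F)
      ((volume.restrict (Ioi 0)).prod (volume.restrict (Ioi 1))) := hFint
  have hswap := integral_integral_swap hFint'
  rw [hswap]
  -- Step 3: inner integral
  have hinner : ∀ s ∈ Ioi (1:ℝ), (∫ x in Ioi (0:ℝ), F x s)
      = Complex.Gamma z * ((s:ℂ)^(-c) * ((s - 1 : ℝ):ℂ)^((β:ℂ)-1)) := by
    intro s hs
    have hs0 : (0:ℝ) < s := lt_trans one_pos hs
    have hsC : (s:ℂ) ≠ 0 := ofReal_ne_zero.mpr hs0.ne'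
    have hsarg : (s:ℂ).arg ≠ Real.pi := by
      rw [Complex.arg_ofReal_of_nonneg hs0.le]; exact Real.pi_ne_zero.symm
    have hrw : (fun x : ℝ => F x s)
        = fun x : ℝ => ((G s : ℝ):ℂ) * ((x:ℂ)^(z-1) * Complex.exp (-((s:ℂ) * (x:ℂ)))) := by
      funext x
      simp only [hF, Complex.ofReal_exp]
      push_cast
      ring
    rw [hrw, integral_const_mul, integral_cpow_mul_exp_neg_mul_Ioi hz hs0]
    have hGc : ((G s : ℝ):ℂ) = (s:ℂ)^(((-(a₀/(2*γ)) : ℝ)):ℂ) * ((s - 1 : ℝ):ℂ)^((β:ℂ)-1) := by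
      rw [hG]
      simp only
      rw [Complex.ofReal_mul, Complex.ofReal_cpow hs0.le, Complex.ofReal_cpow (by linarith [mem_Ioi.mp hs] : (0:ℝ) ≤ s - 1)]
      push_cast
      ring
    have hpow : ((1:ℂ)/(s:ℂ))^z = (s:ℂ)^(-z) := by
      rw [one_div, inv_cpow _ _ hsarg, ← cpow_neg]
    rw [hGc, hpow]
    rw [show (s:ℂ)^(((-(a₀/(2*γ)) : ℝ)):ℂ) * ((s - 1 : ℝ):ℂ)^((β:ℂ)-1) * ((s:ℂ)^(-z) * Complex.Gamma z)
        = Complex.Gamma z * (((s:ℂ)^(((-(a₀/(2*γ)) : ℝ)):ℂ) * (s:ℂ)^(-z)) * ((s - 1 : ℝ):ℂ)^((β:ℂ)-1)) by ring,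
      ← cpow_add _ _ hsC]
    congr 3
    rw [hc]
    push_cast
    ring
  rw [setIntegral_congr_fun measurableSet_Ioi hinner, integral_const_mul,
    (real_beta_int_aux (β:ℂ) c hβre hrecβ).2, hcβ]
  rw [Complex.Gamma_ofReal]
  have hΓβ : (Real.Gamma β : ℂ) ≠ 0 :=
    ofReal_ne_zero.mpr (Real.Gamma_pos_of_pos hβpos).ne'
  field_simp
  rw [show ((1 / Real.Gamma β : ℝ):ℂ) * Complex.Gamma z * Complex.Gamma ((z * (γ:ℂ) + 1) / (γ:ℂ))
        * (Real.Gamma β : ℂ) / Complex.Gamma c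
      = Complex.Gamma z * Complex.Gamma ((z * (γ:ℂ) + 1) / (γ:ℂ)) / Complex.Gamma c
        * ((Real.Gamma β : ℂ) / (Real.Gamma β : ℂ)) from by push_cast; ring,
    div_self hΓβ, mul_one]
end

section
/- Let γ > 0 and a₀ > 2, set β = (a₀ − 2)/(2γ), and define u_S(x) = (1/Γ(β)) ∫₁^∞ s^{−a₀/(2γ)} (s−1)^{β−1} e^{−s x} ds for x > 0. Then e^{x} x^{β} u_S(x) − 1 = O(1/x) as x → ∞; that is, there exist constants C > 0 and x₀ > 0 such that |e^{x} x^{β} u_S(x) − 1| ≤ C/x for all x ≥ x₀. -/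
open MeasureTheory Set

private lemma shift_Ioi (f : ℝ → ℝ) : (∫ s in Ioi (1:ℝ), f s) = ∫ u in Ioi (0:ℝ), f (u + 1) := by
  rw [← integral_indicator measurableSet_Ioi, ← integral_indicator measurableSet_Ioi,
    ← integral_add_right_eq_self (fun s => (Ioi (1:ℝ)).indicator f s) 1]
  congr 1
  ext u
  by_cases h : u ∈ Ioi (0:ℝ)
  · rw [Set.indicator_of_mem h, Set.indicator_of_mem (by simpa using h : u + 1 ∈ Ioi (1:ℝ))]
  · rw [Set.indicator_of_notMem h, Set.indicator_of_notMem (by simpa using h)]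

private lemma pow_bounds {p u : ℝ} (hp : 0 < p) (hu : 0 ≤ u) :
    1 - p * u ≤ (1 + u) ^ (-p) ∧ (1 + u) ^ (-p) ≤ 1 := by
  have h1u : (0:ℝ) < 1 + u := by linarith
  constructor
  · rw [Real.rpow_def_of_pos h1u]
    have hlog : Real.log (1 + u) ≤ u := by
      have := Real.log_le_sub_one_of_pos h1u
      linarith
    have h3 : -(p * u) + 1 ≤ Real.exp (-(p * u)) := Real.add_one_le_exp _
    have h4 : Real.exp (-(p * u)) ≤ Real.exp (Real.log (1 + u) * -p) :=
      Real.exp_le_exp.2 (by nlinarith)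
    linarith
  · exact Real.rpow_le_one_of_one_le_of_nonpos (by linarith) (by linarith)

private lemma subst_lemma (p β x : ℝ) (hβ : 0 < β) (hx : 0 < x) :
    (∫ s in Ioi (1:ℝ), s ^ (-p) * (s - 1) ^ (β - 1) * Real.exp (-(s * x)))
      = Real.exp (-x) * x ^ (-β) *
        ∫ t in Ioi (0:ℝ), (1 + t / x) ^ (-p) * t ^ (β - 1) * Real.exp (-t) := by
  rw [shift_Ioi]
  have hscale := integral_comp_mul_right_Ioi
    (fun u => (u + 1) ^ (-p) * (u + 1 - 1) ^ (β - 1) * Real.exp (-((u + 1) * x))) 0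
    (inv_pos.2 hx)
  simp only [zero_mul, inv_inv, smul_eq_mul] at hscale
  have heq : (∫ u in Ioi (0:ℝ), (u + 1) ^ (-p) * (u + 1 - 1) ^ (β - 1) * Real.exp (-((u + 1) * x)))
      = x⁻¹ * ∫ t in Ioi (0:ℝ),
        (t * x⁻¹ + 1) ^ (-p) * (t * x⁻¹ + 1 - 1) ^ (β - 1) * Real.exp (-((t * x⁻¹ + 1) * x)) := by
    rw [hscale]; field_simp
    congr 1; ext u; ring_nf
  rw [heq]
  have hcongr : (∫ t in Ioi (0:ℝ),
        (t * x⁻¹ + 1) ^ (-p) * (t * x⁻¹ + 1 - 1) ^ (β - 1) * Real.exp (-((t * x⁻¹ + 1) * x)))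
      = ∫ t in Ioi (0:ℝ), (Real.exp (-x) * x ^ (1 - β)) *
          ((1 + t / x) ^ (-p) * t ^ (β - 1) * Real.exp (-t)) := by
    refine setIntegral_congr_fun measurableSet_Ioi (fun t ht => ?_)
    have ht0 : 0 < t := ht
    have h1 : t * x⁻¹ + 1 - 1 = t / x := by field_simp; ring
    have h2 : t * x⁻¹ + 1 = 1 + t / x := by ring_nf
    rw [h1, h2]
    have h3 : (1 + t / x) * x = t + x := by field_simp; ring
    rw [h3]
    have h4 : (t / x) ^ (β - 1) = t ^ (β - 1) * x ^ (1 - β) := by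
      rw [Real.div_rpow ht0.le hx.le, div_eq_mul_inv, ← Real.rpow_neg hx.le, neg_sub]
    rw [h4, neg_add, Real.exp_add]
    ring
  rw [hcongr, MeasureTheory.integral_const_mul]
  have hpow : x⁻¹ * (Real.exp (-x) * x ^ (1 - β)) = Real.exp (-x) * x ^ (-β) := by
    rw [← Real.rpow_neg_one x, mul_comm (x ^ (-1:ℝ)), mul_assoc, ← Real.rpow_add hx]
    congr 1
    ring
  rw [← mul_assoc, hpow]

/-- Asymptotic behaviour of the selfsimilar profile: `u_S(x) = e^{−x} x^{−β}(1 + O(1/x))`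
as `x → ∞`, i.e. `e^x x^β u_S(x) − 1 = O(1/x)`. -/
theorem selfsimilar_profile_asymptotics (γ a₀ : ℝ) (hγ : 0 < γ) (ha : 2 < a₀)
    (β : ℝ) (hβ : β = (a₀ - 2) / (2 * γ))
    (uS : ℝ → ℝ)
    (huS : ∀ x : ℝ, 0 < x → uS x = (1 / Real.Gamma β) *
      ∫ s in Ioi (1:ℝ), s ^ (-(a₀ / (2*γ))) * (s - 1) ^ (β - 1) * Real.exp (-(s * x))) :
    ∃ C > 0, ∃ x₀ > 0, ∀ x ≥ x₀, |Real.exp x * x ^ β * uS x - 1| ≤ C / x := by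
  set p : ℝ := a₀ / (2 * γ) with hp_def
  have hp : 0 < p := by positivity
  have hβ0 : 0 < β := by rw [hβ]; exact div_pos (by linarith) (by linarith)
  have hΓβ : 0 < Real.Gamma β := Real.Gamma_pos_of_pos hβ0
  have hΓβ1 : 0 < Real.Gamma (β + 1) := Real.Gamma_pos_of_pos (by linarith)
  refine ⟨p * Real.Gamma (β + 1) / Real.Gamma β, by positivity, 1, one_pos, fun x hx => ?_⟩
  have hx0 : 0 < x := lt_of_lt_of_le one_pos hx
  rw [huS x hx0, subst_lemma p β x hβ0 hx0]
  set I : ℝ := ∫ t in Ioi (0:ℝ), (1 + t / x) ^ (-p) * t ^ (β - 1) * Real.exp (-t) with hI_def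
  have hmain : Real.exp x * x ^ β *
      (1 / Real.Gamma β * (Real.exp (-x) * x ^ (-β) * I)) = (1 / Real.Gamma β) * I := by
    rw [Real.exp_neg, Real.rpow_neg hx0.le]
    have h1 : Real.exp x ≠ 0 := (Real.exp_pos x).ne'
    have h2 : x ^ β ≠ 0 := (Real.rpow_pos_of_pos hx0 β).ne'
    field_simp
  rw [hmain]
  -- integrability
  have hg_int : IntegrableOn (fun t => Real.exp (-t) * t ^ (β - 1)) (Ioi (0:ℝ)) :=
    Real.GammaIntegral_convergent hβ0
  have hh_meas : AEStronglyMeasurable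
      (fun t => (1 + t / x) ^ (-p) * t ^ (β - 1) * Real.exp (-t))
      (volume.restrict (Ioi (0:ℝ))) := by
    apply ContinuousOn.aestronglyMeasurable _ measurableSet_Ioi
    apply ContinuousOn.mul
    apply ContinuousOn.mul
    · refine ContinuousOn.rpow_const (by fun_prop) (fun t ht => Or.inl ?_)
      have ht0 : (0:ℝ) < t := ht
      have : (0:ℝ) < t / x := div_pos ht0 hx0
      linarith
    · exact ContinuousOn.rpow_const continuousOn_id (fun t ht => Or.inl (ne_of_gt ht))
    · exact (Real.continuous_exp.comp continuous_neg).continuousOn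
  have hh_int : IntegrableOn
      (fun t => (1 + t / x) ^ (-p) * t ^ (β - 1) * Real.exp (-t)) (Ioi (0:ℝ)) := by
    refine Integrable.mono hg_int hh_meas ?_
    rw [ae_restrict_iff' measurableSet_Ioi]
    refine ae_of_all _ (fun t ht => ?_)
    have ht0 : (0:ℝ) < t := ht
    have hu : (0:ℝ) ≤ t / x := by positivity
    have hb := pow_bounds hp hu
    have h1 : (0:ℝ) < (1 + t / x) ^ (-p) := Real.rpow_pos_of_pos (by linarith) _
    rw [Real.norm_eq_abs, Real.norm_eq_abs, abs_of_nonneg (by positivity),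
      abs_of_nonneg (by positivity)]
    calc (1 + t / x) ^ (-p) * t ^ (β - 1) * Real.exp (-t)
        ≤ 1 * t ^ (β - 1) * Real.exp (-t) := by
          apply mul_le_mul_of_nonneg_right _ (Real.exp_pos _).le
          apply mul_le_mul_of_nonneg_right hb.2 (by positivity)
      _ = Real.exp (-t) * t ^ (β - 1) := by ring
  -- rewrite 1 as (1/Γβ) * Γβ with Γβ as integral
  have hone : (1:ℝ) = (1 / Real.Gamma β) *
      ∫ t in Ioi (0:ℝ), Real.exp (-t) * t ^ (β - 1) := by
    rw [← Real.Gamma_eq_integral hβ0]; field_simp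
  rw [show (1 / Real.Gamma β) * I - 1
      = (1 / Real.Gamma β) * (I - ∫ t in Ioi (0:ℝ), Real.exp (-t) * t ^ (β - 1)) by
    rw [mul_sub, ← hone]]
  rw [hI_def, ← integral_sub hh_int hg_int, abs_mul, abs_of_nonneg (by positivity)]
  -- bound the integral
  have hbound_int : Integrable
      (fun t => (p / x) * (Real.exp (-t) * t ^ (β + 1 - 1)))
      (volume.restrict (Ioi (0:ℝ))) :=
    (Real.GammaIntegral_convergent (by linarith : (0:ℝ) < β + 1)).const_mul _
  have hkey : ‖∫ t in Ioi (0:ℝ),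
      ((1 + t / x) ^ (-p) * t ^ (β - 1) * Real.exp (-t) - Real.exp (-t) * t ^ (β - 1))‖
      ≤ ∫ t in Ioi (0:ℝ), (p / x) * (Real.exp (-t) * t ^ (β + 1 - 1)) := by
    refine norm_integral_le_of_norm_le hbound_int ?_
    rw [ae_restrict_iff' measurableSet_Ioi]
    refine ae_of_all _ (fun t ht => ?_)
    have ht0 : (0:ℝ) < t := ht
    have hu : (0:ℝ) ≤ t / x := by positivity
    have hb := pow_bounds hp hu
    have heq : (1 + t / x) ^ (-p) * t ^ (β - 1) * Real.exp (-t) - Real.exp (-t) * t ^ (β - 1)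
        = ((1 + t / x) ^ (-p) - 1) * (t ^ (β - 1) * Real.exp (-t)) := by ring
    rw [Real.norm_eq_abs, heq, abs_mul,
      abs_of_nonneg (show (0:ℝ) ≤ t ^ (β - 1) * Real.exp (-t) by positivity)]
    have habs : |(1 + t / x) ^ (-p) - 1| ≤ p * (t / x) := by
      rw [abs_of_nonpos (by linarith [hb.2])]
      linarith [hb.1]
    calc |(1 + t / x) ^ (-p) - 1| * (t ^ (β - 1) * Real.exp (-t))
        ≤ p * (t / x) * (t ^ (β - 1) * Real.exp (-t)) := by
          apply mul_le_mul_of_nonneg_right habs (by positivity)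
      _ = (p / x) * (Real.exp (-t) * (t ^ (β - 1) * t)) := by ring
      _ = (p / x) * (Real.exp (-t) * t ^ (β + 1 - 1)) := by
          rw [show β + 1 - 1 = (β - 1) + 1 by ring, Real.rpow_add_one ht0.ne']
  rw [Real.norm_eq_abs] at hkey
  calc (1 / Real.Gamma β) * |∫ t in Ioi (0:ℝ),
        ((1 + t / x) ^ (-p) * t ^ (β - 1) * Real.exp (-t) - Real.exp (-t) * t ^ (β - 1))|
      ≤ (1 / Real.Gamma β) * ∫ t in Ioi (0:ℝ),
          (p / x) * (Real.exp (-t) * t ^ (β + 1 - 1)) := by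
        apply mul_le_mul_of_nonneg_left hkey (by positivity)
    _ = (1 / Real.Gamma β) * ((p / x) * Real.Gamma (β + 1)) := by
        rw [MeasureTheory.integral_const_mul, ← Real.Gamma_eq_integral (by linarith : (0:ℝ) < β + 1)]
    _ = p * Real.Gamma (β + 1) / Real.Gamma β / x := by
        field_simp
end

section
/- Let γ > 0, let n ≥ 1 be a natural number, and let f(x) = x^{2/γ} e^{−x} for x > 0. Then ∫₀^∞ x^{n−1} f^{(n)}(x) dx = 0, where f^{(n)} denotes the n-th derivative of f on (0,∞). -/
open MeasureTheory Set

/-- Coefficients in the explicit formula for `(d/dx)^m (x^a e^{-x})`. -/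
noncomputable def eigC (a : ℝ) (m j : ℕ) : ℝ :=
  (-1:ℝ)^(m+j) * (m.choose j) * ∏ i ∈ Finset.range j, (a - i)

lemma eigC_zero (a : ℝ) (m : ℕ) : eigC a (m+1) 0 = - eigC a m 0 := by
  simp [eigC, pow_succ]

lemma eigC_succ (a : ℝ) (m k : ℕ) :
    eigC a (m+1) (k+1) = eigC a m k * (a - k) - eigC a m (k+1) := by
  unfold eigC
  rw [Finset.prod_range_succ, Nat.choose_succ_succ]
  push_cast
  ring

lemma eigC_top (a : ℝ) (m : ℕ) : eigC a m (m+1) = 0 := by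
  simp [eigC, Nat.choose_succ_self]

/-- Explicit formula for the `m`-th derivative of `x^a e^{-x}`. -/
noncomputable def eigP (a : ℝ) (m : ℕ) (x : ℝ) : ℝ :=
  ∑ j ∈ Finset.range (m+1), eigC a m j * (x ^ (a - (j:ℝ)) * Real.exp (-x))

lemma eigP_hasDerivAt (a : ℝ) (m : ℕ) {x : ℝ} (hx : 0 < x) :
    HasDerivAt (eigP a m) (eigP a (m+1) x) x := by
  have hexp : HasDerivAt (fun y : ℝ => Real.exp (-y)) (-Real.exp (-x)) x := by
    simpa using (hasDerivAt_neg x).exp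
  have h1 : HasDerivAt (eigP a m)
      (∑ k ∈ Finset.range (m+1), eigC a m k *
        ((a - (k:ℝ)) * x ^ (a - (k:ℝ) - 1) * Real.exp (-x)
          + x ^ (a - (k:ℝ)) * (-Real.exp (-x)))) x := by
    refine HasDerivAt.fun_sum fun k _ => ?_
    have hr : HasDerivAt (fun y : ℝ => y ^ (a - (k:ℝ)))
        ((a - (k:ℝ)) * x ^ (a - (k:ℝ) - 1)) x :=
      Real.hasDerivAt_rpow_const (Or.inl hx.ne')
    exact ((hr.mul hexp)).const_mul _
  have key : (∑ k ∈ Finset.range (m+1), eigC a m k *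
        ((a - (k:ℝ)) * x ^ (a - (k:ℝ) - 1) * Real.exp (-x)
          + x ^ (a - (k:ℝ)) * (-Real.exp (-x)))) = eigP a (m+1) x := by
    have ecast : ∀ k : ℕ, a - (k:ℝ) - 1 = a - ((k+1 : ℕ):ℝ) := by
      intro k; push_cast; ring
    have split : (∑ k ∈ Finset.range (m+1), eigC a m k *
        ((a - (k:ℝ)) * x ^ (a - (k:ℝ) - 1) * Real.exp (-x)
          + x ^ (a - (k:ℝ)) * (-Real.exp (-x))))
        = (∑ k ∈ Finset.range (m+1),
            (eigC a m k * (a - (k:ℝ))) * (x ^ (a - ((k+1:ℕ):ℝ)) * Real.exp (-x)))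
          - ∑ k ∈ Finset.range (m+1), eigC a m k * (x ^ (a - (k:ℝ)) * Real.exp (-x)) := by
      rw [← Finset.sum_sub_distrib]
      refine Finset.sum_congr rfl fun k _ => ?_
      rw [← ecast k]; ring
    rw [split]
    -- rewrite the second sum by shifting indices
    have hshift : (∑ k ∈ Finset.range (m+1), eigC a m k * (x ^ (a - (k:ℝ)) * Real.exp (-x)))
        = (∑ k ∈ Finset.range (m+1),
            eigC a m (k+1) * (x ^ (a - ((k+1:ℕ):ℝ)) * Real.exp (-x)))
          + eigC a m 0 * (x ^ (a - ((0:ℕ):ℝ)) * Real.exp (-x)) := by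
      rw [Finset.sum_range_succ' (fun j => eigC a m j * (x ^ (a - (j:ℝ)) * Real.exp (-x))) m]
      rw [Finset.sum_range_succ]
      rw [eigC_top]
      ring
    rw [hshift]
    have hRHS : eigP a (m+1) x
        = (∑ k ∈ Finset.range (m+1),
            eigC a (m+1) (k+1) * (x ^ (a - ((k+1:ℕ):ℝ)) * Real.exp (-x)))
          + eigC a (m+1) 0 * (x ^ (a - ((0:ℕ):ℝ)) * Real.exp (-x)) := by
      rw [eigP, Finset.sum_range_succ' (fun j => eigC a (m+1) j * (x ^ (a - (j:ℝ)) * Real.exp (-x))) (m+1)]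
    rw [hRHS, eigC_zero, sub_add_eq_sub_sub, ← Finset.sum_sub_distrib]
    have : ∀ k ∈ Finset.range (m+1),
        eigC a m k * (a - (k:ℝ)) * (x ^ (a - ((k+1:ℕ):ℝ)) * Real.exp (-x))
          - eigC a m (k+1) * (x ^ (a - ((k+1:ℕ):ℝ)) * Real.exp (-x))
        = eigC a (m+1) (k+1) * (x ^ (a - ((k+1:ℕ):ℝ)) * Real.exp (-x)) := by
      intro k _; rw [eigC_succ]; ring
    rw [Finset.sum_congr rfl this]
    ring
  rw [← key]
  exact h1

lemma eigP_eq (a : ℝ) (m : ℕ) :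
    Set.EqOn (iteratedDerivWithin m (fun y : ℝ => y ^ a * Real.exp (-y)) (Ioi 0))
      (eigP a m) (Ioi 0) := by
  induction m with
  | zero =>
    intro x hx
    simp [eigP, eigC, iteratedDerivWithin_zero]
  | succ m ih =>
    intro x hx
    rw [iteratedDerivWithin_succ,
      derivWithin_of_isOpen isOpen_Ioi hx]
    have hev : iteratedDerivWithin m (fun y : ℝ => y ^ a * Real.exp (-y)) (Ioi 0)
        =ᶠ[nhds x] eigP a m := Filter.eventuallyEq_of_mem (isOpen_Ioi.mem_nhds hx) ih
    rw [hev.deriv_eq, (eigP_hasDerivAt a m hx).deriv]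

/-- The "total mass" of the `m`-th eigenfunction term. -/
noncomputable def eigT (a : ℝ) (m : ℕ) : ℝ :=
  ∑ j ∈ Finset.range (m+1), eigC a m j * Real.Gamma ((m:ℝ) + a - j)

lemma eigT_succ (a : ℝ) (ha : 0 < a) (m : ℕ) :
    eigT a (m+1) = -(m:ℝ) * eigT a m := by
  have hcast : ∀ k : ℕ, ((m+1:ℕ):ℝ) + a - ((k+1:ℕ):ℝ) = (m:ℝ) + a - k := by
    intro k; push_cast; ring
  rw [eigT, Finset.sum_range_succ'
    (fun j => eigC a (m+1) j * Real.Gamma (((m+1:ℕ):ℝ) + a - j)) (m+1)]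
  have step1 : (∑ k ∈ Finset.range (m+1),
        eigC a (m+1) (k+1) * Real.Gamma (((m+1:ℕ):ℝ) + a - ((k+1:ℕ):ℝ)))
      = ∑ k ∈ Finset.range (m+1),
        ((eigC a m k * (a - k)) * Real.Gamma ((m:ℝ) + a - k)
          - eigC a m (k+1) * Real.Gamma ((m:ℝ) + a - k)) := by
    refine Finset.sum_congr rfl fun k _ => ?_
    rw [hcast k, eigC_succ]; ring
  rw [step1, Finset.sum_sub_distrib, eigC_zero]
  -- second sum plus boundary term equals ∑_{j ≤ m} eigC a m j Γ(m+1+a-j)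
  have hgam : ∀ j ∈ Finset.range (m+1),
      eigC a m j * Real.Gamma ((m:ℝ) + 1 + a - j)
        = eigC a m j * (((m:ℝ) + a - j) * Real.Gamma ((m:ℝ) + a - j)) := by
    intro j hj
    have hj' : (j:ℝ) ≤ m := by
      exact_mod_cast Nat.le_of_lt_succ (Finset.mem_range.mp hj)
    have hne : (m:ℝ) + a - j ≠ 0 := by linarith
    rw [show (m:ℝ) + 1 + a - j = ((m:ℝ) + a - j) + 1 by ring, Real.Gamma_add_one hne]
  have hbr : (∑ k ∈ Finset.range (m+1), eigC a m (k+1) * Real.Gamma ((m:ℝ) + a - k))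
        + eigC a m 0 * Real.Gamma (((m+1:ℕ):ℝ) + a - ((0:ℕ):ℝ))
      = ∑ j ∈ Finset.range (m+1), eigC a m j * Real.Gamma ((m:ℝ) + 1 + a - j) := by
    have h2 : (∑ j ∈ Finset.range (m+2), eigC a m j * Real.Gamma ((m:ℝ) + 1 + a - j))
        = ∑ j ∈ Finset.range (m+1), eigC a m j * Real.Gamma ((m:ℝ) + 1 + a - j) := by
      rw [Finset.sum_range_succ, eigC_top]; ring
    rw [← h2, Finset.sum_range_succ'
      (fun j => eigC a m j * Real.Gamma ((m:ℝ) + 1 + a - j)) (m+1)]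
    congr 1
    · refine Finset.sum_congr rfl fun k _ => ?_
      congr 2
      push_cast; ring
    · congr 2
      push_cast; ring
  have expand : (∑ k ∈ Finset.range (m+1),
        (eigC a m k * (a - k)) * Real.Gamma ((m:ℝ) + a - k))
      - ((∑ k ∈ Finset.range (m+1), eigC a m (k+1) * Real.Gamma ((m:ℝ) + a - k))
        + eigC a m 0 * Real.Gamma (((m+1:ℕ):ℝ) + a - ((0:ℕ):ℝ)))
      = -(m:ℝ) * eigT a m := by
    rw [hbr, Finset.sum_congr rfl hgam, eigT, ← Finset.sum_sub_distrib,
      Finset.mul_sum]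
    refine Finset.sum_congr rfl fun k _ => ?_
    ring
  linarith [expand]

lemma eigT_eq_zero (a : ℝ) (ha : 0 < a) (n : ℕ) (hn : 1 ≤ n) : eigT a n = 0 := by
  obtain ⟨m, rfl⟩ : ∃ m, n = m + 1 := ⟨n - 1, (Nat.succ_pred_eq_of_pos hn).symm⟩
  induction m with
  | zero => rw [eigT_succ a ha 0]; simp
  | succ k ih =>
    rw [eigT_succ a ha (k+1), ih (by omega)]
    ring

/-- Each eigenfunction `U_n` (`n ≥ 1`) carries zero mass:
`∫₀^∞ x^{n−1} (d/dx)^n (x^{2/γ} e^{−x}) dx = 0`. -/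
theorem eigenfunction_zero_mass (γ : ℝ) (hγ : 0 < γ) (n : ℕ) (hn : 1 ≤ n) :
    ∫ x in Ioi (0:ℝ), x ^ (n - 1) *
        iteratedDerivWithin n (fun y : ℝ => y ^ (2/γ) * Real.exp (-y)) (Ioi 0) x = 0 := by
  set a := 2/γ with ha_def
  have ha : 0 < a := by positivity
  have hEq : Set.EqOn
      (fun x : ℝ => x ^ (n-1) *
        iteratedDerivWithin n (fun y : ℝ => y ^ a * Real.exp (-y)) (Ioi 0) x)
      (fun x : ℝ => ∑ j ∈ Finset.range (n+1),
        eigC a n j * (Real.exp (-x) * x ^ ((n:ℝ) + a - j - 1))) (Ioi 0) := by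
    intro x hx
    have hx0 : (0:ℝ) < x := hx
    simp only
    rw [eigP_eq a n hx, eigP, Finset.mul_sum]
    refine Finset.sum_congr rfl fun j _ => ?_
    have h1 : (x:ℝ) ^ (n-1 : ℕ) = x ^ (((n-1:ℕ)):ℝ) := (Real.rpow_natCast x (n-1)).symm
    have h2 : (((n-1:ℕ)):ℝ) = (n:ℝ) - 1 := by
      rw [Nat.cast_sub hn]; norm_num
    have h3 : x ^ ((n:ℝ) - 1) * x ^ (a - (j:ℝ)) = x ^ ((n:ℝ) + a - j - 1) := by
      rw [← Real.rpow_add hx0]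
      congr 1
      ring
    calc x ^ (n-1 : ℕ) * (eigC a n j * (x ^ (a - (j:ℝ)) * Real.exp (-x)))
        = eigC a n j * (Real.exp (-x) * (x ^ ((n:ℝ) - 1) * x ^ (a - (j:ℝ)))) := by
          rw [h1, h2]; ring
      _ = eigC a n j * (Real.exp (-x) * x ^ ((n:ℝ) + a - j - 1)) := by rw [h3]
  rw [setIntegral_congr_fun measurableSet_Ioi hEq]
  have hpos : ∀ j ∈ Finset.range (n+1), 0 < (n:ℝ) + a - j := by
    intro j hj
    have : (j:ℝ) ≤ n := by exact_mod_cast Nat.le_of_lt_succ (Finset.mem_range.mp hj)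
    linarith
  have hint : ∀ j ∈ Finset.range (n+1),
      Integrable (fun x : ℝ => eigC a n j * (Real.exp (-x) * x ^ ((n:ℝ) + a - j - 1)))
        (volume.restrict (Ioi 0)) := by
    intro j hj
    exact (Real.GammaIntegral_convergent (hpos j hj)).const_mul _
  rw [integral_finset_sum _ hint]
  have hterm : ∀ j ∈ Finset.range (n+1),
      (∫ x in Ioi (0:ℝ), eigC a n j * (Real.exp (-x) * x ^ ((n:ℝ) + a - j - 1)))
        = eigC a n j * Real.Gamma ((n:ℝ) + a - j) := by
    intro j hj
    rw [integral_const_mul, ← Real.Gamma_eq_integral (hpos j hj)]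
  rw [Finset.sum_congr rfl hterm]
  exact eigT_eq_zero a ha n hn
end

section
/- Let N ≥ 1 and let a₁,…,a_N, b₁,…,b_N ∈ ℂ be such that for every i, neither Re(a_i) nor Re(b_i) is a nonpositive integer. Set S = ∑_{i=1}^N Re(a_i − b_i). Then there exists C > 0 such that for all λ ∈ ℝ: C^{-1} (1 + λ²)^{S/2} ≤ |∏_{i=1}^N Γ(a_i + iλ) / ∏_{i=1}^N Γ(b_i + iλ)| ≤ C (1 + λ²)^{S/2}. -/
namespace GammaAux

open Finset Filter Real Set Topology

noncomputable def Qf (l : ℝ) : ℝ := 1 + l ^ 2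
noncomputable def eF (m : ℝ) : ℝ := (1 + π * |m|) * Real.exp (-(π * |m|))

lemma Qf_pos (l : ℝ) : 0 < Qf l := by unfold Qf; positivity
lemma eF_pos (m : ℝ) : 0 < eF m := by
  unfold eF
  have := Real.pi_pos
  positivity

lemma hasDerivAt_h (μ : ℝ) {u : ℝ} (hu : 0 < u) :
    HasDerivAt (fun u : ℝ => Real.log (u ^ 2) - Real.log (u ^ 2 + μ ^ 2))
      ((u ^ 2)⁻¹ * (2 * u) - (u ^ 2 + μ ^ 2)⁻¹ * (2 * u)) u := by
  have h1 : HasDerivAt (fun u : ℝ => u ^ 2) (2 * u) u := by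
    simpa using hasDerivAt_pow 2 u
  have h2 : HasDerivAt (fun u : ℝ => u ^ 2 + μ ^ 2) (2 * u) u := by
    simpa using h1.add_const (μ ^ 2)
  have l1 : HasDerivAt (fun u : ℝ => Real.log (u ^ 2)) ((u ^ 2)⁻¹ * (2 * u)) u := by
    have := h1.log (by positivity : (u:ℝ) ^ 2 ≠ 0)
    simpa [div_eq_inv_mul] using this
  have l2 : HasDerivAt (fun u : ℝ => Real.log (u ^ 2 + μ ^ 2))
      ((u ^ 2 + μ ^ 2)⁻¹ * (2 * u)) u := by
    have hne : u ^ 2 + μ ^ 2 ≠ 0 := by positivity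
    have := h2.log hne
    simpa [div_eq_inv_mul] using this
  exact l1.sub l2

lemma concave_h (μ : ℝ) :
    ConcaveOn ℝ (Set.Ioi 0) (fun u : ℝ => Real.log (u ^ 2) - Real.log (u ^ 2 + μ ^ 2)) := by
  have hderiv : ∀ u ∈ interior (Set.Ioi (0:ℝ)),
      deriv (fun u : ℝ => Real.log (u ^ 2) - Real.log (u ^ 2 + μ ^ 2)) u
        = (u ^ 2)⁻¹ * (2 * u) - (u ^ 2 + μ ^ 2)⁻¹ * (2 * u) := by
    intro u hu
    rw [interior_Ioi] at hu
    exact (hasDerivAt_h μ hu).deriv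
  refine AntitoneOn.concaveOn_of_deriv (convex_Ioi 0) ?_ ?_ ?_
  · apply ContinuousOn.sub
    · refine ContinuousOn.log (by fun_prop) ?_
      intro u hu; have : (0:ℝ) < u := hu; positivity
    · refine ContinuousOn.log (by fun_prop) ?_
      intro u hu; have : (0:ℝ) < u := hu; positivity
  · intro u hu
    rw [interior_Ioi] at hu
    exact (hasDerivAt_h μ hu).differentiableAt.differentiableWithinAt
  · intro u hu v hv huv
    rw [hderiv u hu, hderiv v hv]
    rw [interior_Ioi] at hu hv
    have hu' : (0:ℝ) < u := hu
    have hv' : (0:ℝ) < v := hv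
    have e1 : ∀ w : ℝ, 0 < w →
        (w ^ 2)⁻¹ * (2 * w) - (w ^ 2 + μ ^ 2)⁻¹ * (2 * w)
          = 2 * μ ^ 2 / (w * (w ^ 2 + μ ^ 2)) := by
      intro w hw
      field_simp
      ring
    rw [e1 u hu', e1 v hv']
    apply div_le_div_of_nonneg_left (by positivity) (by positivity)
    nlinarith [pow_le_pow_left₀ hu'.le huv 3, mul_le_mul_of_nonneg_right huv (sq_nonneg μ)]


noncomputable def hfun (μ u : ℝ) : ℝ := Real.log (u ^ 2) - Real.log (u ^ 2 + μ ^ 2)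

lemma hA (μ : ℝ) {t : ℝ} (ht : t ∈ Set.Icc (1:ℝ) 2) (k : ℕ) :
    (2 - t) * hfun μ (1 + k) + (t - 1) * hfun μ (2 + k) ≤ hfun μ (t + k) := by
  have h1 : (1 + (k:ℝ)) ∈ Set.Ioi (0:ℝ) := by simp; positivity
  have h2 : (2 + (k:ℝ)) ∈ Set.Ioi (0:ℝ) := by simp; positivity
  have key := (concave_h μ).2 h1 h2 (by linarith [ht.2] : (0:ℝ) ≤ 2 - t)
    (by linarith [ht.1] : (0:ℝ) ≤ t - 1) (by ring)
  have hpt : (2 - t) • (1 + (k:ℝ)) + (t - 1) • (2 + (k:ℝ)) = t + k := by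
    simp [smul_eq_mul]; ring
  rw [hpt] at key
  simpa [hfun, smul_eq_mul] using key

lemma hB (μ : ℝ) {t : ℝ} (ht : t ∈ Set.Icc (1:ℝ) 2) (k : ℕ) :
    hfun μ (t + k) ≤ hfun μ (1 + k) + (t - 1) * (2 * (hfun μ (1 + k) - hfun μ (1/2 + k))) := by
  rcases eq_or_lt_of_le ht.1 with h | h
  · rw [← h]; simp
  · have hx : (1/2 + (k:ℝ)) ∈ Set.Ioi (0:ℝ) := by simp; positivity
    have hz : (t + (k:ℝ)) ∈ Set.Ioi (0:ℝ) := by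
      simp only [Set.mem_Ioi]; positivity
    have key := (concave_h μ).slope_anti_adjacent hx hz
      (by linarith : (1/2:ℝ) + k < 1 + k) (by linarith : (1:ℝ) + k < t + k)
    simp only [show (t + (k:ℝ)) - (1 + k) = t - 1 by ring,
      show (1 + (k:ℝ)) - (1/2 + k) = 1/2 by ring] at key
    rw [div_le_div_iff₀ (by linarith) (by norm_num)] at key
    simp only [hfun] at *
    nlinarith [key]

noncomputable def Pl (x μ : ℝ) (n : ℕ) : ℝ :=
  ∏ k ∈ Finset.range (n+1), ((x + k) ^ 2 / ((x + k) ^ 2 + μ ^ 2))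

lemma Pl_pos {x : ℝ} (μ : ℝ) (hx : 0 < x) (n : ℕ) : 0 < Pl x μ n := by
  apply Finset.prod_pos
  intro k _
  have : (0:ℝ) < x + k := by positivity
  positivity

lemma log_Pl {x : ℝ} (μ : ℝ) (hx : 0 < x) (n : ℕ) :
    Real.log (Pl x μ n) = ∑ k ∈ Finset.range (n+1), hfun μ (x + k) := by
  rw [Pl, Real.log_prod]
  · apply Finset.sum_congr rfl
    intro k _
    have hxk : (0:ℝ) < x + k := by positivity
    rw [Real.log_div (by positivity) (by positivity)]
    rfl
  · intro k _
    have hxk : (0:ℝ) < x + k := by positivity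
    positivity

lemma sum_lower (μ : ℝ) {t : ℝ} (ht : t ∈ Set.Icc (1:ℝ) 2) (n : ℕ) :
    (2 - t) * Real.log (Pl 1 μ n) + (t - 1) * Real.log (Pl 2 μ n)
      ≤ Real.log (Pl t μ n) := by
  have ht0 : (0:ℝ) < t := by linarith [ht.1]
  rw [log_Pl μ one_pos, log_Pl μ two_pos, log_Pl μ ht0, Finset.mul_sum, Finset.mul_sum,
    ← Finset.sum_add_distrib]
  exact Finset.sum_le_sum fun k _ => hA μ ht k

lemma sum_upper (μ : ℝ) {t : ℝ} (ht : t ∈ Set.Icc (1:ℝ) 2) (n : ℕ) :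
    Real.log (Pl t μ n) ≤ Real.log (Pl 1 μ n)
      + (t - 1) * (2 * (Real.log (Pl 1 μ n) - Real.log (Pl (1/2) μ n))) := by
  have ht0 : (0:ℝ) < t := by linarith [ht.1]
  rw [log_Pl μ one_pos, log_Pl μ (by norm_num : (0:ℝ) < 1/2), log_Pl μ ht0,
    ← Finset.sum_sub_distrib]
  calc ∑ k ∈ Finset.range (n+1), hfun μ (t + k)
      ≤ ∑ k ∈ Finset.range (n+1),
        (hfun μ (1 + k) + (t - 1) * (2 * (hfun μ (1 + k) - hfun μ (1/2 + k)))) :=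
        Finset.sum_le_sum fun k _ => hB μ ht k
    _ = _ := by
        rw [Finset.sum_add_distrib, ← Finset.mul_sum]
        congr 1
        rw [← Finset.mul_sum, Finset.sum_sub_distrib]
lemma norm_sq_eq (z : ℂ) : ‖z‖ ^ 2 = z.re ^ 2 + z.im ^ 2 := by
  rw [Complex.sq_norm, Complex.normSq_apply]; ring

lemma GammaSeq_norm_sq (s : ℂ) {n : ℕ} (hn : 1 ≤ n) :
    ‖Complex.GammaSeq s n‖ ^ 2
      = ((n:ℝ) ^ s.re * (n.factorial : ℝ)) ^ 2 / ∏ j ∈ Finset.range (n+1), ‖s + j‖ ^ 2 := by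
  have hcp : ‖(n:ℂ) ^ s‖ = (n:ℝ) ^ s.re := by
    rw [show ((n:ℂ)) = (((n:ℝ)):ℂ) by push_cast; rfl,
      Complex.norm_cpow_eq_rpow_re_of_pos (by exact_mod_cast hn)]
  have hfact : ‖((n.factorial : ℕ) : ℂ)‖ = ((n.factorial : ℕ) : ℝ) := by
    rw [Complex.norm_natCast]
  rw [Complex.GammaSeq, norm_div, norm_mul, norm_prod, hcp, hfact, div_pow, Finset.prod_pow]

noncomputable def Gq (x μ : ℝ) : ℝ :=
  ‖Complex.Gamma ((x:ℂ) + μ * Complex.I)‖ ^ 2 / Real.Gamma x ^ 2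

lemma Gamma_vert_ne_zero {x : ℝ} (μ : ℝ) (hx : 0 < x) :
    Complex.Gamma ((x:ℂ) + μ * Complex.I) ≠ 0 := by
  apply Complex.Gamma_ne_zero_of_re_pos
  simpa using hx

lemma Gq_pos {x : ℝ} (μ : ℝ) (hx : 0 < x) : 0 < Gq x μ := by
  have h1 := Gamma_vert_ne_zero μ hx
  have h2 := Real.Gamma_pos_of_pos hx
  have : 0 < ‖Complex.Gamma ((x:ℂ) + μ * Complex.I)‖ := norm_pos_iff.mpr h1
  unfold Gq; positivity

lemma prodForm {x : ℝ} (μ : ℝ) (hx : 0 < x) :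
    Tendsto (fun n => Pl x μ n) atTop (𝓝 (Gq x μ)) := by
  have h1 : Tendsto (fun n => ‖Complex.GammaSeq ((x:ℂ) + μ * Complex.I) n‖ ^ 2) atTop
      (𝓝 (‖Complex.Gamma ((x:ℂ) + μ * Complex.I)‖ ^ 2)) :=
    ((Complex.GammaSeq_tendsto_Gamma _).norm).pow 2
  have h2 : Tendsto (fun n => ‖Complex.GammaSeq ((x:ℂ)) n‖ ^ 2) atTop
      (𝓝 (‖Complex.Gamma ((x:ℂ))‖ ^ 2)) :=
    ((Complex.GammaSeq_tendsto_Gamma _).norm).pow 2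
  have hΓx : ‖Complex.Gamma ((x:ℂ))‖ ^ 2 = Real.Gamma x ^ 2 := by
    rw [Complex.Gamma_ofReal, Complex.norm_real, Real.norm_eq_abs,
      abs_of_pos (Real.Gamma_pos_of_pos hx)]
  have hne : ‖Complex.Gamma ((x:ℂ))‖ ^ 2 ≠ 0 := by
    rw [hΓx]
    exact pow_ne_zero 2 (Real.Gamma_pos_of_pos hx).ne'
  have hdiv := h1.div h2 hne
  rw [hΓx] at hdiv
  apply hdiv.congr'
  filter_upwards [eventually_ge_atTop 1] with n hn
  simp only [Pi.div_apply]
  rw [GammaSeq_norm_sq _ hn, GammaSeq_norm_sq _ hn]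
  have hren : ((x:ℂ) + μ * Complex.I).re = x := by simp
  have hrex : ((x:ℂ)).re = x := by simp
  rw [hren, hrex]
  have hA : (((n:ℝ) ^ x * (n.factorial : ℝ)) ^ 2) ≠ 0 := by
    have h0 : (0:ℝ) < (n:ℝ) := by exact_mod_cast hn
    have := n.factorial_pos
    positivity
  have hP1 : ∀ j : ℕ, ‖(x:ℂ) + μ * Complex.I + j‖ ^ 2 = (x + j) ^ 2 + μ ^ 2 := by
    intro j; rw [norm_sq_eq]; simp
  have hP2 : ∀ j : ℕ, ‖(x:ℂ) + j‖ ^ 2 = (x + j) ^ 2 := by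
    intro j; rw [norm_sq_eq]; simp
  rw [Finset.prod_congr rfl fun j _ => hP1 j, Finset.prod_congr rfl fun j _ => hP2 j]
  have hden1 : ∏ j ∈ Finset.range (n+1), ((x + (j:ℝ)) ^ 2 + μ ^ 2) ≠ 0 := by
    apply Finset.prod_ne_zero_iff.mpr
    intro j _
    have : (0:ℝ) < x + j := by positivity
    positivity
  have hden2 : ∏ j ∈ Finset.range (n+1), ((x + (j:ℝ)) ^ 2) ≠ 0 := by
    apply Finset.prod_ne_zero_iff.mpr
    intro j _
    have : (0:ℝ) < x + j := by positivity
    positivity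
  rw [Pl, Finset.prod_div_distrib]
  field_simp
lemma gamma_normsq (w : ℂ) :
    ((‖Complex.Gamma w‖ ^ 2 : ℝ) : ℂ) = Complex.Gamma w * Complex.Gamma ((starRingEnd ℂ) w) := by
  rw [Complex.Gamma_conj, Complex.mul_conj, Complex.normSq_eq_norm_sq]

lemma sin_pi_mul_I (r : ℝ) :
    Complex.sin ((π:ℂ) * ((r:ℂ) * Complex.I)) = (Real.sinh (π * r) : ℂ) * Complex.I := by
  rw [show (π:ℂ) * ((r:ℂ) * Complex.I) = ((π * r : ℝ) : ℂ) * Complex.I by push_cast; ring,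
    Complex.sin_mul_I, Complex.ofReal_sinh]

lemma V1 {μ : ℝ} (hμ : μ ≠ 0) : Gq 1 μ = π * μ / Real.sinh (π * μ) := by
  have hz : ((μ:ℂ) * Complex.I) ≠ 0 := by
    simp [Complex.ext_iff, hμ]
  have hsinh : Real.sinh (π * μ) ≠ 0 := by
    rw [Real.sinh_ne_zero]
    exact mul_ne_zero Real.pi_ne_zero hμ
  have h1 : Gq 1 μ = ‖Complex.Gamma (1 + (μ:ℂ) * Complex.I)‖ ^ 2 := by
    rw [Gq, Real.Gamma_one]
    norm_num
  have hconj : (starRingEnd ℂ) (1 + (μ:ℂ) * Complex.I) = 1 - (μ:ℂ) * Complex.I := by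
    simp [Complex.ext_iff]
  have prod_eq : Complex.Gamma (1 + (μ:ℂ) * Complex.I)
      * Complex.Gamma (1 - (μ:ℂ) * Complex.I)
      = ((π * μ / Real.sinh (π * μ) : ℝ) : ℂ) := by
    rw [show (1 + (μ:ℂ) * Complex.I) = ((μ:ℂ) * Complex.I) + 1 by ring]
    rw [Complex.Gamma_add_one _ hz, mul_assoc, Complex.Gamma_mul_Gamma_one_sub, sin_pi_mul_I]
    have hI := Complex.I_ne_zero
    have hs : ((Real.sinh (π * μ) : ℝ) : ℂ) ≠ 0 := by exact_mod_cast hsinh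
    field_simp
    have hsC : Complex.sinh ((π:ℂ) * (μ:ℂ)) ≠ 0 := by
      rw [← Complex.ofReal_mul, ← Complex.ofReal_sinh]
      exact_mod_cast hsinh
    push_cast
    rw [mul_div_assoc', mul_div_cancel_left₀ _ hsC]
    ring
  have key := gamma_normsq (1 + (μ:ℂ) * Complex.I)
  rw [hconj, prod_eq] at key
  have key2 : ‖Complex.Gamma (1 + (μ:ℂ) * Complex.I)‖ ^ 2 = π * μ / Real.sinh (π * μ) := by
    exact_mod_cast key
  rw [h1, key2]

lemma V2 (μ : ℝ) : Gq 2 μ = Qf μ * Gq 1 μ := by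
  have hz : (1 + (μ:ℂ) * Complex.I) ≠ 0 := by
    intro h
    have := congrArg Complex.re h
    simp at this
  have h2 : ((2:ℝ):ℂ) + (μ:ℂ) * Complex.I = (1 + (μ:ℂ) * Complex.I) + 1 := by
    push_cast; ring
  rw [Gq, Gq, Real.Gamma_one, Real.Gamma_two, h2, Complex.Gamma_add_one _ hz, norm_mul, mul_pow]
  have : ‖1 + (μ:ℂ) * Complex.I‖ ^ 2 = Qf μ := by
    rw [norm_sq_eq]; simp [Qf]
  rw [this]
  norm_num
  try ring

lemma Vhalf (μ : ℝ) : Gq (1/2) μ = 1 / Real.cosh (π * μ) := by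
  have hcosh : (0:ℝ) < Real.cosh (π * μ) := Real.cosh_pos _
  have hG : Real.Gamma (1/2) ^ 2 = π := by
    rw [Real.Gamma_one_half_eq, Real.sq_sqrt Real.pi_pos.le]
  have hconj : (starRingEnd ℂ) (((1/2:ℝ):ℂ) + (μ:ℂ) * Complex.I)
      = 1 - (((1/2:ℝ):ℂ) + (μ:ℂ) * Complex.I) := by
    simp [Complex.ext_iff]
    norm_num
  have key := gamma_normsq (((1/2:ℝ):ℂ) + (μ:ℂ) * Complex.I)
  rw [hconj, Complex.Gamma_mul_Gamma_one_sub] at key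
  have hsin : Complex.sin ((π:ℂ) * (((1/2:ℝ):ℂ) + (μ:ℂ) * Complex.I))
      = (Real.cosh (π * μ) : ℂ) := by
    rw [show (π:ℂ) * (((1/2:ℝ):ℂ) + (μ:ℂ) * Complex.I)
        = ((π * μ : ℝ):ℂ) * Complex.I + (π:ℂ)/2 by push_cast; ring,
      Complex.sin_add_pi_div_two, Complex.cos_mul_I, Complex.ofReal_cosh]
  rw [hsin] at key
  have key2 : (‖Complex.Gamma (((1/2:ℝ):ℂ) + (μ:ℂ) * Complex.I)‖ ^ 2 : ℝ)
      = π / Real.cosh (π * μ) := by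
    have : ((‖Complex.Gamma (((1/2:ℝ):ℂ) + (μ:ℂ) * Complex.I)‖ ^ 2 : ℝ) : ℂ)
        = ((π / Real.cosh (π * μ) : ℝ):ℂ) := by
      rw [key]; push_cast; ring
    exact_mod_cast this
  rw [Gq, key2, hG]
  field_simp
  try ring
lemma exp_facts {X : ℝ} (hX : 0 ≤ X) :
    Real.exp X * Real.exp (-X) = 1 ∧ 1 + 2*X ≤ (Real.exp X)^2 ∧
    1 - 2*X ≤ (Real.exp (-X))^2 ∧ Real.exp (-X) ≤ 1 := by
  refine ⟨by rw [← Real.exp_add]; simp, ?_, ?_, ?_⟩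
  · have := Real.add_one_le_exp (2*X)
    rw [show (2:ℝ)*X = X + X by ring, Real.exp_add] at this
    nlinarith
  · have := Real.add_one_le_exp (-(2*X))
    rw [show -((2:ℝ)*X) = -X + -X by ring, Real.exp_add] at this
    nlinarith
  · exact Real.exp_le_one_iff.mpr (by linarith)

-- X * cosh X ≤ (1+X) * sinh X  for X ≥ 0
lemma B3 {X : ℝ} (hX : 0 ≤ X) : X * Real.cosh X ≤ (1 + X) * Real.sinh X := by
  obtain ⟨huv, hu2, _, _⟩ := exp_facts hX
  have hv : 0 < Real.exp (-X) := Real.exp_pos _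
  have hkey : Real.exp (-X) * (1 + 2*X) ≤ Real.exp X := by
    have h := mul_le_mul_of_nonneg_left hu2 hv.le
    nlinarith [h, huv]
  rw [Real.cosh_eq, Real.sinh_eq]
  nlinarith [hkey]

-- X / sinh X ≤ 2 (1+X) e^{-X}  for X > 0
lemma B1 {X : ℝ} (hX : 0 < X) : X / Real.sinh X ≤ 2 * ((1 + X) * Real.exp (-X)) := by
  have hs : 0 < Real.sinh X := Real.sinh_pos_iff.mpr hX
  obtain ⟨huv, hu2, _, hvle⟩ := exp_facts hX.le
  have hv : 0 < Real.exp (-X) := Real.exp_pos _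
  rw [div_le_iff₀ hs, Real.sinh_eq]
  -- need X ≤ (1+X)(1 - v^2) where v = exp(-X); from v^2 (1+2X) ≤ 1
  have hv2 : (Real.exp (-X))^2 * (1 + 2*X) ≤ 1 := by
    have h := mul_le_mul_of_nonneg_left hu2 (sq_nonneg (Real.exp (-X)))
    nlinarith [h, huv]
  nlinarith [hv2, sq_nonneg (Real.exp (-X)), huv, hv.le]

-- (1+X) e^{-X} ≤ 2 (X / sinh X)  for X > 0
lemma B2 {X : ℝ} (hX : 0 < X) : (1 + X) * Real.exp (-X) ≤ 2 * (X / Real.sinh X) := by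
  have hs : 0 < Real.sinh X := Real.sinh_pos_iff.mpr hX
  obtain ⟨huv, _, hv2ge, hvle⟩ := exp_facts hX.le
  have hv : 0 < Real.exp (-X) := Real.exp_pos _
  rw [show 2*(X/Real.sinh X) = 2*X/Real.sinh X by ring, le_div_iff₀ hs, Real.sinh_eq]
  rcases le_or_gt X 1 with h1 | h1
  · nlinarith [hv2ge, hv.le, huv, sq_nonneg (Real.exp (-X))]
  · nlinarith [hvle, hv.le, huv, sq_nonneg (Real.exp (-X)), mul_pos hv hv]

lemma Gq1_pos (μ : ℝ) : 0 < Gq 1 μ := Gq_pos μ one_pos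

lemma Gq1_zero : Gq 1 0 = 1 := by
  have h : ((1:ℝ):ℂ) + ((0:ℝ):ℂ) * Complex.I = 1 := by push_cast; ring
  rw [Gq, h, Complex.Gamma_one, Real.Gamma_one]
  norm_num

lemma eF_zero : eF 0 = 1 := by unfold eF; simp

lemma Gq1_as_X {μ : ℝ} (hμ : μ ≠ 0) :
    Gq 1 μ = (π * |μ|) / Real.sinh (π * |μ|) := by
  rw [V1 hμ]
  rcases abs_cases μ with ⟨h, _⟩ | ⟨h, _⟩
  · rw [h]
  · rw [h, show π * -μ = -(π * μ) by ring, Real.sinh_neg]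
    field_simp

lemma eF_le_Gq1 (μ : ℝ) : eF μ ≤ 2 * Gq 1 μ := by
  rcases eq_or_ne μ 0 with h | h
  · subst h
    have : Gq 1 0 = 1 := Gq1_zero
    rw [this, eF_zero]
    norm_num
  · have hX : 0 < π * |μ| := by positivity
    rw [Gq1_as_X h, eF]
    exact B2 hX

lemma Gq1_le_eF (μ : ℝ) : Gq 1 μ ≤ 2 * eF μ := by
  rcases eq_or_ne μ 0 with h | h
  · subst h
    have : Gq 1 0 = 1 := Gq1_zero
    rw [this, eF_zero]
    norm_num
  · have hX : 0 < π * |μ| := by positivity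
    rw [Gq1_as_X h, eF]
    exact B1 hX

-- Gq 1 μ * cosh(πμ) ≤ (1+π) * (Qf μ)^(1/2)
lemma sqrtQf (μ : ℝ) : (1:ℝ) ≤ (Qf μ) ^ ((1:ℝ)/2) ∧ |μ| ≤ (Qf μ) ^ ((1:ℝ)/2) := by
  rw [← Real.sqrt_eq_rpow]
  constructor
  · rw [show (1:ℝ) = Real.sqrt 1 by rw [Real.sqrt_one]]
    exact Real.sqrt_le_sqrt (by unfold Qf; nlinarith)
  · rw [← Real.sqrt_sq_eq_abs]
    exact Real.sqrt_le_sqrt (by unfold Qf; nlinarith)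

lemma Ecosh_le (μ : ℝ) : Gq 1 μ * Real.cosh (π * μ) ≤ (1 + π) * (Qf μ) ^ ((1:ℝ)/2) := by
  obtain ⟨hs1, hs2⟩ := sqrtQf μ
  have hstep : Gq 1 μ * Real.cosh (π * μ) ≤ 1 + π * |μ| := by
    rcases eq_or_ne μ 0 with h | h
    · subst h
      have : Gq 1 0 = 1 := Gq1_zero
      rw [this]
      simp [Real.cosh_zero]
    · have hX : 0 < π * |μ| := by positivity
      have hsh : 0 < Real.sinh (π * |μ|) := Real.sinh_pos_iff.mpr hX
      have hcosh : Real.cosh (π * μ) = Real.cosh (π * |μ|) := by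
        rcases abs_cases μ with ⟨h1, _⟩ | ⟨h1, _⟩
        · rw [h1]
        · rw [h1, show π * -μ = -(π * μ) by ring, Real.cosh_neg]
      rw [Gq1_as_X h, hcosh, div_mul_eq_mul_div, div_le_iff₀ hsh]
      exact B3 hX.le
  have hpi := Real.pi_pos
  calc Gq 1 μ * Real.cosh (π * μ) ≤ 1 + π * |μ| := hstep
    _ ≤ (1 + π) * (Qf μ) ^ ((1:ℝ)/2) := by nlinarith
lemma logPl_tendsto {x : ℝ} (μ : ℝ) (hx : 0 < x) :
    Tendsto (fun n => Real.log (Pl x μ n)) atTop (𝓝 (Real.log (Gq x μ))) :=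
  ((Real.continuousAt_log (Gq_pos μ hx).ne').tendsto).comp (prodForm μ hx)

lemma Gq_low (μ : ℝ) {t : ℝ} (ht : t ∈ Set.Icc (1:ℝ) 2) :
    Gq 1 μ ^ (2 - t) * Gq 2 μ ^ (t - 1) ≤ Gq t μ := by
  have ht0 : (0:ℝ) < t := by linarith [ht.1]
  have hlog : (2 - t) * Real.log (Gq 1 μ) + (t - 1) * Real.log (Gq 2 μ)
      ≤ Real.log (Gq t μ) := by
    have h1 := ((logPl_tendsto μ one_pos).const_mul (2 - t)).add
      ((logPl_tendsto μ two_pos).const_mul (t - 1))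
    exact le_of_tendsto_of_tendsto' h1 (logPl_tendsto μ ht0) (fun n => sum_lower μ ht n)
  have e1 : Gq 1 μ ^ (2 - t) = Real.exp ((2 - t) * Real.log (Gq 1 μ)) := by
    rw [Real.rpow_def_of_pos (Gq_pos μ one_pos), mul_comm]
  have e2 : Gq 2 μ ^ (t - 1) = Real.exp ((t - 1) * Real.log (Gq 2 μ)) := by
    rw [Real.rpow_def_of_pos (Gq_pos μ two_pos), mul_comm]
  rw [e1, e2, ← Real.exp_add, ← Real.exp_log (Gq_pos μ ht0)]
  exact Real.exp_le_exp.mpr hlog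

lemma Gq_up (μ : ℝ) {t : ℝ} (ht : t ∈ Set.Icc (1:ℝ) 2) :
    Gq t μ ≤ Gq 1 μ * (Gq 1 μ / Gq (1/2) μ) ^ (2 * (t - 1)) := by
  have ht0 : (0:ℝ) < t := by linarith [ht.1]
  have hhalf : (0:ℝ) < (1:ℝ)/2 := by norm_num
  have hlog : Real.log (Gq t μ) ≤ Real.log (Gq 1 μ)
      + (t - 1) * (2 * (Real.log (Gq 1 μ) - Real.log (Gq (1/2) μ))) := by
    have h1 := (logPl_tendsto μ one_pos).add
      (((logPl_tendsto μ one_pos).sub (logPl_tendsto μ hhalf)).const_mul 2 |>.const_mul (t-1))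
    exact le_of_tendsto_of_tendsto' (logPl_tendsto μ ht0) h1 (fun n => sum_upper μ ht n)
  have hpos : (0:ℝ) < Gq 1 μ / Gq (1/2) μ := div_pos (Gq_pos μ one_pos) (Gq_pos μ hhalf)
  have e1 : Gq 1 μ * (Gq 1 μ / Gq (1/2) μ) ^ (2 * (t - 1))
      = Real.exp (Real.log (Gq 1 μ)
        + (t - 1) * (2 * (Real.log (Gq 1 μ) - Real.log (Gq (1/2) μ)))) := by
    rw [Real.rpow_def_of_pos hpos, Real.log_div (Gq_pos μ one_pos).ne'
      (Gq_pos μ hhalf).ne', Real.exp_add]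
    congr 1
    · exact (Real.exp_log (Gq_pos μ one_pos)).symm
    · congr 1
      ring
  rw [e1, ← Real.exp_log (Gq_pos μ ht0)]
  exact Real.exp_le_exp.mpr hlog

def Mpred (x : ℝ) : Prop := ∃ c > 0, ∃ C > 0, ∀ μ : ℝ,
  c * eF μ * Qf μ ^ (x - 1) ≤ ‖Complex.Gamma ((x:ℂ) + μ * Complex.I)‖ ^ 2 ∧
  ‖Complex.Gamma ((x:ℂ) + μ * Complex.I)‖ ^ 2 ≤ C * eF μ * Qf μ ^ (x - 1)

lemma norm_sq_eq_Gq {x : ℝ} (μ : ℝ) (hx : 0 < x) :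
    ‖Complex.Gamma ((x:ℂ) + μ * Complex.I)‖ ^ 2 = Real.Gamma x ^ 2 * Gq x μ := by
  rw [Gq]
  field_simp

lemma Mbase {t : ℝ} (ht : t ∈ Set.Icc (1:ℝ) 2) : Mpred t := by
  have ht0 : (0:ℝ) < t := by linarith [ht.1]
  have hΓ : 0 < Real.Gamma t := Real.Gamma_pos_of_pos ht0
  have hpi : (0:ℝ) < π := Real.pi_pos
  refine ⟨Real.Gamma t ^ 2 / 2, by positivity,
    Real.Gamma t ^ 2 * (2 * (1 + π) ^ 2), by positivity, fun μ => ?_⟩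
  have hq : 0 < Qf μ := Qf_pos μ
  have hE : 0 < Gq 1 μ := Gq1_pos μ
  have he : 0 < eF μ := eF_pos μ
  have hqr : (0:ℝ) < Qf μ ^ (t - 1) := Real.rpow_pos_of_pos hq _
  -- lower bound for Gq t μ
  have key1 : Gq 1 μ * Qf μ ^ (t - 1) ≤ Gq t μ := by
    have h := Gq_low μ ht
    rw [V2 μ] at h
    have hGG : Gq 1 μ ^ (2-t) * Gq 1 μ ^ (t-1) = Gq 1 μ := by
      rw [← Real.rpow_add hE, show (2-t)+(t-1) = (1:ℝ) by ring, Real.rpow_one]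
    calc Gq 1 μ * Qf μ ^ (t - 1)
        = Gq 1 μ ^ (2-t) * Gq 1 μ ^ (t-1) * Qf μ ^ (t-1) := by rw [hGG]
      _ = Gq 1 μ ^ (2 - t) * (Qf μ * Gq 1 μ) ^ (t - 1) := by
          rw [Real.mul_rpow hq.le hE.le]
          ring
      _ ≤ Gq t μ := h
  -- upper bound for Gq t μ
  have key2 : Gq t μ ≤ (1 + π) ^ 2 * (Gq 1 μ * Qf μ ^ (t - 1)) := by
    have h := Gq_up μ ht
    have hdiv : Gq 1 μ / Gq (1/2) μ = Gq 1 μ * Real.cosh (π * μ) := by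
      rw [Vhalf μ]
      have := Real.cosh_pos (π * μ)
      field_simp
    rw [hdiv] at h
    have hcosh := Real.cosh_pos (π * μ)
    have hbase : (0:ℝ) ≤ Gq 1 μ * Real.cosh (π * μ) := by positivity
    have hexp : (0:ℝ) ≤ 2 * (t - 1) := by linarith [ht.1]
    have h2 : (Gq 1 μ * Real.cosh (π * μ)) ^ (2 * (t - 1))
        ≤ ((1 + π) * Qf μ ^ ((1:ℝ)/2)) ^ (2 * (t - 1)) :=
      Real.rpow_le_rpow hbase (Ecosh_le μ) hexp
    have h3 : ((1 + π) * Qf μ ^ ((1:ℝ)/2)) ^ (2 * (t - 1))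
        = (1 + π) ^ (2 * (t - 1)) * Qf μ ^ (t - 1) := by
      rw [Real.mul_rpow (by positivity) (Real.rpow_pos_of_pos hq _).le,
        ← Real.rpow_mul hq.le]
      congr 2
      ring
    have h4 : (1 + π) ^ (2 * (t - 1) : ℝ) ≤ (1 + π) ^ (2:ℝ) :=
      Real.rpow_le_rpow_of_exponent_le (by linarith) (by linarith [ht.2])
    have h5 : ((1 + π):ℝ) ^ (2:ℝ) = (1 + π) ^ 2 := by
      rw [show ((2:ℝ)) = ((2:ℕ):ℝ) by norm_num, Real.rpow_natCast]
    calc Gq t μ ≤ Gq 1 μ * (Gq 1 μ * Real.cosh (π * μ)) ^ (2 * (t - 1)) := h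
      _ ≤ Gq 1 μ * ((1 + π) ^ (2 * (t - 1) : ℝ) * Qf μ ^ (t - 1)) := by
          rw [← h3]
          exact mul_le_mul_of_nonneg_left h2 hE.le
      _ ≤ Gq 1 μ * ((1 + π) ^ (2:ℝ) * Qf μ ^ (t - 1)) := by
          apply mul_le_mul_of_nonneg_left _ hE.le
          exact mul_le_mul_of_nonneg_right h4 hqr.le
      _ = (1 + π) ^ 2 * (Gq 1 μ * Qf μ ^ (t - 1)) := by rw [h5]; ring
  rw [norm_sq_eq_Gq μ ht0]
  constructor
  · have h6 : eF μ * Qf μ ^ (t-1) ≤ 2 * (Gq 1 μ * Qf μ ^ (t-1)) := by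
      nlinarith [mul_le_mul_of_nonneg_right (eF_le_Gq1 μ) hqr.le]
    calc Real.Gamma t ^ 2 / 2 * eF μ * Qf μ ^ (t - 1)
        = Real.Gamma t ^ 2 / 2 * (eF μ * Qf μ ^ (t - 1)) := by ring
      _ ≤ Real.Gamma t ^ 2 / 2 * (2 * (Gq 1 μ * Qf μ ^ (t-1))) :=
          mul_le_mul_of_nonneg_left h6 (by positivity)
      _ = Real.Gamma t ^ 2 * (Gq 1 μ * Qf μ ^ (t-1)) := by ring
      _ ≤ Real.Gamma t ^ 2 * Gq t μ := mul_le_mul_of_nonneg_left key1 (by positivity)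
  · calc Real.Gamma t ^ 2 * Gq t μ
        ≤ Real.Gamma t ^ 2 * ((1 + π) ^ 2 * (Gq 1 μ * Qf μ ^ (t - 1))) :=
          mul_le_mul_of_nonneg_left key2 (by positivity)
      _ = Real.Gamma t ^ 2 * (1 + π) ^ 2 * (Gq 1 μ * Qf μ ^ (t - 1)) := by ring
      _ ≤ Real.Gamma t ^ 2 * (1 + π) ^ 2 * (2 * eF μ * Qf μ ^ (t - 1)) := by
          apply mul_le_mul_of_nonneg_left _ (by positivity)
          nlinarith [mul_le_mul_of_nonneg_right (Gq1_le_eF μ) hqr.le]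
      _ = Real.Gamma t ^ 2 * (2 * (1 + π) ^ 2) * eF μ * Qf μ ^ (t - 1) := by ring
lemma gamma_shift {x : ℝ} (μ : ℝ) (hx : x ≠ 0) :
    ‖Complex.Gamma (((x+1:ℝ):ℂ) + μ * Complex.I)‖ ^ 2
      = (x^2 + μ^2) * ‖Complex.Gamma ((x:ℂ) + μ * Complex.I)‖ ^ 2 := by
  have hz : ((x:ℂ) + μ * Complex.I) ≠ 0 := by
    intro h
    have := congrArg Complex.re h
    simp at this
    exact hx this
  have harg : (((x+1:ℝ)):ℂ) + μ * Complex.I = ((x:ℂ) + μ * Complex.I) + 1 := by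
    push_cast; ring
  rw [harg, Complex.Gamma_add_one _ hz, norm_mul, mul_pow]
  congr 1
  rw [norm_sq_eq]
  simp

lemma quad_bounds {x : ℝ} (hx : x ≠ 0) (μ : ℝ) :
    min (x^2) 1 * Qf μ ≤ x^2 + μ^2 ∧ x^2 + μ^2 ≤ (x^2 + 1) * Qf μ := by
  have h1 : (0:ℝ) < x^2 := by positivity
  constructor
  · rcases le_total (x^2) 1 with h | h
    · rw [min_eq_left h]; unfold Qf; nlinarith
    · rw [min_eq_right h]; unfold Qf; nlinarith
  · unfold Qf; nlinarith [sq_nonneg μ, sq_nonneg x, mul_nonneg (sq_nonneg x) (sq_nonneg μ)]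

lemma Qf_rpow_succ (μ : ℝ) (x : ℝ) : Qf μ ^ (x + 1 - 1) = Qf μ ^ (x - 1) * Qf μ := by
  rw [show x + 1 - 1 = (x - 1) + 1 by ring, Real.rpow_add (Qf_pos μ), Real.rpow_one]

lemma Mstep_up {x : ℝ} (hx : x ≠ 0) (h : Mpred x) : Mpred (x + 1) := by
  obtain ⟨c, hc, C, hC, hb⟩ := h
  have hmin : 0 < min (x^2) 1 := by
    have : (0:ℝ) < x^2 := by positivity
    exact lt_min this one_pos
  refine ⟨c * min (x^2) 1, by positivity, C * (x^2 + 1), by positivity, fun μ => ?_⟩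
  obtain ⟨hb1, hb2⟩ := hb μ
  obtain ⟨hq1, hq2⟩ := quad_bounds hx μ
  have hq : 0 < Qf μ := Qf_pos μ
  have he : 0 < eF μ := eF_pos μ
  have hqr : (0:ℝ) < Qf μ ^ (x - 1) := Real.rpow_pos_of_pos hq _
  have hnorm : (0:ℝ) ≤ ‖Complex.Gamma ((x:ℂ) + μ * Complex.I)‖ ^ 2 := by positivity
  rw [gamma_shift μ hx, Qf_rpow_succ]
  constructor
  · calc c * min (x^2) 1 * eF μ * (Qf μ ^ (x-1) * Qf μ)
        = (min (x^2) 1 * Qf μ) * (c * eF μ * Qf μ ^ (x-1)) := by ring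
      _ ≤ (x^2 + μ^2) * (c * eF μ * Qf μ ^ (x-1)) := by
          apply mul_le_mul_of_nonneg_right hq1 (by positivity)
      _ ≤ (x^2 + μ^2) * ‖Complex.Gamma ((x:ℂ) + μ * Complex.I)‖ ^ 2 := by
          apply mul_le_mul_of_nonneg_left hb1 (by positivity)
  · calc (x^2 + μ^2) * ‖Complex.Gamma ((x:ℂ) + μ * Complex.I)‖ ^ 2
        ≤ (x^2 + μ^2) * (C * eF μ * Qf μ ^ (x-1)) := by
          apply mul_le_mul_of_nonneg_left hb2 (by positivity)
      _ ≤ ((x^2 + 1) * Qf μ) * (C * eF μ * Qf μ ^ (x-1)) := by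
          apply mul_le_mul_of_nonneg_right hq2 (by positivity)
      _ = C * (x^2+1) * eF μ * (Qf μ ^ (x-1) * Qf μ) := by ring

lemma Mstep_down {x : ℝ} (hx : x ≠ 0) (h : Mpred (x + 1)) : Mpred x := by
  obtain ⟨c, hc, C, hC, hb⟩ := h
  have hmin : 0 < min (x^2) 1 := by
    have : (0:ℝ) < x^2 := by positivity
    exact lt_min this one_pos
  refine ⟨c / (x^2 + 1), by positivity, C / min (x^2) 1, by positivity, fun μ => ?_⟩
  obtain ⟨hb1, hb2⟩ := hb μ
  obtain ⟨hq1, hq2⟩ := quad_bounds hx μ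
  have hq : 0 < Qf μ := Qf_pos μ
  have he : 0 < eF μ := eF_pos μ
  have hqr : (0:ℝ) < Qf μ ^ (x - 1) := Real.rpow_pos_of_pos hq _
  have hx2 : (0:ℝ) < x^2 + μ^2 := by positivity
  rw [gamma_shift μ hx, Qf_rpow_succ] at hb1 hb2
  set N := ‖Complex.Gamma ((x:ℂ) + μ * Complex.I)‖ ^ 2 with hN
  have hNpos : (0:ℝ) ≤ N := by positivity
  constructor
  · rw [div_mul_eq_mul_div, div_mul_eq_mul_div, div_le_iff₀ (by positivity : (0:ℝ) < x^2+1)]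
    refine le_of_mul_le_mul_right ?_ hq
    calc c * eF μ * Qf μ ^ (x-1) * Qf μ
        = c * eF μ * (Qf μ ^ (x-1) * Qf μ) := by ring
      _ ≤ (x^2 + μ^2) * N := hb1
      _ ≤ ((x^2 + 1) * Qf μ) * N := mul_le_mul_of_nonneg_right hq2 hNpos
      _ = N * (x^2 + 1) * Qf μ := by ring
  · rw [div_mul_eq_mul_div, div_mul_eq_mul_div, le_div_iff₀ hmin]
    refine le_of_mul_le_mul_right ?_ hq
    calc N * min (x^2) 1 * Qf μ
        = (min (x^2) 1 * Qf μ) * N := by ring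
      _ ≤ (x^2 + μ^2) * N := mul_le_mul_of_nonneg_right hq1 hNpos
      _ ≤ C * eF μ * (Qf μ ^ (x-1) * Qf μ) := hb2
      _ = C * eF μ * Qf μ ^ (x-1) * Qf μ := by ring
lemma M_up_nat : ∀ (m : ℕ) {t : ℝ}, t ∈ Set.Icc (1:ℝ) 2 → Mpred (t + m) := by
  intro m
  induction m with
  | zero => intro t ht; simpa using Mbase ht
  | succ m ih =>
    intro t ht
    have h1 := ih ht
    have hne : t + m ≠ 0 := by
      have := ht.1
      positivity
    have := Mstep_up hne h1
    have harg : t + (m:ℝ) + 1 = t + ((m+1 : ℕ) : ℝ) := by push_cast; ring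
    rwa [harg] at this

lemma M_ge_one {y : ℝ} (hy : 1 ≤ y) : Mpred y := by
  set m := Nat.floor (y - 1) with hm
  have h0 : (0:ℝ) ≤ y - 1 := by linarith
  have hle : (m:ℝ) ≤ y - 1 := Nat.floor_le h0
  have hlt : y - 1 < m + 1 := Nat.lt_floor_add_one _
  have ht : (y - m) ∈ Set.Icc (1:ℝ) 2 := ⟨by linarith, by linarith⟩
  have := M_up_nat m ht
  rwa [show y - (m:ℝ) + m = y by ring] at this

lemma M_down_nat : ∀ (m : ℕ) {x : ℝ}, (∀ n : ℕ, x ≠ -(n:ℝ)) → Mpred (x + m) → Mpred x := by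
  intro m
  induction m with
  | zero => intro x _ h; simpa using h
  | succ m ih =>
    intro x hx h
    have hx1 : ∀ n : ℕ, x + 1 ≠ -(n:ℝ) := by
      intro n hn
      have : x = -((n+1 : ℕ):ℝ) := by push_cast; linarith
      exact hx (n+1) this
    have harg : x + ((m+1 : ℕ) : ℝ) = (x + 1) + m := by push_cast; ring
    rw [harg] at h
    have h2 := ih hx1 h
    have hx0 : x ≠ 0 := by
      intro h0
      exact hx 0 (by simp [h0])
    exact Mstep_down hx0 h2

lemma M_all {x : ℝ} (hx : ∀ n : ℕ, x ≠ -(n:ℝ)) : Mpred x := by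
  set k := Nat.floor |x| + 2 with hk
  have hkx : 1 ≤ x + k := by
    have h1 : |x| < Nat.floor |x| + 1 := Nat.lt_floor_add_one _
    have h2 : -x ≤ |x| := neg_le_abs x
    have : (k:ℝ) = Nat.floor |x| + 2 := by rw [hk]; push_cast; ring
    rw [this]
    linarith
  exact M_down_nat k hx (M_ge_one hkx)
lemma eF_shift (y l : ℝ) : eF (y + l) ≤ (1 + π * |y|) * Real.exp (π * |y|) * eF l := by
  unfold eF
  have hpi := Real.pi_pos
  have h1 : |y + l| ≤ |y| + |l| := abs_add_le y l
  have h2 : |l| ≤ |y + l| + |y| := by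
    have := abs_add_le (y + l) (-y)
    rw [show y + l + -y = l by ring, abs_neg] at this
    exact this
  have p1 : 1 + π * |y + l| ≤ (1 + π * |y|) * (1 + π * |l|) := by
    have step : π * |y + l| ≤ π * |y| + π * |l| := by
      have := mul_le_mul_of_nonneg_left h1 hpi.le
      linarith [this]
    nlinarith [step, mul_nonneg (mul_nonneg hpi.le (abs_nonneg y))
      (mul_nonneg hpi.le (abs_nonneg l))]
  have p2 : Real.exp (-(π * |y + l|)) ≤ Real.exp (π * |y|) * Real.exp (-(π * |l|)) := by
    rw [← Real.exp_add]
    apply Real.exp_le_exp.mpr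
    nlinarith [abs_nonneg (y+l)]
  calc (1 + π * |y + l|) * Real.exp (-(π * |y + l|))
      ≤ ((1 + π * |y|) * (1 + π * |l|)) * (Real.exp (π * |y|) * Real.exp (-(π * |l|))) := by
        apply mul_le_mul p1 p2 (Real.exp_pos _).le (by positivity)
    _ = (1 + π * |y|) * Real.exp (π * |y|) * ((1 + π * |l|) * Real.exp (-(π * |l|))) := by ring

lemma eF_shift_bounds (y : ℝ) : ∃ K > 0, ∀ l : ℝ,
    eF (y + l) ≤ K * eF l ∧ eF l ≤ K * eF (y + l) := by
  have hpi := Real.pi_pos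
  refine ⟨(1 + π * |y|) * Real.exp (π * |y|), by positivity, fun l => ⟨eF_shift y l, ?_⟩⟩
  have := eF_shift (-y) (y + l)
  rw [show -y + (y + l) = l by ring, abs_neg] at this
  exact this

lemma Qf_shift (y l : ℝ) : Qf (y + l) ≤ 2 * (1 + y^2) * Qf l := by
  unfold Qf
  nlinarith [sq_nonneg (y - l), sq_nonneg (y * l)]

lemma Qf_rpow_shift (y s : ℝ) : ∃ K > 0, ∀ l : ℝ,
    Qf (y + l) ^ s ≤ K * Qf l ^ s ∧ Qf l ^ s ≤ K * Qf (y + l) ^ s := by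
  set c0 : ℝ := 2 * (1 + y^2) with hc0
  have hc0pos : (0:ℝ) < c0 := by positivity
  have h1 : ∀ l : ℝ, Qf (y + l) ≤ c0 * Qf l := fun l => Qf_shift y l
  have h2 : ∀ l : ℝ, Qf l ≤ c0 * Qf (y + l) := by
    intro l
    have := Qf_shift (-y) (y + l)
    rw [show -y + (y + l) = l by ring] at this
    calc Qf l ≤ 2 * (1 + (-y)^2) * Qf (y + l) := this
      _ = c0 * Qf (y + l) := by rw [hc0]; ring_nf
  refine ⟨c0 ^ |s|, Real.rpow_pos_of_pos hc0pos _, fun l => ?_⟩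
  have hq1 : 0 < Qf (y + l) := Qf_pos _
  have hq2 : 0 < Qf l := Qf_pos _
  rcases le_or_gt 0 s with hs | hs
  · rw [abs_of_nonneg hs]
    constructor
    · calc Qf (y + l) ^ s ≤ (c0 * Qf l) ^ s := Real.rpow_le_rpow hq1.le (h1 l) hs
        _ = c0 ^ s * Qf l ^ s := Real.mul_rpow hc0pos.le hq2.le
    · calc Qf l ^ s ≤ (c0 * Qf (y + l)) ^ s := Real.rpow_le_rpow hq2.le (h2 l) hs
        _ = c0 ^ s * Qf (y + l) ^ s := Real.mul_rpow hc0pos.le hq1.le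
  · rw [abs_of_neg hs]
    constructor
    · have key : (c0 * Qf (y + l)) ^ s ≤ Qf l ^ s :=
        Real.rpow_le_rpow_of_nonpos hq2 (h2 l) hs.le
      rw [Real.mul_rpow hc0pos.le hq1.le] at key
      have hcs : 0 < c0 ^ s := Real.rpow_pos_of_pos hc0pos _
      calc Qf (y + l) ^ s = c0 ^ (-s) * (c0 ^ s * Qf (y + l) ^ s) := by
            rw [← mul_assoc, ← Real.rpow_add hc0pos]
            simp
        _ ≤ c0 ^ (-s) * Qf l ^ s := by
            apply mul_le_mul_of_nonneg_left key (Real.rpow_pos_of_pos hc0pos _).le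
    · have key : (c0 * Qf l) ^ s ≤ Qf (y + l) ^ s :=
        Real.rpow_le_rpow_of_nonpos hq1 (h1 l) hs.le
      rw [Real.mul_rpow hc0pos.le hq2.le] at key
      calc Qf l ^ s = c0 ^ (-s) * (c0 ^ s * Qf l ^ s) := by
            rw [← mul_assoc, ← Real.rpow_add hc0pos]
            simp
        _ ≤ c0 ^ (-s) * Qf (y + l) ^ s := by
            apply mul_le_mul_of_nonneg_left key (Real.rpow_pos_of_pos hc0pos _).le

lemma Mcomplex {a : ℂ} (ha : ∀ n : ℕ, a.re ≠ -(n:ℝ)) :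
    ∃ c > 0, ∃ C > 0, ∀ l : ℝ,
      c * eF l * Qf l ^ (a.re - 1) ≤ ‖Complex.Gamma (a + Complex.I * l)‖ ^ 2 ∧
      ‖Complex.Gamma (a + Complex.I * l)‖ ^ 2 ≤ C * eF l * Qf l ^ (a.re - 1) := by
  obtain ⟨c0, hc0, C0, hC0, hb⟩ := M_all ha
  obtain ⟨Ke, hKe, hKe'⟩ := eF_shift_bounds a.im
  obtain ⟨Kq, hKq, hKq'⟩ := Qf_rpow_shift a.im (a.re - 1)
  refine ⟨c0 / (Ke * Kq), by positivity, C0 * (Ke * Kq), by positivity, fun l => ?_⟩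
  have harg : a + Complex.I * l = ((a.re : ℝ):ℂ) + ((a.im + l : ℝ):ℂ) * Complex.I := by
    apply Complex.ext <;> simp
  obtain ⟨hb1, hb2⟩ := hb (a.im + l)
  obtain ⟨he1, he2⟩ := hKe' l
  obtain ⟨hq1, hq2⟩ := hKq' l
  have hqpos : ∀ u : ℝ, (0:ℝ) < Qf u ^ (a.re - 1) := fun u => Real.rpow_pos_of_pos (Qf_pos u) _
  have hepos := eF_pos
  rw [harg]
  constructor
  · calc c0 / (Ke * Kq) * eF l * Qf l ^ (a.re - 1)
        ≤ c0 / (Ke * Kq) * (Ke * eF (a.im + l)) * (Kq * Qf (a.im + l) ^ (a.re - 1)) := by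
          apply mul_le_mul (mul_le_mul_of_nonneg_left he2 (div_pos hc0 (mul_pos hKe hKq)).le)
            hq2 (hqpos l).le
            (mul_pos (div_pos hc0 (mul_pos hKe hKq)) (mul_pos hKe (eF_pos _))).le
      _ = c0 * eF (a.im + l) * Qf (a.im + l) ^ (a.re - 1) := by
          field_simp
      _ ≤ _ := hb1
  · calc ‖Complex.Gamma (((a.re : ℝ):ℂ) + ((a.im + l : ℝ):ℂ) * Complex.I)‖ ^ 2
        ≤ C0 * eF (a.im + l) * Qf (a.im + l) ^ (a.re - 1) := hb2
      _ ≤ C0 * (Ke * eF l) * (Kq * Qf l ^ (a.re - 1)) := by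
          apply mul_le_mul (mul_le_mul_of_nonneg_left he1 hC0.le) hq1
            (hqpos _).le (mul_pos hC0 (mul_pos hKe (eF_pos l))).le
      _ = C0 * (Ke * Kq) * eF l * Qf l ^ (a.re - 1) := by ring
set_option maxHeartbeats 1000000 in
lemma Mprod (s : Finset ℕ) (f : ℕ → ℂ) :
    (∀ i ∈ s, ∀ n : ℕ, (f i).re ≠ -(n:ℝ)) →
    ∃ c > 0, ∃ C > 0, ∀ l : ℝ,
      c * eF l ^ s.card * Qf l ^ (∑ i ∈ s, ((f i).re - 1))
          ≤ ∏ i ∈ s, ‖Complex.Gamma (f i + Complex.I * l)‖ ^ 2 ∧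
      ∏ i ∈ s, ‖Complex.Gamma (f i + Complex.I * l)‖ ^ 2
          ≤ C * eF l ^ s.card * Qf l ^ (∑ i ∈ s, ((f i).re - 1)) := by
  classical
  induction s using Finset.cons_induction with
  | empty =>
    intro _
    exact ⟨1, one_pos, 1, one_pos, fun l => by simp⟩
  | cons i s hi ih =>
    intro hf
    obtain ⟨c1, hc1, C1, hC1, h1⟩ := Mcomplex (hf i (Finset.mem_cons_self i s))
    obtain ⟨c2, hc2, C2, hC2, h2⟩ := ih (fun j hj => hf j (Finset.mem_cons_of_mem hj))
    refine ⟨c1 * c2, by positivity, C1 * C2, by positivity, fun l => ?_⟩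
    obtain ⟨ha1, ha2⟩ := h1 l
    obtain ⟨hb1, hb2⟩ := h2 l
    have he : 0 < eF l := eF_pos l
    have hq : 0 < Qf l := Qf_pos l
    have hsum : ∑ j ∈ Finset.cons i s hi, ((f j).re - 1)
        = ((f i).re - 1) + ∑ j ∈ s, ((f j).re - 1) := Finset.sum_cons hi
    have hcard : (Finset.cons i s hi).card = s.card + 1 := Finset.card_cons hi
    have hprod : ∏ j ∈ Finset.cons i s hi, ‖Complex.Gamma (f j + Complex.I * l)‖ ^ 2
        = ‖Complex.Gamma (f i + Complex.I * l)‖ ^ 2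
          * ∏ j ∈ s, ‖Complex.Gamma (f j + Complex.I * l)‖ ^ 2 := Finset.prod_cons hi
    have hqsplit : Qf l ^ (((f i).re - 1) + ∑ j ∈ s, ((f j).re - 1))
        = Qf l ^ ((f i).re - 1) * Qf l ^ (∑ j ∈ s, ((f j).re - 1)) :=
      Real.rpow_add hq _ _
    rw [hsum, hcard, hprod, hqsplit]
    have hqr1 : (0:ℝ) < Qf l ^ ((f i).re - 1) := Real.rpow_pos_of_pos hq _
    have hqr2 : (0:ℝ) < Qf l ^ (∑ j ∈ s, ((f j).re - 1)) := Real.rpow_pos_of_pos hq _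
    constructor
    · calc c1 * c2 * eF l ^ (s.card + 1) * (Qf l ^ ((f i).re - 1) * Qf l ^ (∑ j ∈ s, ((f j).re - 1)))
          = (c1 * eF l * Qf l ^ ((f i).re - 1))
            * (c2 * eF l ^ s.card * Qf l ^ (∑ j ∈ s, ((f j).re - 1))) := by ring
        _ ≤ ‖Complex.Gamma (f i + Complex.I * l)‖ ^ 2
            * ∏ j ∈ s, ‖Complex.Gamma (f j + Complex.I * l)‖ ^ 2 :=
            mul_le_mul ha1 hb1 (mul_pos (mul_pos hc2 (pow_pos he _)) hqr2).le
              (by positivity)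
    · calc ‖Complex.Gamma (f i + Complex.I * l)‖ ^ 2
            * ∏ j ∈ s, ‖Complex.Gamma (f j + Complex.I * l)‖ ^ 2
          ≤ (C1 * eF l * Qf l ^ ((f i).re - 1))
            * (C2 * eF l ^ s.card * Qf l ^ (∑ j ∈ s, ((f j).re - 1))) :=
            mul_le_mul ha2 hb2
              (Finset.prod_nonneg fun j _ => by positivity)
              (mul_pos (mul_pos hC1 he) hqr1).le
        _ = C1 * C2 * eF l ^ (s.card + 1)
            * (Qf l ^ ((f i).re - 1) * Qf l ^ (∑ j ∈ s, ((f j).re - 1))) := by ring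
end GammaAux

open Finset

open GammaAux in
set_option maxHeartbeats 1000000 in
/-- Two-sided bound for quotients of products of Gamma functions on vertical lines:
`C⁻¹ (1+λ²)^{S/2} ≤ |∏ Γ(a_i + iλ) / ∏ Γ(b_i + iλ)| ≤ C (1+λ²)^{S/2}` with
`S = ∑ Re(a_i − b_i)`. -/
theorem gamma_product_quotient_two_sided_bound (N : ℕ) (hN : 1 ≤ N) (a b : ℕ → ℂ)
    (ha : ∀ i ∈ Icc 1 N, ∀ n : ℕ, (a i).re ≠ -(n:ℝ))
    (hb : ∀ i ∈ Icc 1 N, ∀ n : ℕ, (b i).re ≠ -(n:ℝ)) :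
    ∃ C > 0, ∀ lam : ℝ,
      C⁻¹ * (1 + lam ^ 2) ^ ((∑ i ∈ Icc 1 N, (a i - b i).re) / 2) ≤
        ‖(∏ i ∈ Icc 1 N, Complex.Gamma (a i + Complex.I * lam)) /
            (∏ i ∈ Icc 1 N, Complex.Gamma (b i + Complex.I * lam))‖ ∧
      ‖(∏ i ∈ Icc 1 N, Complex.Gamma (a i + Complex.I * lam)) /
          (∏ i ∈ Icc 1 N, Complex.Gamma (b i + Complex.I * lam))‖ ≤
        C * (1 + lam ^ 2) ^ ((∑ i ∈ Icc 1 N, (a i - b i).re) / 2) := by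
  classical
  obtain ⟨cN, hcN, CN, hCN, hNum⟩ := Mprod (Finset.Icc 1 N) a ha
  obtain ⟨cD, hcD, CD, hCD, hDen⟩ := Mprod (Finset.Icc 1 N) b hb
  have hC1 : (0:ℝ) < Real.sqrt (CN / cD) := Real.sqrt_pos.mpr (div_pos hCN hcD)
  have hC2 : (0:ℝ) < Real.sqrt (cN / CD) := Real.sqrt_pos.mpr (div_pos hcN hCD)
  have hCpos : (0:ℝ) < max (Real.sqrt (CN / cD)) (Real.sqrt (cN / CD))⁻¹ :=
    lt_max_of_lt_left hC1
  refine ⟨_, hCpos, fun lam => ?_⟩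
  have hq : (0:ℝ) < Qf lam := Qf_pos lam
  have he : (0:ℝ) < eF lam := eF_pos lam
  obtain ⟨hn1, hn2⟩ := hNum lam
  obtain ⟨hd1, hd2⟩ := hDen lam
  set S : ℝ := ∑ i ∈ Icc 1 N, (a i - b i).re with hS
  set Sa : ℝ := ∑ i ∈ Icc 1 N, ((a i).re - 1) with hSa
  set Sb : ℝ := ∑ i ∈ Icc 1 N, ((b i).re - 1) with hSb
  have hQa : (0:ℝ) < Qf lam ^ Sa := Real.rpow_pos_of_pos hq _
  have hQb : (0:ℝ) < Qf lam ^ Sb := Real.rpow_pos_of_pos hq _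
  have hQS : (0:ℝ) < Qf lam ^ S := Real.rpow_pos_of_pos hq _
  have hQhalf : (0:ℝ) < Qf lam ^ (S / 2) := Real.rpow_pos_of_pos hq _
  have hPb_pos : (0:ℝ) < ∏ i ∈ Icc 1 N, ‖Complex.Gamma (b i + Complex.I * lam)‖ ^ 2 :=
    lt_of_lt_of_le (mul_pos (mul_pos hcD (pow_pos he _)) hQb) hd1
  have hPa_nonneg : (0:ℝ) ≤ ∏ i ∈ Icc 1 N, ‖Complex.Gamma (a i + Complex.I * lam)‖ ^ 2 :=
    Finset.prod_nonneg fun i _ => by positivity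
  have hnorm2 : ∀ f : ℕ → ℂ,
      ‖∏ i ∈ Icc 1 N, Complex.Gamma (f i + Complex.I * lam)‖ ^ 2
        = ∏ i ∈ Icc 1 N, ‖Complex.Gamma (f i + Complex.I * lam)‖ ^ 2 := by
    intro f
    rw [norm_prod, Finset.prod_pow]
  have hR2 : ‖(∏ i ∈ Icc 1 N, Complex.Gamma (a i + Complex.I * lam)) /
        (∏ i ∈ Icc 1 N, Complex.Gamma (b i + Complex.I * lam))‖ ^ 2
      = (∏ i ∈ Icc 1 N, ‖Complex.Gamma (a i + Complex.I * lam)‖ ^ 2)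
        / (∏ i ∈ Icc 1 N, ‖Complex.Gamma (b i + Complex.I * lam)‖ ^ 2) := by
    rw [norm_div, div_pow, hnorm2 a, hnorm2 b]
  have hSab : Sa - Sb = S := by
    rw [hSa, hSb, hS, ← Finset.sum_sub_distrib]
    apply Finset.sum_congr rfl
    intro i _
    simp [Complex.sub_re]
  have hQdiv : Qf lam ^ Sa / Qf lam ^ Sb = Qf lam ^ S := by
    rw [← Real.rpow_sub hq, hSab]
  -- two-sided bound on the squared norm
  have hub : ‖(∏ i ∈ Icc 1 N, Complex.Gamma (a i + Complex.I * lam)) /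
        (∏ i ∈ Icc 1 N, Complex.Gamma (b i + Complex.I * lam))‖ ^ 2
      ≤ (CN / cD) * Qf lam ^ S := by
    rw [hR2]
    calc (∏ i ∈ Icc 1 N, ‖Complex.Gamma (a i + Complex.I * lam)‖ ^ 2)
          / (∏ i ∈ Icc 1 N, ‖Complex.Gamma (b i + Complex.I * lam)‖ ^ 2)
        ≤ (CN * eF lam ^ (Finset.Icc 1 N).card * Qf lam ^ Sa)
          / (cD * eF lam ^ (Finset.Icc 1 N).card * Qf lam ^ Sb) := by
          apply div_le_div₀ (mul_pos (mul_pos hCN (pow_pos he _)) hQa).le hn2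
            (mul_pos (mul_pos hcD (pow_pos he _)) hQb) hd1
      _ = (CN / cD) * Qf lam ^ S := by
          rw [← hQdiv]
          field_simp
  have hlb : (cN / CD) * Qf lam ^ S
      ≤ ‖(∏ i ∈ Icc 1 N, Complex.Gamma (a i + Complex.I * lam)) /
        (∏ i ∈ Icc 1 N, Complex.Gamma (b i + Complex.I * lam))‖ ^ 2 := by
    rw [hR2]
    calc (cN / CD) * Qf lam ^ S
        = (cN * eF lam ^ (Finset.Icc 1 N).card * Qf lam ^ Sa)
          / (CD * eF lam ^ (Finset.Icc 1 N).card * Qf lam ^ Sb) := by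
          rw [← hQdiv]
          field_simp
      _ ≤ _ := by
          apply div_le_div₀ hPa_nonneg hn1 hPb_pos hd2
  -- pass to square roots
  have hsqrtQ : Real.sqrt (Qf lam ^ S) = Qf lam ^ (S / 2) := by
    rw [Real.sqrt_eq_rpow, ← Real.rpow_mul hq.le]
    congr 1
    ring
  have hRnn : (0:ℝ) ≤ ‖(∏ i ∈ Icc 1 N, Complex.Gamma (a i + Complex.I * lam)) /
      (∏ i ∈ Icc 1 N, Complex.Gamma (b i + Complex.I * lam))‖ := norm_nonneg _
  have hup : ‖(∏ i ∈ Icc 1 N, Complex.Gamma (a i + Complex.I * lam)) /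
        (∏ i ∈ Icc 1 N, Complex.Gamma (b i + Complex.I * lam))‖
      ≤ Real.sqrt (CN / cD) * Qf lam ^ (S / 2) := by
    rw [← hsqrtQ, ← Real.sqrt_mul (div_pos hCN hcD).le, ← Real.sqrt_sq hRnn]
    exact Real.sqrt_le_sqrt hub
  have hdown : Real.sqrt (cN / CD) * Qf lam ^ (S / 2)
      ≤ ‖(∏ i ∈ Icc 1 N, Complex.Gamma (a i + Complex.I * lam)) /
        (∏ i ∈ Icc 1 N, Complex.Gamma (b i + Complex.I * lam))‖ := by
    rw [← hsqrtQ, ← Real.sqrt_mul (div_pos hcN hCD).le, ← Real.sqrt_sq hRnn]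
    exact Real.sqrt_le_sqrt hlb
  have hQf_eq : Qf lam = 1 + lam ^ 2 := rfl
  constructor
  · have hinv : (max (Real.sqrt (CN / cD)) (Real.sqrt (cN / CD))⁻¹)⁻¹
        ≤ Real.sqrt (cN / CD) := by
      have h' := inv_anti₀ (inv_pos.mpr hC2)
        (le_max_right (Real.sqrt (CN / cD)) (Real.sqrt (cN / CD))⁻¹)
      rwa [inv_inv] at h'
    calc (max (Real.sqrt (CN / cD)) (Real.sqrt (cN / CD))⁻¹)⁻¹
          * (1 + lam ^ 2) ^ (S / 2)
        ≤ Real.sqrt (cN / CD) * (1 + lam ^ 2) ^ (S / 2) := by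
          apply mul_le_mul_of_nonneg_right hinv
          rw [← hQf_eq]
          exact hQhalf.le
      _ ≤ _ := by
          rw [← hQf_eq]
          exact hdown
  · calc ‖(∏ i ∈ Icc 1 N, Complex.Gamma (a i + Complex.I * lam)) /
          (∏ i ∈ Icc 1 N, Complex.Gamma (b i + Complex.I * lam))‖
        ≤ Real.sqrt (CN / cD) * Qf lam ^ (S / 2) := hup
      _ ≤ max (Real.sqrt (CN / cD)) (Real.sqrt (cN / CD))⁻¹ * (1 + lam ^ 2) ^ (S / 2) := by
          rw [← hQf_eq]
          exact mul_le_mul_of_nonneg_right (le_max_left _ _) hQhalf.le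
end

section
/- Let γ > 0 with 2/γ not an integer, and write 2/γ = k + δ with k = ⌊2/γ⌋ and δ ∈ (0,1). For a nonnegative measurable function u₀ on (0,∞) define v₀(x) = (1/(x^δ Γ(δ))) ∫_x^∞ (1 − x/y)^{δ−1} y^{δ−1} u₀(y) dy (with values in [0,∞]). Then there exists a constant C > 0, depending only on γ, such that for every integer m ≥ 0: ∫₀^∞ x^{m + 2/γ} v₀(x)² dx ≤ C ∫₀^∞ x^{m + 2/γ} u₀(x)² dx, and consequently ∫₀^∞ e^{x} x^{2/γ} v₀(x)² dx ≤ C ∫₀^∞ e^{x} x^{2/γ} u₀(x)² dx (all integrals taken in [0,∞]). -/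
open MeasureTheory Set ENNReal

section Helpers

/-- Affine change of variables for lower Lebesgue integrals on `ℝ`. -/
lemma lintegral_affine (p q : ℝ) (hq : q ≠ 0) (f : ℝ → ℝ≥0∞) (hf : Measurable f)
    (s : Set ℝ) (hs : MeasurableSet s) :
    ∫⁻ y in s, f y = ENNReal.ofReal |q| * ∫⁻ t in (fun t => p + q * t) ⁻¹' s, f (p + q * t) := by
  have hg : Measurable (fun t : ℝ => p + q * t) :=
    (measurable_const_mul q).const_add p
  have hmap : Measure.map (fun t : ℝ => p + q * t) volume
      = ENNReal.ofReal |q⁻¹| • volume := by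
    have h1 : (fun t : ℝ => p + q * t) = (fun y : ℝ => p + y) ∘ (fun t : ℝ => q * t) := rfl
    rw [h1, ← Measure.map_map (measurable_const_add p) (measurable_const_mul q),
      Real.map_volume_mul_left hq, Measure.map_smul, map_add_left_eq_self]
  have hvol : (volume : Measure ℝ).restrict s
      = ENNReal.ofReal |q| • Measure.map (fun t : ℝ => p + q * t)
          (volume.restrict ((fun t => p + q * t) ⁻¹' s)) := by
    rw [← Measure.restrict_map hg hs, hmap, Measure.restrict_smul, smul_smul,
      ← ENNReal.ofReal_mul (abs_nonneg q), ← abs_mul, mul_inv_cancel₀ hq, abs_one,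
      ENNReal.ofReal_one, one_smul]
  rw [hvol, lintegral_smul_measure, lintegral_map hf hg, smul_eq_mul]

lemma lintegral_scale (c : ℝ) (hc : 0 < c) (f : ℝ → ℝ≥0∞) (hf : Measurable f)
    (s : Set ℝ) (hs : MeasurableSet s) :
    ∫⁻ y in s, f y = ENNReal.ofReal c * ∫⁻ t in (fun t => c * t) ⁻¹' s, f (c * t) := by
  have h := lintegral_affine 0 c hc.ne' f hf s hs
  simp only [zero_add] at h
  rwa [abs_of_pos hc] at h

lemma lintegral_translate (p : ℝ) (f : ℝ → ℝ≥0∞) (hf : Measurable f)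
    (s : Set ℝ) (hs : MeasurableSet s) :
    ∫⁻ y in s, f y = ∫⁻ t in (fun t => p + t) ⁻¹' s, f (p + t) := by
  have h := lintegral_affine p 1 one_ne_zero f hf s hs
  simpa only [one_mul, abs_one, ENNReal.ofReal_one] using h

lemma lintegral_reflect (f : ℝ → ℝ≥0∞) (hf : Measurable f)
    (s : Set ℝ) (hs : MeasurableSet s) :
    ∫⁻ y in s, f y = ∫⁻ t in (fun t => 1 - t) ⁻¹' s, f (1 - t) := by
  have h := lintegral_affine 1 (-1) (by norm_num) f hf s hs
  simpa only [neg_one_mul, ← sub_eq_add_neg, abs_neg, abs_one, ENNReal.ofReal_one,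
    one_mul] using h

lemma sq_rpow_half (x : ℝ≥0∞) : (x ^ (2⁻¹ : ℝ)) ^ (2 : ℕ) = x := by
  rw [← ENNReal.rpow_natCast (x ^ (2⁻¹ : ℝ)) 2, ← ENNReal.rpow_mul]
  norm_num

/-- Cauchy–Schwarz for lower Lebesgue integrals. -/
lemma lintegral_CS {μ : Measure ℝ} (A B : ℝ → ℝ≥0∞)
    (hA : AEMeasurable A μ) (hB : AEMeasurable B μ) :
    (∫⁻ y, (A y * B y) ^ (2⁻¹ : ℝ) ∂μ) ^ (2 : ℕ) ≤ (∫⁻ y, A y ∂μ) * (∫⁻ y, B y ∂μ) := by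
  have h2 : (2 : ℝ).HolderConjugate 2 := Real.HolderConjugate.two_two
  have hh : ∫⁻ y, ((fun y => A y ^ (2⁻¹ : ℝ)) * fun y => B y ^ (2⁻¹ : ℝ)) y ∂μ
      ≤ (∫⁻ y, (A y ^ (2⁻¹ : ℝ)) ^ (2:ℝ) ∂μ) ^ (1/(2:ℝ))
        * (∫⁻ y, (B y ^ (2⁻¹ : ℝ)) ^ (2:ℝ) ∂μ) ^ (1/(2:ℝ)) :=
    ENNReal.lintegral_mul_le_Lp_mul_Lq μ h2 (hA.pow_const _) (hB.pow_const _)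
  have hsimp : ∀ x : ℝ≥0∞, (x ^ (2⁻¹ : ℝ)) ^ (2:ℝ) = x := by
    intro x; rw [← ENNReal.rpow_mul]; norm_num
  simp only [Pi.mul_apply, hsimp] at hh
  have heq : ∀ y, (A y * B y) ^ (2⁻¹ : ℝ) = A y ^ (2⁻¹ : ℝ) * B y ^ (2⁻¹ : ℝ) := fun y =>
    ENNReal.mul_rpow_of_nonneg _ _ (by norm_num)
  calc (∫⁻ y, (A y * B y) ^ (2⁻¹ : ℝ) ∂μ) ^ (2:ℕ)
      = (∫⁻ y, A y ^ (2⁻¹ : ℝ) * B y ^ (2⁻¹ : ℝ) ∂μ) ^ (2:ℕ) := by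
        congr 1; exact lintegral_congr heq
    _ ≤ ((∫⁻ y, A y ∂μ) ^ (1/(2:ℝ)) * (∫⁻ y, B y ∂μ) ^ (1/(2:ℝ))) ^ (2:ℕ) :=
        pow_le_pow_left' hh 2
    _ = (∫⁻ y, A y ∂μ) * (∫⁻ y, B y ∂μ) := by
        rw [mul_pow]
        rw [show (1/(2:ℝ)) = (2⁻¹ : ℝ) by norm_num, sq_rpow_half, sq_rpow_half]

lemma indicator_lt_eq (F : ℝ → ℝ → ℝ≥0∞) :
    ∀ x y : ℝ, (Ioi x).indicator (F x) y
      = ({p : ℝ × ℝ | p.1 < p.2}.indicator (Function.uncurry F)) (x, y) := by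
  intro x y
  by_cases h : x < y
  · rw [indicator_of_mem (by exact h) (F x), indicator_of_mem (by exact h)]
    rfl
  · rw [indicator_of_notMem (by exact h) (F x), indicator_of_notMem (by exact h)]

lemma meas_inner_integral (F : ℝ → ℝ → ℝ≥0∞) (hF : Measurable (Function.uncurry F)) :
    Measurable (fun x => ∫⁻ y in Ioi x, F x y) := by
  have h : (fun x => ∫⁻ y in Ioi x, F x y)
      = fun x => ∫⁻ y, ({p : ℝ × ℝ | p.1 < p.2}.indicator (Function.uncurry F)) (x, y) := by
    funext x
    rw [← lintegral_indicator measurableSet_Ioi]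
    exact lintegral_congr fun y => (indicator_lt_eq F x y)
  rw [h]
  exact Measurable.lintegral_prod_right'
    (hF.indicator (measurableSet_lt measurable_fst measurable_snd))

/-- Tonelli for the triangular region `0 < x < y`. -/
lemma swap_kernel (F : ℝ → ℝ → ℝ≥0∞) (hF : Measurable (Function.uncurry F)) :
    ∫⁻ x in Ioi (0:ℝ), ∫⁻ y in Ioi x, F x y = ∫⁻ y in Ioi (0:ℝ), ∫⁻ x in Ioo 0 y, F x y := by
  have hind : Measurable (Function.uncurry fun x y => (Ioi x).indicator (F x) y) := by
    have : (Function.uncurry fun x y => (Ioi x).indicator (F x) y)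
        = {p : ℝ × ℝ | p.1 < p.2}.indicator (Function.uncurry F) := by
      funext p
      exact indicator_lt_eq F p.1 p.2
    rw [this]
    exact hF.indicator (measurableSet_lt measurable_fst measurable_snd)
  have h1 : ∫⁻ x in Ioi (0:ℝ), ∫⁻ y in Ioi x, F x y
      = ∫⁻ x in Ioi (0:ℝ), ∫⁻ y in Ioi (0:ℝ), (Ioi x).indicator (F x) y := by
    refine setLIntegral_congr_fun measurableSet_Ioi (fun x hx => ?_)
    rw [lintegral_indicator measurableSet_Ioi, Measure.restrict_restrict measurableSet_Ioi,
      Ioi_inter_Ioi, max_eq_left (le_of_lt hx)]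
  have h2 : ∫⁻ x in Ioi (0:ℝ), ∫⁻ y in Ioi (0:ℝ), (Ioi x).indicator (F x) y
      = ∫⁻ y in Ioi (0:ℝ), ∫⁻ x in Ioi (0:ℝ), (Ioi x).indicator (F x) y :=
    lintegral_lintegral_swap hind.aemeasurable
  have h3 : ∫⁻ y in Ioi (0:ℝ), ∫⁻ x in Ioi (0:ℝ), (Ioi x).indicator (F x) y
      = ∫⁻ y in Ioi (0:ℝ), ∫⁻ x in Ioo 0 y, F x y := by
    refine setLIntegral_congr_fun measurableSet_Ioi (fun y hy => ?_)
    have : ∀ x : ℝ, (Ioi x).indicator (F x) y = (Iio y).indicator (fun x => F x y) x := by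
      intro x
      by_cases h : x < y
      · rw [indicator_of_mem (by exact h) (F x), indicator_of_mem (by exact h)]
      · rw [indicator_of_notMem (by exact h) (F x), indicator_of_notMem (by exact h)]
    rw [lintegral_congr this, lintegral_indicator measurableSet_Iio,
      Measure.restrict_restrict measurableSet_Iio]
    congr 1
    rw [inter_comm, Ioi_inter_Iio]
  rw [h1, h2, h3]

lemma ioc_rpow_fin (r b : ℝ) (hr : -1 < r) (hb : 0 < b) :
    ∫⁻ s in Ioc (0:ℝ) b, ENNReal.ofReal (s ^ r) < ⊤ := by
  have h : IntegrableOn (fun s : ℝ => s ^ r) (Ioc 0 b) := by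
    have h2 := intervalIntegral.intervalIntegrable_rpow' (a := 0) (b := b) hr
    rwa [intervalIntegrable_iff_integrableOn_Ioc_of_le hb.le] at h2
  exact h.setLIntegral_lt_top

lemma A_fin (δ β : ℝ) (hδ0 : 0 < δ) (hδ1 : δ < 1) (hβδ : β + δ < 0) :
    (∫⁻ t in Ioi (1:ℝ), ENNReal.ofReal ((t - 1) ^ (δ - 1) * t ^ β)) < ⊤ := by
  have hβ : β < 0 := by linarith
  have hsplit : Ioi (1:ℝ) = Ioc 1 2 ∪ Ioi 2 := (Ioc_union_Ioi_eq_Ioi (by norm_num)).symm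
  rw [hsplit, lintegral_union measurableSet_Ioi (Ioc_disjoint_Ioi le_rfl)]
  refine ENNReal.add_lt_top.mpr ⟨?_, ?_⟩
  · -- near 1
    have hmono : ∫⁻ t in Ioc (1:ℝ) 2, ENNReal.ofReal ((t - 1) ^ (δ - 1) * t ^ β)
        ≤ ∫⁻ t in Ioc (1:ℝ) 2, ENNReal.ofReal ((t - 1) ^ (δ - 1)) := by
      refine setLIntegral_mono ((measurable_id.sub_const 1).pow_const _).ennreal_ofReal
        fun t ht => ?_
      refine ENNReal.ofReal_le_ofReal ?_
      have h1 : t ^ β ≤ 1 := Real.rpow_le_one_of_one_le_of_nonpos ht.1.le hβ.le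
      calc (t - 1) ^ (δ - 1) * t ^ β ≤ (t - 1) ^ (δ - 1) * 1 :=
            mul_le_mul_of_nonneg_left h1 (Real.rpow_nonneg (by linarith [ht.1]) _)
        _ = (t - 1) ^ (δ - 1) := mul_one _
    refine lt_of_le_of_lt hmono ?_
    rw [lintegral_translate 1 (fun t => ENNReal.ofReal ((t - 1) ^ (δ - 1)))
      (((measurable_id'.sub_const 1).pow_const _).ennreal_ofReal) _ measurableSet_Ioc]
    have hpre : (fun t : ℝ => 1 + t) ⁻¹' Ioc 1 2 = Ioc 0 1 := by
      ext s; simp only [mem_preimage, mem_Ioc]; constructor <;> intro h <;>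
        exact ⟨by linarith [h.1], by linarith [h.2]⟩
    rw [hpre]
    have hcong : ∫⁻ s in Ioc (0:ℝ) 1, ENNReal.ofReal ((1 + s - 1) ^ (δ - 1))
        = ∫⁻ s in Ioc (0:ℝ) 1, ENNReal.ofReal (s ^ (δ - 1)) := by
      refine setLIntegral_congr_fun measurableSet_Ioc (fun s _ => ?_)
      norm_num
    rw [hcong]
    exact ioc_rpow_fin _ _ (by linarith) one_pos
  · -- tail
    have hmono : ∫⁻ t in Ioi (2:ℝ), ENNReal.ofReal ((t - 1) ^ (δ - 1) * t ^ β)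
        ≤ ∫⁻ t in Ioi (2:ℝ), ENNReal.ofReal ((2:ℝ) ^ (1 - δ) * t ^ (β + δ - 1)) := by
      refine setLIntegral_mono ((measurable_id.pow_const _).const_mul _).ennreal_ofReal
        fun t ht => ?_
      have ht2 : (2:ℝ) < t := ht
      have htpos : (0:ℝ) < t := by linarith
      refine ENNReal.ofReal_le_ofReal ?_
      have h1 : (t - 1) ^ (δ - 1) ≤ (t / 2) ^ (δ - 1) :=
        Real.rpow_le_rpow_of_nonpos (by linarith) (by linarith) (by linarith)
      have h2 : (t / 2) ^ (δ - 1) * t ^ β = (2:ℝ) ^ (1 - δ) * t ^ (β + δ - 1) := by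
        rw [Real.div_rpow htpos.le (by norm_num), div_mul_eq_mul_div,
          ← Real.rpow_add htpos, show (1:ℝ) - δ = -(δ - 1) by ring,
          Real.rpow_neg (by norm_num : (0:ℝ) ≤ 2)]
        rw [div_eq_inv_mul]
        congr 1
        congr 1
        ring
      calc (t - 1) ^ (δ - 1) * t ^ β ≤ (t / 2) ^ (δ - 1) * t ^ β :=
            mul_le_mul_of_nonneg_right h1 (Real.rpow_nonneg htpos.le _)
        _ = (2:ℝ) ^ (1 - δ) * t ^ (β + δ - 1) := h2
    refine lt_of_le_of_lt hmono ?_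
    have hint : IntegrableOn (fun t : ℝ => (2:ℝ) ^ (1 - δ) * t ^ (β + δ - 1)) (Ioi 2) :=
      (integrableOn_Ioi_rpow_of_lt (by linarith) (by norm_num)).const_mul _
    exact hint.setLIntegral_lt_top

lemma D_fin (δ c : ℝ) (hδ0 : 0 < δ) (hδ1 : δ < 1) (hc : -1 < c) :
    (∫⁻ t in Ioo (0:ℝ) 1, ENNReal.ofReal (t ^ c * (1 - t) ^ (δ - 1))) < ⊤ := by
  have hsplit : Ioo (0:ℝ) 1 = Ioo 0 (1/2) ∪ Ico (1/2) 1 :=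
    (Ioo_union_Ico_eq_Ioo (by norm_num) (by norm_num)).symm
  rw [hsplit, lintegral_union measurableSet_Ico
    (Set.disjoint_left.mpr fun t ht ht' => absurd ht.2 (not_lt.mpr ht'.1))]
  refine ENNReal.add_lt_top.mpr ⟨?_, ?_⟩
  · -- near 0
    have hmono : ∫⁻ t in Ioo (0:ℝ) (1/2), ENNReal.ofReal (t ^ c * (1 - t) ^ (δ - 1))
        ≤ ∫⁻ t in Ioo (0:ℝ) (1/2), ENNReal.ofReal ((1/2 : ℝ) ^ (δ - 1) * t ^ c) := by
      refine setLIntegral_mono ((measurable_id.pow_const _).const_mul _).ennreal_ofReal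
        fun t ht => ?_
      refine ENNReal.ofReal_le_ofReal ?_
      have h1 : (1 - t) ^ (δ - 1) ≤ (1/2 : ℝ) ^ (δ - 1) :=
        Real.rpow_le_rpow_of_nonpos (by norm_num) (by linarith [ht.2]) (by linarith)
      calc t ^ c * (1 - t) ^ (δ - 1) ≤ t ^ c * (1/2 : ℝ) ^ (δ - 1) :=
            mul_le_mul_of_nonneg_left h1 (Real.rpow_nonneg ht.1.le _)
        _ = (1/2 : ℝ) ^ (δ - 1) * t ^ c := mul_comm _ _
    refine lt_of_le_of_lt hmono ?_
    have hint : IntegrableOn (fun t : ℝ => (1/2 : ℝ) ^ (δ - 1) * t ^ c) (Ioo 0 (1/2)) := by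
      refine Integrable.const_mul ?_ _
      have h2 := intervalIntegral.intervalIntegrable_rpow' (a := 0) (b := 1/2) hc
      rw [intervalIntegrable_iff_integrableOn_Ioc_of_le (by norm_num)] at h2
      exact h2.mono_set Ioo_subset_Ioc_self
    exact hint.setLIntegral_lt_top
  · -- near 1
    set M : ℝ := max 1 ((1/2 : ℝ) ^ c) with hM
    have hM0 : 0 ≤ M := le_max_of_le_left zero_le_one
    have hmono : ∫⁻ t in Ico (1/2 : ℝ) 1, ENNReal.ofReal (t ^ c * (1 - t) ^ (δ - 1))
        ≤ ∫⁻ t in Ico (1/2 : ℝ) 1, ENNReal.ofReal (M * (1 - t) ^ (δ - 1)) := by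
      refine setLIntegral_mono
        (((measurable_const.sub measurable_id).pow_const _).const_mul _).ennreal_ofReal
        fun t ht => ?_
      refine ENNReal.ofReal_le_ofReal ?_
      have htpos : (0:ℝ) < t := lt_of_lt_of_le (by norm_num) ht.1
      have h1 : t ^ c ≤ M := by
        rcases le_or_gt 0 c with hc0 | hc0
        · refine le_max_of_le_left ?_
          calc t ^ c ≤ 1 ^ c := Real.rpow_le_rpow htpos.le ht.2.le hc0
            _ = 1 := Real.one_rpow c
        · exact le_max_of_le_right
            (Real.rpow_le_rpow_of_nonpos (by norm_num) ht.1 hc0.le)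
      exact mul_le_mul_of_nonneg_right h1 (Real.rpow_nonneg (by linarith [ht.2]) _)
    refine lt_of_le_of_lt hmono ?_
    have hfac : ∀ t : ℝ, ENNReal.ofReal (M * (1 - t) ^ (δ - 1))
        = ENNReal.ofReal M * ENNReal.ofReal ((1 - t) ^ (δ - 1)) := fun t =>
      ENNReal.ofReal_mul hM0
    simp only [hfac]
    rw [lintegral_const_mul' _ _ ENNReal.ofReal_ne_top]
    refine ENNReal.mul_lt_top ENNReal.ofReal_lt_top ?_
    rw [lintegral_reflect (fun t => ENNReal.ofReal ((1 - t) ^ (δ - 1)))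
      (((measurable_const.sub measurable_id').pow_const _).ennreal_ofReal) _ measurableSet_Ico]
    have hpre : (fun t : ℝ => 1 - t) ⁻¹' Ico (1/2 : ℝ) 1 = Ioc 0 (1/2) := by
      ext s; simp only [mem_preimage, mem_Ico, mem_Ioc]; constructor <;> intro h <;>
        exact ⟨by linarith [h.1, h.2], by linarith [h.1, h.2]⟩
    rw [hpre]
    have hcong : ∫⁻ s in Ioc (0:ℝ) (1/2), ENNReal.ofReal ((1 - (1 - s)) ^ (δ - 1))
        = ∫⁻ s in Ioc (0:ℝ) (1/2), ENNReal.ofReal (s ^ (δ - 1)) := by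
      refine setLIntegral_congr_fun measurableSet_Ioc (fun s _ => ?_)
      norm_num
    rw [hcong]
    exact ioc_rpow_fin _ _ (by linarith) (by norm_num)

end Helpers

section Schur

/-- The main Schur-test bound, uniform in `m`. -/
lemma schur_bound (δ β a₀ : ℝ) (hδ0 : 0 < δ) (hδ1 : δ < 1) (hβδ : β + δ < 0)
    (hc : -1 < a₀ + β - δ) (ha₀ : 0 < a₀)
    (hA : (∫⁻ t in Ioi (1:ℝ), ENNReal.ofReal ((t - 1) ^ (δ - 1) * t ^ β)) ≠ ⊤)
    (hD : (∫⁻ t in Ioo (0:ℝ) 1, ENNReal.ofReal (t ^ (a₀ + β - δ) * (1 - t) ^ (δ - 1))) ≠ ⊤)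
    (u : ℝ → ℝ≥0∞) (hu : Measurable u) (m : ℕ) :
    ∫⁻ x in Ioi (0:ℝ), ENNReal.ofReal (x ^ ((m:ℝ) + a₀)) *
        (ENNReal.ofReal (x ^ (-δ)) * ∫⁻ y in Ioi x, ENNReal.ofReal ((y - x) ^ (δ - 1)) * u y) ^ 2
      ≤ (∫⁻ t in Ioi (1:ℝ), ENNReal.ofReal ((t - 1) ^ (δ - 1) * t ^ β)) *
        (∫⁻ t in Ioo (0:ℝ) 1, ENNReal.ofReal (t ^ (a₀ + β - δ) * (1 - t) ^ (δ - 1))) *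
        ∫⁻ x in Ioi (0:ℝ), ENNReal.ofReal (x ^ ((m:ℝ) + a₀)) * (u x) ^ 2 := by
  set A := ∫⁻ t in Ioi (1:ℝ), ENNReal.ofReal ((t - 1) ^ (δ - 1) * t ^ β) with hAdef
  set D := ∫⁻ t in Ioo (0:ℝ) 1, ENNReal.ofReal (t ^ (a₀ + β - δ) * (1 - t) ^ (δ - 1)) with hDdef
  set e : ℝ := (m:ℝ) + a₀ + β - δ with he
  set F : ℝ → ℝ → ℝ≥0∞ := fun x y =>
    (ENNReal.ofReal (x ^ e) * ENNReal.ofReal ((y - x) ^ (δ - 1) * y ^ (-β))) * (u y) ^ 2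
    with hFdef
  have hFmeas : Measurable (Function.uncurry F) := by
    apply Measurable.mul
    · refine Measurable.mul (f := fun a : ℝ × ℝ => ENNReal.ofReal (a.1 ^ e))
        (g := fun a : ℝ × ℝ => ENNReal.ofReal ((a.2 - a.1) ^ (δ - 1) * a.2 ^ (-β))) ?_ ?_
      · exact ((measurable_fst.pow_const e)).ennreal_ofReal
      · exact (((measurable_snd.sub measurable_fst).pow_const _).mul
          (measurable_snd.pow_const _)).ennreal_ofReal
    · exact (hu.comp measurable_snd).pow_const 2
  -- Step 1: pointwise Cauchy-Schwarz bound
  have step1 : ∀ x ∈ Ioi (0:ℝ),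
      ENNReal.ofReal (x ^ ((m:ℝ) + a₀)) *
        (ENNReal.ofReal (x ^ (-δ)) * ∫⁻ y in Ioi x, ENNReal.ofReal ((y - x) ^ (δ - 1)) * u y) ^ 2
      ≤ A * ∫⁻ y in Ioi x, F x y := by
    intro x hx
    have hx0 : (0:ℝ) < x := hx
    set P : ℝ → ℝ≥0∞ := fun y => ENNReal.ofReal ((y - x) ^ (δ - 1) * y ^ β) with hP
    set Q : ℝ → ℝ≥0∞ := fun y => ENNReal.ofReal ((y - x) ^ (δ - 1) * y ^ (-β)) * (u y) ^ 2
      with hQ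
    set I := ∫⁻ y in Ioi x, ENNReal.ofReal ((y - x) ^ (δ - 1)) * u y with hI
    set J := ∫⁻ y in Ioi x, Q y with hJ
    -- Cauchy–Schwarz
    have hCS : I ^ 2 ≤ (∫⁻ y in Ioi x, P y) * J := by
      have hIeq : I = ∫⁻ y in Ioi x, (P y * Q y) ^ (2⁻¹ : ℝ) := by
        refine setLIntegral_congr_fun measurableSet_Ioi (fun y hy => ?_)
        have hxy : x < y := hy
        have hy0 : (0:ℝ) < y := lt_trans hx0 hxy
        have hyx0 : (0:ℝ) ≤ (y - x) ^ (δ - 1) := Real.rpow_nonneg (by linarith) _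
        have hPQ : P y * Q y = (ENNReal.ofReal ((y - x) ^ (δ - 1)) * u y) ^ 2 := by
          rw [hP, hQ]
          rw [← mul_assoc, ← ENNReal.ofReal_mul (by positivity)]
          have : (y - x) ^ (δ - 1) * y ^ β * ((y - x) ^ (δ - 1) * y ^ (-β))
              = ((y - x) ^ (δ - 1)) ^ 2 := by
            have hyβ : y ^ β * y ^ (-β) = 1 := by
              rw [← Real.rpow_add hy0]; simp
            calc (y - x) ^ (δ - 1) * y ^ β * ((y - x) ^ (δ - 1) * y ^ (-β))
                = ((y - x) ^ (δ - 1) * (y - x) ^ (δ - 1)) * (y ^ β * y ^ (-β)) := by ring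
              _ = ((y - x) ^ (δ - 1)) ^ 2 := by rw [hyβ, mul_one, sq]
          rw [this, ENNReal.ofReal_pow hyx0, mul_pow]
        rw [hPQ, ← ENNReal.rpow_natCast _ 2, ← ENNReal.rpow_mul]
        norm_num
      rw [hIeq]
      exact lintegral_CS P Q
        ((((measurable_id.sub_const x).pow_const _).mul
          (measurable_id.pow_const _)).ennreal_ofReal).aemeasurable
        (((((measurable_id.sub_const x).pow_const _).mul
          (measurable_id.pow_const _)).ennreal_ofReal).mul (hu.pow_const 2)).aemeasurable
    -- scaling identity for ∫ P
    have hPscale : (∫⁻ y in Ioi x, P y) = ENNReal.ofReal (x ^ (β + δ)) * A := by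
      rw [lintegral_scale x hx0 P
        ((((measurable_id.sub_const x).pow_const _).mul
          (measurable_id.pow_const _)).ennreal_ofReal) _ measurableSet_Ioi]
      have hpre : (fun t : ℝ => x * t) ⁻¹' Ioi x = Ioi 1 := by
        ext t; simp only [mem_preimage, mem_Ioi]
        exact (lt_mul_iff_one_lt_right hx0)
      rw [hpre]
      have hcong : ∫⁻ t in Ioi (1:ℝ), P (x * t)
          = ∫⁻ t in Ioi (1:ℝ),
              ENNReal.ofReal (x ^ (δ - 1 + β)) * ENNReal.ofReal ((t - 1) ^ (δ - 1) * t ^ β) := by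
        refine setLIntegral_congr_fun measurableSet_Ioi (fun t ht => ?_)
        have ht1 : (1:ℝ) < t := ht
        have h1 : x * t - x = x * (t - 1) := by ring
        simp only [hP]
        rw [h1, Real.mul_rpow hx0.le (by linarith), Real.mul_rpow hx0.le (by linarith),
          ← ENNReal.ofReal_mul (by positivity)]
        congr 1
        rw [Real.rpow_add hx0]
        ring
      rw [hcong, lintegral_const_mul' _ _ ENNReal.ofReal_ne_top, ← hAdef, ← mul_assoc,
        ← ENNReal.ofReal_mul hx0.le]
      congr 2
      have hh := Real.rpow_add hx0 1 (δ - 1 + β)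
      rw [Real.rpow_one] at hh
      rw [← hh]
      congr 1
      ring
    -- combine
    have hFsplit : (∫⁻ y in Ioi x, F x y) = ENNReal.ofReal (x ^ e) * J := by
      have : ∀ y : ℝ, F x y = ENNReal.ofReal (x ^ e) * Q y := by
        intro y; simp only [hFdef, hQ]; ring
      rw [lintegral_congr this]
      exact lintegral_const_mul' _ _ ENNReal.ofReal_ne_top
    have hexp : ENNReal.ofReal (x ^ ((m:ℝ) + a₀)) * (ENNReal.ofReal (x ^ (-δ))) ^ 2 *
        ENNReal.ofReal (x ^ (β + δ)) = ENNReal.ofReal (x ^ e) := by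
      rw [← ENNReal.ofReal_pow (Real.rpow_nonneg hx0.le _),
        ← ENNReal.ofReal_mul (Real.rpow_nonneg hx0.le _),
        ← ENNReal.ofReal_mul (by positivity)]
      congr 1
      rw [← Real.rpow_natCast (x ^ (-δ)) 2, ← Real.rpow_mul hx0.le,
        ← Real.rpow_add hx0, ← Real.rpow_add hx0]
      congr 1
      push_cast
      ring
    calc ENNReal.ofReal (x ^ ((m:ℝ) + a₀)) * (ENNReal.ofReal (x ^ (-δ)) * I) ^ 2
        = ENNReal.ofReal (x ^ ((m:ℝ) + a₀)) * (ENNReal.ofReal (x ^ (-δ))) ^ 2 * I ^ 2 := by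
          rw [mul_pow]; ring
      _ ≤ ENNReal.ofReal (x ^ ((m:ℝ) + a₀)) * (ENNReal.ofReal (x ^ (-δ))) ^ 2 *
            ((∫⁻ y in Ioi x, P y) * J) := mul_le_mul_right hCS _
      _ = ENNReal.ofReal (x ^ ((m:ℝ) + a₀)) * (ENNReal.ofReal (x ^ (-δ))) ^ 2 *
            ENNReal.ofReal (x ^ (β + δ)) * (A * J) := by rw [hPscale]; ring
      _ = ENNReal.ofReal (x ^ e) * (A * J) := by rw [hexp]
      _ = A * (ENNReal.ofReal (x ^ e) * J) := by ring
      _ = A * ∫⁻ y in Ioi x, F x y := by rw [hFsplit]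
  -- Step 2: integrate the pointwise bound and swap
  have step2 : ∫⁻ x in Ioi (0:ℝ), ENNReal.ofReal (x ^ ((m:ℝ) + a₀)) *
        (ENNReal.ofReal (x ^ (-δ)) * ∫⁻ y in Ioi x, ENNReal.ofReal ((y - x) ^ (δ - 1)) * u y) ^ 2
      ≤ A * ∫⁻ y in Ioi (0:ℝ), ∫⁻ x in Ioo 0 y, F x y := by
    calc ∫⁻ x in Ioi (0:ℝ), ENNReal.ofReal (x ^ ((m:ℝ) + a₀)) *
          (ENNReal.ofReal (x ^ (-δ)) * ∫⁻ y in Ioi x, ENNReal.ofReal ((y - x) ^ (δ - 1)) * u y) ^ 2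
        ≤ ∫⁻ x in Ioi (0:ℝ), A * ∫⁻ y in Ioi x, F x y :=
          setLIntegral_mono ((meas_inner_integral F hFmeas).const_mul A) step1
      _ = A * ∫⁻ x in Ioi (0:ℝ), ∫⁻ y in Ioi x, F x y :=
          lintegral_const_mul' _ _ hA
      _ = A * ∫⁻ y in Ioi (0:ℝ), ∫⁻ x in Ioo 0 y, F x y := by rw [swap_kernel F hFmeas]
  -- Step 3: bound the inner integral
  have step3 : ∀ y ∈ Ioi (0:ℝ),
      (∫⁻ x in Ioo 0 y, F x y)
        ≤ D * (ENNReal.ofReal (y ^ ((m:ℝ) + a₀)) * (u y) ^ 2) := by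
    intro y hy
    have hy0 : (0:ℝ) < y := hy
    set c₀ : ℝ := a₀ + β - δ with hc₀
    have hsplit : (∫⁻ x in Ioo 0 y, F x y)
        = (∫⁻ x in Ioo 0 y,
            ENNReal.ofReal (x ^ e) * ENNReal.ofReal ((y - x) ^ (δ - 1) * y ^ (-β))) *
          (u y) ^ 2 := by
      simp only [hFdef]
      exact lintegral_mul_const _ (((measurable_id'.pow_const e).ennreal_ofReal).mul
        ((((measurable_const.sub measurable_id').pow_const _).mul
          measurable_const).ennreal_ofReal))
    have hpull : (∫⁻ x in Ioo 0 y,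
          ENNReal.ofReal (x ^ e) * ENNReal.ofReal ((y - x) ^ (δ - 1) * y ^ (-β)))
        = ENNReal.ofReal (y ^ (-β)) *
          ∫⁻ x in Ioo 0 y, ENNReal.ofReal (x ^ e * (y - x) ^ (δ - 1)) := by
      have hcong : ∀ x ∈ Ioo (0:ℝ) y,
          ENNReal.ofReal (x ^ e) * ENNReal.ofReal ((y - x) ^ (δ - 1) * y ^ (-β))
          = ENNReal.ofReal (y ^ (-β)) * ENNReal.ofReal (x ^ e * (y - x) ^ (δ - 1)) := by
        intro x hx
        rw [← ENNReal.ofReal_mul (Real.rpow_nonneg hx.1.le _),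
          ← ENNReal.ofReal_mul (Real.rpow_nonneg hy0.le _)]
        congr 1
        ring
      rw [setLIntegral_congr_fun measurableSet_Ioo hcong]
      exact lintegral_const_mul' _ _ ENNReal.ofReal_ne_top
    have hKbound : (∫⁻ x in Ioo 0 y, ENNReal.ofReal (x ^ e * (y - x) ^ (δ - 1)))
        ≤ ENNReal.ofReal (y ^ (m:ℝ)) *
          ∫⁻ x in Ioo 0 y, ENNReal.ofReal (x ^ c₀ * (y - x) ^ (δ - 1)) := by
      rw [← lintegral_const_mul' _ _ ENNReal.ofReal_ne_top]
      refine setLIntegral_mono ?_ ?_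
      · exact ((((measurable_id'.pow_const _).mul
          ((measurable_const.sub measurable_id').pow_const _)).ennreal_ofReal).const_mul _)
      · intro x hx
        have hx0 : (0:ℝ) < x := hx.1
        rw [← ENNReal.ofReal_mul (Real.rpow_nonneg hy0.le _)]
        refine ENNReal.ofReal_le_ofReal ?_
        have h1 : x ^ e = x ^ (m:ℝ) * x ^ c₀ := by
          rw [← Real.rpow_add hx0]; congr 1; rw [he, hc₀]; ring
        have h2 : x ^ (m:ℝ) ≤ y ^ (m:ℝ) :=
          Real.rpow_le_rpow hx0.le hx.2.le (Nat.cast_nonneg m)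
        calc x ^ e * (y - x) ^ (δ - 1) = x ^ (m:ℝ) * (x ^ c₀ * (y - x) ^ (δ - 1)) := by
              rw [h1]; ring
          _ ≤ y ^ (m:ℝ) * (x ^ c₀ * (y - x) ^ (δ - 1)) := by
              refine mul_le_mul_of_nonneg_right h2 ?_
              have : (0:ℝ) ≤ (y - x) ^ (δ - 1) := Real.rpow_nonneg (by linarith [hx.2]) _
              positivity
    have hKscale : (∫⁻ x in Ioo 0 y, ENNReal.ofReal (x ^ c₀ * (y - x) ^ (δ - 1)))
        = ENNReal.ofReal (y ^ (c₀ + δ)) * D := by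
      rw [lintegral_scale y hy0 (fun x => ENNReal.ofReal (x ^ c₀ * (y - x) ^ (δ - 1)))
        (((measurable_id'.pow_const _).mul
          ((measurable_const.sub measurable_id').pow_const _)).ennreal_ofReal) _
        measurableSet_Ioo]
      have hpre : (fun t : ℝ => y * t) ⁻¹' Ioo 0 y = Ioo 0 1 := by
        ext t; simp only [mem_preimage, mem_Ioo]
        constructor
        · rintro ⟨h1, h2⟩
          have ht0 : 0 < t := by
            by_contra hle
            push_neg at hle
            nlinarith
          exact ⟨ht0, by nlinarith⟩
        · rintro ⟨h1, h2⟩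
          exact ⟨by positivity, by nlinarith⟩
      rw [hpre]
      have hcong : ∫⁻ t in Ioo (0:ℝ) 1, ENNReal.ofReal ((y * t) ^ c₀ * (y - y * t) ^ (δ - 1))
          = ∫⁻ t in Ioo (0:ℝ) 1,
              ENNReal.ofReal (y ^ (c₀ + δ - 1)) *
                ENNReal.ofReal (t ^ c₀ * (1 - t) ^ (δ - 1)) := by
        refine setLIntegral_congr_fun measurableSet_Ioo (fun t ht => ?_)
        have h1 : y - y * t = y * (1 - t) := by ring
        rw [h1, Real.mul_rpow hy0.le ht.1.le, Real.mul_rpow hy0.le (by linarith [ht.2]),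
          ← ENNReal.ofReal_mul (by positivity)]
        congr 1
        have h2 : y ^ (c₀ + δ - 1) = y ^ c₀ * y ^ (δ - 1) := by
          rw [← Real.rpow_add hy0]; congr 1; ring
        rw [h2]
        ring
      rw [hcong, lintegral_const_mul' _ _ ENNReal.ofReal_ne_top, ← hDdef, ← mul_assoc,
        ← ENNReal.ofReal_mul hy0.le]
      congr 2
      have hh := Real.rpow_add hy0 1 (c₀ + δ - 1)
      rw [Real.rpow_one] at hh
      have hh2 : y ^ (c₀ + δ) = y ^ (1 + (c₀ + δ - 1)) := by congr 1; ring
      rw [hh2, hh]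
    calc (∫⁻ x in Ioo 0 y, F x y)
        = (∫⁻ x in Ioo 0 y,
            ENNReal.ofReal (x ^ e) * ENNReal.ofReal ((y - x) ^ (δ - 1) * y ^ (-β))) *
          (u y) ^ 2 := hsplit
      _ = ENNReal.ofReal (y ^ (-β)) *
            (∫⁻ x in Ioo 0 y, ENNReal.ofReal (x ^ e * (y - x) ^ (δ - 1))) * (u y) ^ 2 := by
          rw [hpull]
      _ ≤ ENNReal.ofReal (y ^ (-β)) *
            (ENNReal.ofReal (y ^ (m:ℝ)) *
              ∫⁻ x in Ioo 0 y, ENNReal.ofReal (x ^ c₀ * (y - x) ^ (δ - 1))) * (u y) ^ 2 := by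
          exact mul_le_mul_left (mul_le_mul_right hKbound _) _
      _ = ENNReal.ofReal (y ^ (-β)) *
            (ENNReal.ofReal (y ^ (m:ℝ)) * (ENNReal.ofReal (y ^ (c₀ + δ)) * D)) * (u y) ^ 2 := by
          rw [hKscale]
      _ = D * (ENNReal.ofReal (y ^ (-β)) * ENNReal.ofReal (y ^ (m:ℝ)) *
            ENNReal.ofReal (y ^ (c₀ + δ)) * (u y) ^ 2) := by ring
      _ = D * (ENNReal.ofReal (y ^ ((m:ℝ) + a₀)) * (u y) ^ 2) := by
          have hcomb : ENNReal.ofReal (y ^ (-β)) * ENNReal.ofReal (y ^ (m:ℝ)) *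
              ENNReal.ofReal (y ^ (c₀ + δ)) = ENNReal.ofReal (y ^ ((m:ℝ) + a₀)) := by
            rw [← ENNReal.ofReal_mul (Real.rpow_nonneg hy0.le _),
              ← ENNReal.ofReal_mul (by positivity), ← Real.rpow_add hy0, ← Real.rpow_add hy0]
            congr 1
            rw [hc₀]
            ring
          rw [← hcomb]
  -- put everything together
  calc ∫⁻ x in Ioi (0:ℝ), ENNReal.ofReal (x ^ ((m:ℝ) + a₀)) *
        (ENNReal.ofReal (x ^ (-δ)) * ∫⁻ y in Ioi x, ENNReal.ofReal ((y - x) ^ (δ - 1)) * u y) ^ 2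
      ≤ A * ∫⁻ y in Ioi (0:ℝ), ∫⁻ x in Ioo 0 y, F x y := step2
    _ ≤ A * ∫⁻ y in Ioi (0:ℝ), D * (ENNReal.ofReal (y ^ ((m:ℝ) + a₀)) * (u y) ^ 2) := by
        refine mul_le_mul_right ?_ _
        refine setLIntegral_mono (((measurable_id.pow_const _).ennreal_ofReal.mul
          (hu.pow_const 2)).const_mul D) step3
    _ = A * D * ∫⁻ y in Ioi (0:ℝ), ENNReal.ofReal (y ^ ((m:ℝ) + a₀)) * (u y) ^ 2 := by
        rw [lintegral_const_mul' _ _ hD, mul_assoc]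

end Schur

/-- The fractional-integral correction `u₀ ↦ v₀` is bounded on the weighted spaces
`L²(x^{m+2/γ} dx)` uniformly in `m`, hence also on `L²(e^x x^{2/γ})`. -/
theorem fractional_correction_weighted_bound (γ : ℝ) (hγ : 0 < γ)
    (hnotint : ∀ m : ℤ, 2/γ ≠ (m:ℝ))
    (k : ℤ) (hk : k = ⌊2/γ⌋) (δ : ℝ) (hδ : δ = 2/γ - (k:ℝ)) :
    ∃ C : ℝ, 0 < C ∧
      ∀ u₀ : ℝ → ℝ≥0∞, Measurable u₀ →
        ∀ v₀ : ℝ → ℝ≥0∞,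
          (∀ x : ℝ, v₀ x = ENNReal.ofReal (1 / (x ^ δ * Real.Gamma δ)) *
              ∫⁻ y in Ioi x, ENNReal.ofReal ((1 - x/y) ^ (δ - 1) * y ^ (δ - 1)) * u₀ y) →
          (∀ m : ℕ,
            ∫⁻ x in Ioi (0:ℝ), ENNReal.ofReal (x ^ ((m:ℝ) + 2/γ)) * (v₀ x) ^ 2 ≤
              ENNReal.ofReal C *
                ∫⁻ x in Ioi (0:ℝ), ENNReal.ofReal (x ^ ((m:ℝ) + 2/γ)) * (u₀ x) ^ 2) ∧
          ∫⁻ x in Ioi (0:ℝ), ENNReal.ofReal (Real.exp x * x ^ (2/γ)) * (v₀ x) ^ 2 ≤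
            ENNReal.ofReal C *
              ∫⁻ x in Ioi (0:ℝ), ENNReal.ofReal (Real.exp x * x ^ (2/γ)) * (u₀ x) ^ 2 := by
  have ha₀ : 0 < 2/γ := by positivity
  have hδ0 : 0 < δ := by
    have hne : 2/γ ≠ (k:ℝ) := hnotint k
    have hle : (k:ℝ) ≤ 2/γ := by rw [hk]; exact Int.floor_le _
    have hlt : (k:ℝ) < 2/γ := lt_of_le_of_ne hle (Ne.symm hne)
    rw [hδ]; linarith
  have hδ1 : δ < 1 := by
    have h := Int.lt_floor_add_one (2/γ)
    rw [hδ, hk]; linarith [h]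
  have hk0 : (0:ℝ) ≤ (k:ℝ) := by
    have hz : (0:ℤ) ≤ k := by rw [hk]; exact Int.floor_nonneg.mpr ha₀.le
    exact_mod_cast hz
  have hka : 2/γ = (k:ℝ) + δ := by rw [hδ]; ring
  set β : ℝ := -(1 + (k:ℝ) + δ)/2 with hβ
  have hβδ : β + δ < 0 := by rw [hβ]; linarith
  have hc : -1 < 2/γ + β - δ := by rw [hka, hβ]; linarith
  set A := ∫⁻ t in Ioi (1:ℝ), ENNReal.ofReal ((t - 1) ^ (δ - 1) * t ^ β) with hAdef
  set D := ∫⁻ t in Ioo (0:ℝ) 1, ENNReal.ofReal (t ^ (2/γ + β - δ) * (1 - t) ^ (δ - 1)) with hDdef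
  have hAfin : A < ⊤ := A_fin δ β hδ0 hδ1 hβδ
  have hDfin : D < ⊤ := D_fin δ (2/γ + β - δ) hδ0 hδ1 hc
  have hΓ : 0 < Real.Gamma δ := Real.Gamma_pos_of_pos hδ0
  set c₁ : ℝ≥0∞ := ENNReal.ofReal (1 / Real.Gamma δ) with hc₁
  set C : ℝ := (1/Real.Gamma δ)^2 * (A * D).toReal + 1 with hC
  have hCnn : 0 ≤ (1/Real.Gamma δ)^2 * (A * D).toReal :=
    mul_nonneg (sq_nonneg _) ENNReal.toReal_nonneg
  have hCpos : 0 < C := by rw [hC]; linarith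
  refine ⟨C, hCpos, ?_⟩
  intro u₀ hu₀ v₀ hv₀
  have hconst : c₁ ^ 2 * (A * D) ≤ ENNReal.ofReal C := by
    have hADne : A * D ≠ ⊤ := ENNReal.mul_ne_top hAfin.ne hDfin.ne
    have heq : c₁ ^ 2 * (A * D) = ENNReal.ofReal ((1/Real.Gamma δ)^2 * (A * D).toReal) := by
      rw [ENNReal.ofReal_mul (sq_nonneg _), ENNReal.ofReal_pow (by positivity),
        ENNReal.ofReal_toReal hADne, hc₁]
    rw [heq, hC]
    exact ENNReal.ofReal_le_ofReal (by linarith)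
  have hv₀' : ∀ x ∈ Ioi (0:ℝ), v₀ x = c₁ *
      (ENNReal.ofReal (x ^ (-δ)) * ∫⁻ y in Ioi x, ENNReal.ofReal ((y - x) ^ (δ - 1)) * u₀ y) := by
    intro x hx
    have hx0 : (0:ℝ) < x := hx
    rw [hv₀ x]
    have h1 : ENNReal.ofReal (1 / (x ^ δ * Real.Gamma δ)) = c₁ * ENNReal.ofReal (x ^ (-δ)) := by
      rw [hc₁, ← ENNReal.ofReal_mul (by positivity)]
      congr 1
      rw [Real.rpow_neg hx0.le]
      have hxδ : x ^ δ ≠ 0 := (Real.rpow_pos_of_pos hx0 δ).ne'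
      field_simp
    have h2 : ∫⁻ y in Ioi x, ENNReal.ofReal ((1 - x/y) ^ (δ - 1) * y ^ (δ - 1)) * u₀ y
        = ∫⁻ y in Ioi x, ENNReal.ofReal ((y - x) ^ (δ - 1)) * u₀ y := by
      refine setLIntegral_congr_fun measurableSet_Ioi (fun y hy => ?_)
      have hxy : x < y := hy
      have hy0 : (0:ℝ) < y := lt_trans hx0 hxy
      congr 1
      have h3 : 1 - x/y = (y - x)/y := by field_simp
      rw [h3, Real.div_rpow (by linarith) hy0.le,
        div_mul_cancel₀ _ (Real.rpow_pos_of_pos hy0 _).ne']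
    rw [h1, h2, mul_assoc]
  have hm : ∀ m : ℕ,
      ∫⁻ x in Ioi (0:ℝ), ENNReal.ofReal (x ^ ((m:ℝ) + 2/γ)) * (v₀ x) ^ 2 ≤
        ENNReal.ofReal C *
          ∫⁻ x in Ioi (0:ℝ), ENNReal.ofReal (x ^ ((m:ℝ) + 2/γ)) * (u₀ x) ^ 2 := by
    intro m
    have hLHS : ∫⁻ x in Ioi (0:ℝ), ENNReal.ofReal (x ^ ((m:ℝ) + 2/γ)) * (v₀ x) ^ 2
        = c₁ ^ 2 * ∫⁻ x in Ioi (0:ℝ), ENNReal.ofReal (x ^ ((m:ℝ) + 2/γ)) *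
            (ENNReal.ofReal (x ^ (-δ)) *
              ∫⁻ y in Ioi x, ENNReal.ofReal ((y - x) ^ (δ - 1)) * u₀ y) ^ 2 := by
      rw [← lintegral_const_mul' _ _ (ENNReal.pow_ne_top ENNReal.ofReal_ne_top)]
      refine setLIntegral_congr_fun measurableSet_Ioi (fun x hx => ?_)
      rw [hv₀' x hx, mul_pow]
      ring
    have hS := schur_bound δ β (2/γ) hδ0 hδ1 hβδ hc ha₀ hAfin.ne hDfin.ne u₀ hu₀ m
    calc ∫⁻ x in Ioi (0:ℝ), ENNReal.ofReal (x ^ ((m:ℝ) + 2/γ)) * (v₀ x) ^ 2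
        = c₁ ^ 2 * ∫⁻ x in Ioi (0:ℝ), ENNReal.ofReal (x ^ ((m:ℝ) + 2/γ)) *
            (ENNReal.ofReal (x ^ (-δ)) *
              ∫⁻ y in Ioi x, ENNReal.ofReal ((y - x) ^ (δ - 1)) * u₀ y) ^ 2 := hLHS
      _ ≤ c₁ ^ 2 * (A * D *
            ∫⁻ x in Ioi (0:ℝ), ENNReal.ofReal (x ^ ((m:ℝ) + 2/γ)) * (u₀ x) ^ 2) :=
          mul_le_mul_right hS _
      _ = (c₁ ^ 2 * (A * D)) *
            ∫⁻ x in Ioi (0:ℝ), ENNReal.ofReal (x ^ ((m:ℝ) + 2/γ)) * (u₀ x) ^ 2 := by ring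
      _ ≤ ENNReal.ofReal C *
            ∫⁻ x in Ioi (0:ℝ), ENNReal.ofReal (x ^ ((m:ℝ) + 2/γ)) * (u₀ x) ^ 2 :=
          mul_le_mul_left hconst _
  refine ⟨hm, ?_⟩
  -- measurability of v₀
  have hv₀meas : Measurable v₀ := by
    have hfun : v₀ = fun x => ENNReal.ofReal (1 / (x ^ δ * Real.Gamma δ)) *
        ∫⁻ y in Ioi x, ENNReal.ofReal ((1 - x/y) ^ (δ - 1) * y ^ (δ - 1)) * u₀ y := funext hv₀
    rw [hfun]
    refine Measurable.mul ?_ ?_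
    · exact (measurable_const.div ((measurable_id'.pow_const δ).mul_const _)).ennreal_ofReal
    · exact meas_inner_integral _
        (((((measurable_const.sub (measurable_fst.div measurable_snd)).pow_const _).mul
          (measurable_snd.pow_const _)).ennreal_ofReal).mul (hu₀.comp measurable_snd))
  -- series expansion of the exponential weight
  have hkey : ∀ w : ℝ → ℝ≥0∞, Measurable w →
      ∫⁻ x in Ioi (0:ℝ), ENNReal.ofReal (Real.exp x * x ^ (2/γ)) * w x
        = ∑' m : ℕ, ENNReal.ofReal (1 / (m.factorial : ℝ)) *
            ∫⁻ x in Ioi (0:ℝ), ENNReal.ofReal (x ^ ((m:ℝ) + 2/γ)) * w x := by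
    intro w hw
    have hpt : ∀ x ∈ Ioi (0:ℝ), ENNReal.ofReal (Real.exp x * x ^ (2/γ)) * w x
        = ∑' m : ℕ, ENNReal.ofReal (1 / (m.factorial : ℝ)) *
            (ENNReal.ofReal (x ^ ((m:ℝ) + 2/γ)) * w x) := by
      intro x hx
      have hx0 : (0:ℝ) < x := hx
      have hexp : Real.exp x = ∑' m : ℕ, x ^ m / (m.factorial : ℝ) := by
        rw [Real.exp_eq_exp_ℝ]
        exact congrFun NormedSpace.exp_eq_tsum_div x
      have h1 : Real.exp x * x ^ (2/γ) = ∑' m : ℕ, x ^ m / (m.factorial : ℝ) * x ^ (2/γ) := by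
        rw [hexp, ← tsum_mul_right]
      have hsum : Summable (fun m : ℕ => x ^ m / (m.factorial : ℝ) * x ^ (2/γ)) :=
        (Real.summable_pow_div_factorial x).mul_right _
      have h2 : ENNReal.ofReal (Real.exp x * x ^ (2/γ))
          = ∑' m : ℕ, ENNReal.ofReal (x ^ m / (m.factorial : ℝ) * x ^ (2/γ)) := by
        rw [h1]
        exact ENNReal.ofReal_tsum_of_nonneg (fun m => by positivity) hsum
      rw [h2, ← ENNReal.tsum_mul_right]
      refine tsum_congr fun m => ?_
      have h3 : x ^ m / (m.factorial : ℝ) * x ^ (2/γ)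
          = (1 / (m.factorial : ℝ)) * x ^ ((m:ℝ) + 2/γ) := by
        rw [Real.rpow_add hx0, Real.rpow_natCast]
        ring
      rw [h3, ENNReal.ofReal_mul (by positivity), mul_assoc]
    rw [setLIntegral_congr_fun measurableSet_Ioi hpt]
    rw [lintegral_tsum (f := fun (m : ℕ) (x : ℝ) => ENNReal.ofReal (1 / (m.factorial : ℝ)) *
        (ENNReal.ofReal (x ^ ((m:ℝ) + 2/γ)) * w x)) (fun m =>
      (((measurable_id'.pow_const _).ennreal_ofReal.mul hw).const_mul _).aemeasurable)]
    exact tsum_congr fun m => lintegral_const_mul' _ _ ENNReal.ofReal_ne_top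
  calc ∫⁻ x in Ioi (0:ℝ), ENNReal.ofReal (Real.exp x * x ^ (2/γ)) * (v₀ x) ^ 2
      = ∑' m : ℕ, ENNReal.ofReal (1 / (m.factorial : ℝ)) *
          ∫⁻ x in Ioi (0:ℝ), ENNReal.ofReal (x ^ ((m:ℝ) + 2/γ)) * (v₀ x) ^ 2 :=
        hkey _ (hv₀meas.pow_const 2)
    _ ≤ ∑' m : ℕ, ENNReal.ofReal (1 / (m.factorial : ℝ)) *
          (ENNReal.ofReal C *
            ∫⁻ x in Ioi (0:ℝ), ENNReal.ofReal (x ^ ((m:ℝ) + 2/γ)) * (u₀ x) ^ 2) :=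
        ENNReal.tsum_le_tsum fun m => mul_le_mul_right (hm m) _
    _ = ENNReal.ofReal C * ∑' m : ℕ, ENNReal.ofReal (1 / (m.factorial : ℝ)) *
          ∫⁻ x in Ioi (0:ℝ), ENNReal.ofReal (x ^ ((m:ℝ) + 2/γ)) * (u₀ x) ^ 2 := by
        rw [← ENNReal.tsum_mul_left]
        exact tsum_congr fun m => by ring
    _ = ENNReal.ofReal C *
          ∫⁻ x in Ioi (0:ℝ), ENNReal.ofReal (Real.exp x * x ^ (2/γ)) * (u₀ x) ^ 2 := by
        rw [hkey _ (hu₀.pow_const 2)]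
end

section
/- Let N ≥ 1 and let a₁,…,a_N, b₁,…,b_N be real numbers, all strictly greater than −1, with S = ∑_{i=1}^N (a_i − b_i) ≤ 0. Then there exists C > 0 such that for all real M ≥ 0 and all λ ∈ ℝ: |∏_{i=1}^N Γ(a_i + M + 1 + iλ) / Γ(b_i + M + 1 + iλ)| ≤ C (1 + λ²)^{S/2}, with C independent of M and λ. -/
open Finset
open Filter Real Topology

lemma loglin {y : ℝ} (hy : 0 ≤ y) : |Real.log (1 + y) - y| ≤ y ^ 2 := by
  have h1 : (0:ℝ) < 1 + y := by linarith
  have hub : Real.log (1 + y) ≤ y := by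
    have := Real.log_le_sub_one_of_pos h1; linarith
  have hlb : y - y ^ 2 ≤ Real.log (1 + y) := by
    have h2 : (0:ℝ) < (1 + y)⁻¹ := by positivity
    have := Real.log_le_sub_one_of_pos h2
    rw [Real.log_inv] at this
    have h3 : (1 + y)⁻¹ - 1 = -y / (1 + y) := by field_simp; ring
    have h5 : y / (1 + y) ≤ Real.log (1 + y) := by
      have h4 : -Real.log (1 + y) ≤ -y / (1 + y) := by rw [← h3]; exact this
      have := neg_le_neg h4
      simpa [neg_div] using this
    have h6 : y - y ^ 2 ≤ y / (1 + y) := by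
      rw [le_div_iff₀ h1]; nlinarith
    linarith
  rw [abs_le]; constructor <;> linarith

lemma basel (n : ℕ) : ∑ j ∈ range (n+1), (1:ℝ) / ((j:ℝ) + 1) ^ 2 ≤ 2 - 1/((n:ℝ)+1) := by
  induction n with
  | zero => norm_num
  | succ n ih =>
    rw [Finset.sum_range_succ]
    have h1 : (0:ℝ) < (n:ℝ) + 1 := by positivity
    have key : (1:ℝ) / ((n:ℝ) + 1 + 1) ^ 2 ≤ 1/((n:ℝ)+1) - 1/((n:ℝ)+1+1) := by
      rw [div_sub_div _ _ (ne_of_gt h1) (by positivity), div_le_div_iff₀ (by positivity) (by positivity)]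
      nlinarith
    push_cast
    linarith

lemma basel' (n : ℕ) : ∑ j ∈ range n, (1:ℝ) / ((j:ℝ) + 1) ^ 2 ≤ 2 := by
  cases n with
  | zero => simp
  | succ n =>
    have := basel n
    have h1 : (0:ℝ) < (n:ℝ) + 1 := by positivity
    have : (0:ℝ) ≤ 1/((n:ℝ)+1) := by positivity
    linarith [basel n]

set_option maxHeartbeats 1000000 in
lemma term_est (u δ : ℝ) (hu : 0 < u) (hδ : 0 ≤ δ) (s t : ℝ) (hs : u ≤ s) :
    |Real.log (((s+δ)^2+t^2)/(s^2+t^2)) - δ * Real.log (((s+1)^2+t^2)/(s^2+t^2))|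
      ≤ ((2*δ+δ^2/u)^2 + δ*|δ-1| + δ*(2+1/u)^2) / (s^2+t^2) := by
  have hsp : 0 < s := lt_of_lt_of_le hu hs
  have hP : 0 < s^2 + t^2 := by positivity
  set P := s^2 + t^2 with hPdef
  have hw0 : 0 ≤ (2*δ*s+δ^2)/P := by positivity
  have hv0 : 0 ≤ (2*s+1)/P := by positivity
  have hA : ((s+δ)^2+t^2)/P = 1 + (2*δ*s+δ^2)/P := by
    field_simp; ring
  have hB : ((s+1)^2+t^2)/P = 1 + (2*s+1)/P := by
    field_simp; ring
  rw [hA, hB]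
  set w := (2*δ*s+δ^2)/P
  set v := (2*s+1)/P
  have b1 : |Real.log (1+w) - w| ≤ w^2 := loglin hw0
  have b3 : |v - Real.log (1+v)| ≤ v^2 := by rw [abs_sub_comm]; exact loglin hv0
  have b2 : w - δ*v = δ*(δ-1)/P := by
    simp only [w, v]; field_simp; ring
  have b2' : |w - δ*v| = δ*|δ-1|/P := by
    rw [b2, abs_div, abs_of_pos hP, abs_mul, abs_of_nonneg hδ]
  have b4 : w^2 ≤ (2*δ+δ^2/u)^2/P := by
    have h1 : 2*δ*s + δ^2 ≤ (2*δ+δ^2/u)*s := by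
      have : δ^2 ≤ δ^2/u*s := by
        rw [div_mul_eq_mul_div, le_div_iff₀ hu]; nlinarith
      nlinarith
    have h2 : 0 ≤ 2*δ*s + δ^2 := by positivity
    have h3 : s^2 ≤ P := by simp only [hPdef]; nlinarith
    rw [div_pow, div_le_div_iff₀ (by positivity) hP]
    calc (2*δ*s+δ^2)^2 * P ≤ ((2*δ+δ^2/u)*s)^2 * P :=
        mul_le_mul_of_nonneg_right (pow_le_pow_left₀ h2 h1 2) hP.le
      _ = (2*δ+δ^2/u)^2 * s^2 * P := by ring
      _ ≤ (2*δ+δ^2/u)^2 * P * P :=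
        mul_le_mul_of_nonneg_right (mul_le_mul_of_nonneg_left h3 (sq_nonneg _)) hP.le
      _ = (2*δ+δ^2/u)^2 * P^2 := by ring
  have b5 : v^2 ≤ (2+1/u)^2/P := by
    have h1 : 2*s + 1 ≤ (2+1/u)*s := by
      have : (1:ℝ) ≤ 1/u*s := by rw [div_mul_eq_mul_div, le_div_iff₀ hu]; nlinarith
      nlinarith
    have h2 : (0:ℝ) ≤ 2*s + 1 := by positivity
    have h3 : s^2 ≤ P := by simp only [hPdef]; nlinarith
    rw [div_pow, div_le_div_iff₀ (by positivity) hP]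
    calc (2*s+1)^2 * P ≤ ((2+1/u)*s)^2 * P :=
        mul_le_mul_of_nonneg_right (pow_le_pow_left₀ h2 h1 2) hP.le
      _ = (2+1/u)^2 * s^2 * P := by ring
      _ ≤ (2+1/u)^2 * P * P :=
        mul_le_mul_of_nonneg_right (mul_le_mul_of_nonneg_left h3 (sq_nonneg _)) hP.le
      _ = (2+1/u)^2 * P^2 := by ring
  have tri : |Real.log (1+w) - δ * Real.log (1+v)|
      ≤ |Real.log (1+w) - w| + |w - δ*v| + δ*|v - Real.log (1+v)| := by
    have : Real.log (1+w) - δ * Real.log (1+v)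
        = (Real.log (1+w) - w) + (w - δ*v) + δ*(v - Real.log (1+v)) := by ring
    rw [this]
    calc _ ≤ |(Real.log (1+w) - w) + (w - δ*v)| + |δ*(v - Real.log (1+v))| := abs_add_le _ _
      _ ≤ |Real.log (1+w) - w| + |w - δ*v| + |δ*(v - Real.log (1+v))| := by
          gcongr; exact abs_add_le _ _
      _ = |Real.log (1+w) - w| + |w - δ*v| + δ*|v - Real.log (1+v)| := by
          rw [abs_mul, abs_of_nonneg hδ]
  calc |Real.log (1+w) - δ * Real.log (1+v)|
      ≤ |Real.log (1+w) - w| + |w - δ*v| + δ*|v - Real.log (1+v)| := tri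
    _ ≤ w^2 + δ*|δ-1|/P + δ*v^2 := by
        rw [b2']; gcongr
    _ ≤ (2*δ+δ^2/u)^2/P + δ*|δ-1|/P + δ*((2+1/u)^2/P) := by gcongr
    _ = ((2*δ+δ^2/u)^2 + δ*|δ-1| + δ*(2+1/u)^2) / P := by ring

lemma sumP (u x t : ℝ) (hu : 0 < u) (hx : u ≤ x) (n : ℕ) :
    ∑ j ∈ range (n+1), 1/((x+(j:ℝ))^2+t^2) ≤ 1/u^2 + 2 := by
  have hxp : 0 < x := lt_of_lt_of_le hu hx
  rw [Finset.sum_range_succ']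
  have h0 : 1/((x+(0:ℕ):ℝ)^2+t^2) ≤ 1/u^2 := by
    push_cast
    rw [add_zero]
    apply one_div_le_one_div_of_le (by positivity)
    nlinarith
  have h1 : ∑ j ∈ range n, 1/((x+((j+1:ℕ)):ℝ)^2+t^2) ≤ ∑ j ∈ range n, (1:ℝ)/((j:ℝ)+1)^2 := by
    apply Finset.sum_le_sum
    intro j _
    apply one_div_le_one_div_of_le (by positivity)
    push_cast
    nlinarith [sq_nonneg t, Nat.cast_nonneg (α := ℝ) j]
  have := basel' n
  push_cast at h1 h0 ⊢
  linarith

lemma normsq_GammaSeq (s : ℂ) {n : ℕ} (hn : 1 ≤ n) :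
    ‖Complex.GammaSeq s n‖^2 = ((n:ℝ) ^ (s.re))^2 * ((n.factorial : ℝ))^2
      / ∏ j ∈ range (n+1), ((s.re+(j:ℝ))^2 + s.im^2) := by
  have hn0 : (0:ℝ) < n := by exact_mod_cast hn
  rw [Complex.GammaSeq]
  rw [norm_div, norm_mul, div_pow, mul_pow]
  congr 1
  · congr 2
    · rw []
      have : ((n:ℂ) : ℂ) = (((n:ℝ)):ℂ) := by push_cast; ring
      rw [this, Complex.norm_cpow_eq_rpow_re_of_pos hn0]
    · simp
  · rw [norm_prod, ← Finset.prod_pow]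
    apply Finset.prod_congr rfl
    intro j _
    rw [Complex.sq_norm, Complex.normSq_apply]
    simp [Complex.add_re, Complex.add_im]
    ring

set_option maxHeartbeats 1000000 in
lemma core (u δ : ℝ) (hu : 0 < u) (hδ : 0 ≤ δ) :
    ∃ E : ℝ, 0 < E ∧ ∀ z : ℂ, u ≤ z.re →
      ‖Complex.Gamma z / Complex.Gamma (z + (δ:ℂ))‖ ^ 2 ≤ E * (z.re^2 + z.im^2) ^ (-δ) ∧
      E⁻¹ * (z.re^2 + z.im^2) ^ (-δ) ≤ ‖Complex.Gamma z / Complex.Gamma (z + (δ:ℂ))‖ ^ 2 := by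
  set K : ℝ := (2*δ+δ^2/u)^2 + δ*|δ-1| + δ*(2+1/u)^2 with hK
  have hK0 : 0 ≤ K := by positivity
  set K' : ℝ := K * (1/u^2 + 2) with hK'
  have hK'0 : 0 ≤ K' := by positivity
  refine ⟨Real.exp K', Real.exp_pos _, ?_⟩
  intro z hz
  set x : ℝ := z.re with hxdef
  set t : ℝ := z.im with htdef
  have hx : 0 < x := lt_of_lt_of_le hu hz
  set P : ℕ → ℝ := fun j => (x+(j:ℝ))^2 + t^2 with hP
  set P' : ℕ → ℝ := fun j => (x+δ+(j:ℝ))^2 + t^2 with hP'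
  have hPpos : ∀ j, 0 < P j := fun j => by
    have : (0:ℝ) ≤ (j:ℝ) := Nat.cast_nonneg j
    simp only [hP]; positivity
  have hP'pos : ∀ j, 0 < P' j := fun j => by
    have : (0:ℝ) ≤ (j:ℝ) := Nat.cast_nonneg j
    simp only [hP']; positivity
  -- re/im of z + δ
  have hre' : (z + (δ:ℂ)).re = x + δ := by simp [hxdef]
  have him' : (z + (δ:ℂ)).im = t := by simp [htdef]
  -- the log-sum estimate
  have logsum : ∀ n : ℕ,
      |Real.log (∏ j ∈ range (n+1), (P' j / P j))
        - δ * (Real.log (P (n+1)) - Real.log (P 0))| ≤ K' := by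
    intro n
    have hlogprod : Real.log (∏ j ∈ range (n+1), (P' j / P j))
        = ∑ j ∈ range (n+1), Real.log (P' j / P j) :=
      Real.log_prod (fun j _ => by positivity)
    have htel : δ * (Real.log (P (n+1)) - Real.log (P 0))
        = ∑ j ∈ range (n+1), δ * (Real.log (P (j+1)) - Real.log (P j)) := by
      rw [← Finset.mul_sum, Finset.sum_range_sub (fun j => Real.log (P j))]
    rw [hlogprod, htel, ← Finset.sum_sub_distrib]
    calc |∑ j ∈ range (n+1), (Real.log (P' j / P j) - δ * (Real.log (P (j+1)) - Real.log (P j)))|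
        ≤ ∑ j ∈ range (n+1), |Real.log (P' j / P j) - δ * (Real.log (P (j+1)) - Real.log (P j))| :=
          Finset.abs_sum_le_sum_abs _ _
      _ ≤ ∑ j ∈ range (n+1), K * (1/P j) := by
          apply Finset.sum_le_sum
          intro j _
          have hs : u ≤ x + (j:ℝ) := le_add_of_le_of_nonneg hz (Nat.cast_nonneg j)
          have h1 : P' j = ((x+(j:ℝ))+δ)^2 + t^2 := by simp only [hP']; ring_nf
          have h2 : P (j+1) = ((x+(j:ℝ))+1)^2 + t^2 := by simp only [hP]; push_cast; ring_nf
          have h3 : Real.log (P (j+1)) - Real.log (P j) = Real.log (P (j+1) / P j) :=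
            (Real.log_div (hPpos _).ne' (hPpos _).ne').symm
          rw [h3, h1, h2]
          have := term_est u δ hu hδ (x+(j:ℝ)) t hs
          simp only [hP] at *
          calc |Real.log ((((x+(j:ℝ))+δ)^2+t^2)/((x+(j:ℝ))^2+t^2))
              - δ * Real.log ((((x+(j:ℝ))+1)^2+t^2)/((x+(j:ℝ))^2+t^2))| ≤ K / ((x+(j:ℝ))^2+t^2) := this
            _ = K * (1/((x+(j:ℝ))^2+t^2)) := by ring
      _ = K * ∑ j ∈ range (n+1), 1/P j := by rw [Finset.mul_sum]
      _ ≤ K * (1/u^2 + 2) := by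
          apply mul_le_mul_of_nonneg_left _ hK0
          simpa only [hP] using sumP u x t hu hz n
  -- norm formula for the GammaSeq ratio
  have hGn : ∀ n : ℕ, 1 ≤ n →
      ‖Complex.GammaSeq z n / Complex.GammaSeq (z + (δ:ℂ)) n‖^2
        = (((n:ℝ)^δ)^2)⁻¹ * ∏ j ∈ range (n+1), (P' j / P j) := by
    intro n hn
    have hn0 : (0:ℝ) < n := by exact_mod_cast hn
    rw [norm_div, div_pow, normsq_GammaSeq z hn, normsq_GammaSeq (z + (δ:ℂ)) hn, hre', him']
    rw [Finset.prod_div_distrib]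
    have hnx : (0:ℝ) < (n:ℝ)^x := Real.rpow_pos_of_pos hn0 _
    have hnd : (0:ℝ) < (n:ℝ)^δ := Real.rpow_pos_of_pos hn0 _
    have hfac : (0:ℝ) < (n.factorial : ℝ) := by positivity
    have hprodP : (0:ℝ) < ∏ j ∈ range (n+1), P j := Finset.prod_pos (fun j _ => hPpos j)
    have hprodP' : (0:ℝ) < ∏ j ∈ range (n+1), P' j := Finset.prod_pos (fun j _ => hP'pos j)
    have hsub : (n:ℝ)^(x+δ) = (n:ℝ)^x * (n:ℝ)^δ := Real.rpow_add hn0 _ _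
    simp only [hP, hP'] at hprodP hprodP' ⊢
    rw [hsub]
    simp only [← hxdef, ← htdef]
    field_simp
  -- two-sided bound on the product
  have hQub : ∀ n : ℕ, ∏ j ∈ range (n+1), (P' j / P j) ≤ (P (n+1) / P 0)^δ * Real.exp K' := by
    intro n
    have hQpos : 0 < ∏ j ∈ range (n+1), (P' j / P j) :=
      Finset.prod_pos (fun j _ => div_pos (hP'pos j) (hPpos j))
    have h1 := (abs_le.mp (logsum n)).2
    have h2 : (P (n+1) / P 0)^δ = Real.exp (δ * (Real.log (P (n+1)) - Real.log (P 0))) := by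
      rw [Real.rpow_def_of_pos (div_pos (hPpos _) (hPpos _)),
        Real.log_div (hPpos _).ne' (hPpos _).ne', mul_comm]
    calc ∏ j ∈ range (n+1), (P' j / P j) = Real.exp (Real.log (∏ j ∈ range (n+1), (P' j / P j))) :=
          (Real.exp_log hQpos).symm
      _ ≤ Real.exp (δ * (Real.log (P (n+1)) - Real.log (P 0)) + K') := Real.exp_le_exp.mpr (by linarith)
      _ = (P (n+1) / P 0)^δ * Real.exp K' := by rw [Real.exp_add, h2]
  have hQlb : ∀ n : ℕ, (P (n+1) / P 0)^δ * (Real.exp K')⁻¹ ≤ ∏ j ∈ range (n+1), (P' j / P j) := by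
    intro n
    have hQpos : 0 < ∏ j ∈ range (n+1), (P' j / P j) :=
      Finset.prod_pos (fun j _ => div_pos (hP'pos j) (hPpos j))
    have h1 := (abs_le.mp (logsum n)).1
    have h2 : (P (n+1) / P 0)^δ = Real.exp (δ * (Real.log (P (n+1)) - Real.log (P 0))) := by
      rw [Real.rpow_def_of_pos (div_pos (hPpos _) (hPpos _)),
        Real.log_div (hPpos _).ne' (hPpos _).ne', mul_comm]
    calc (P (n+1) / P 0)^δ * (Real.exp K')⁻¹
        = Real.exp (δ * (Real.log (P (n+1)) - Real.log (P 0)) - K') := by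
          rw [Real.exp_sub, h2, div_eq_mul_inv]
      _ ≤ Real.exp (Real.log (∏ j ∈ range (n+1), (P' j / P j))) := Real.exp_le_exp.mpr (by linarith)
      _ = ∏ j ∈ range (n+1), (P' j / P j) := Real.exp_log hQpos
  -- rearrangement
  have rearr : ∀ n : ℕ, 1 ≤ n → ∀ c : ℝ,
      (((n:ℝ)^δ)^2)⁻¹ * ((P (n+1) / P 0)^δ * c) = c * (P 0)^(-δ) * (P (n+1)/(n:ℝ)^2)^δ := by
    intro n hn c
    have hn0 : (0:ℝ) < n := by exact_mod_cast hn
    have e1 : ((n:ℝ)^δ)^2 = ((n:ℝ)^2)^δ := by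
      rw [← Real.rpow_natCast ((n:ℝ)^δ) 2, ← Real.rpow_natCast (n:ℝ) 2,
        ← Real.rpow_mul hn0.le, ← Real.rpow_mul hn0.le, mul_comm]
    have h2 : (0:ℝ) < ((n:ℝ)^2)^δ := Real.rpow_pos_of_pos (by positivity) _
    have h3 : (0:ℝ) < (P 0)^δ := Real.rpow_pos_of_pos (hPpos 0) _
    rw [e1, Real.div_rpow (hPpos (n+1)).le (hPpos 0).le,
      Real.div_rpow (hPpos (n+1)).le (by positivity : (0:ℝ) ≤ (n:ℝ)^2),
      Real.rpow_neg (hPpos 0).le]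
    field_simp
  -- limits
  have hPn2 : Tendsto (fun n : ℕ => P (n+1) / (n:ℝ)^2) atTop (𝓝 1) := by
    have h1 : Tendsto (fun n : ℕ => (x+1)/(n:ℝ) + 1) atTop (𝓝 (0+1)) :=
      (tendsto_const_div_atTop_nhds_zero_nat (x+1)).add tendsto_const_nhds
    have h2 : Tendsto (fun n : ℕ => t/(n:ℝ)) atTop (𝓝 0) := tendsto_const_div_atTop_nhds_zero_nat t
    have h3 : Tendsto (fun n : ℕ => ((x+1)/(n:ℝ) + 1)^2 + (t/(n:ℝ))^2) atTop (𝓝 1) := by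
      have := (h1.pow 2).add (h2.pow 2)
      norm_num at this
      exact this
    apply h3.congr'
    filter_upwards [eventually_ge_atTop 1] with n hn
    have hn0 : ((n:ℝ)) ≠ 0 := by
      have : (0:ℝ) < n := by exact_mod_cast hn
      exact this.ne'
    simp only [hP]
    push_cast
    field_simp
    ring
  have hGamma : Tendsto (fun n => ‖Complex.GammaSeq z n / Complex.GammaSeq (z+(δ:ℂ)) n‖^2)
      atTop (𝓝 (‖Complex.Gamma z / Complex.Gamma (z+(δ:ℂ))‖^2)) := by
    have hne : Complex.Gamma (z+(δ:ℂ)) ≠ 0 := by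
      apply Complex.Gamma_ne_zero_of_re_pos
      rw [hre']; linarith
    exact (((Complex.GammaSeq_tendsto_Gamma z).div
      (Complex.GammaSeq_tendsto_Gamma (z+(δ:ℂ))) hne).norm).pow 2
  constructor
  · have hRlim : Tendsto (fun n : ℕ => Real.exp K' * (P 0)^(-δ) * (P (n+1)/(n:ℝ)^2)^δ)
        atTop (𝓝 (Real.exp K' * (P 0)^(-δ))) := by
      have := (hPn2.rpow_const (Or.inr hδ)).const_mul (Real.exp K' * (P 0)^(-δ))
      norm_num at this
      simpa [mul_assoc] using this
    have hP0 : P 0 = x^2 + t^2 := by simp [hP]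
    rw [← hP0]
    refine le_of_tendsto_of_tendsto hGamma hRlim ?_
    filter_upwards [eventually_ge_atTop 1] with n hn
    rw [hGn n hn, ← rearr n hn (Real.exp K')]
    have : (0:ℝ) ≤ (((n:ℝ)^δ)^2)⁻¹ := by positivity
    exact mul_le_mul_of_nonneg_left (hQub n) this
  · have hRlim' : Tendsto (fun n : ℕ => (Real.exp K')⁻¹ * (P 0)^(-δ) * (P (n+1)/(n:ℝ)^2)^δ)
        atTop (𝓝 ((Real.exp K')⁻¹ * (P 0)^(-δ))) := by
      have := (hPn2.rpow_const (Or.inr hδ)).const_mul ((Real.exp K')⁻¹ * (P 0)^(-δ))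
      norm_num at this
      simpa [mul_assoc] using this
    have hP0 : P 0 = x^2 + t^2 := by simp [hP]
    rw [← hP0]
    refine le_of_tendsto_of_tendsto hRlim' hGamma ?_
    filter_upwards [eventually_ge_atTop 1] with n hn
    rw [hGn n hn, ← rearr n hn (Real.exp K')⁻¹]
    have : (0:ℝ) ≤ (((n:ℝ)^δ)^2)⁻¹ := by positivity
    exact mul_le_mul_of_nonneg_left (hQlb n) this

set_option maxHeartbeats 1000000 in
lemma factor_bound (α β : ℝ) (hα : -1 < α) (hβ : -1 < β) :
    ∃ D : ℝ, 0 < D ∧ ∀ M : ℝ, 0 ≤ M → ∀ lam : ℝ,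
      ‖Complex.Gamma ((α:ℂ) + (M:ℂ) + 1 + Complex.I * (lam:ℂ)) /
        Complex.Gamma ((β:ℂ) + (M:ℂ) + 1 + Complex.I * (lam:ℂ))‖
        ≤ D * ((1+M)^2 + lam^2) ^ ((α-β)/2) := by
  rcases le_or_gt α β with h | h
  · -- α ≤ β : use upper bound with z = α + M + 1 + iλ, δ = β - α
    set δ := β - α with hδdef
    have hδ : 0 ≤ δ := by simp [hδdef]; linarith
    obtain ⟨E, hE, hcore⟩ := core (α+1) δ (by linarith) hδ
    set m := min (α+1) 1 with hm
    have hm0 : 0 < m := lt_min (by linarith) one_pos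
    have hm1 : m ≤ 1 := min_le_right _ _
    refine ⟨Real.sqrt (E * (m^2)^(-δ)), Real.sqrt_pos.mpr (by positivity), ?_⟩
    intro M hM lam
    set z : ℂ := (α:ℂ) + (M:ℂ) + 1 + Complex.I * (lam:ℂ) with hz
    have hzre : z.re = α + M + 1 := by simp [hz]
    have hzim : z.im = lam := by simp [hz]
    have hzd : z + (δ:ℂ) = (β:ℂ) + (M:ℂ) + 1 + Complex.I * (lam:ℂ) := by
      simp only [hz, hδdef]; push_cast; ring
    obtain ⟨hub, -⟩ := hcore z (by rw [hzre]; linarith)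
    rw [hzd, hzre, hzim] at hub
    set X := (1+M)^2 + lam^2 with hX
    have hXpos : 0 < X := by positivity
    have hzsq : m^2 * X ≤ (α+M+1)^2 + lam^2 := by
      have h1 : m * (1+M) ≤ α+1+M := by
        have h2 : m ≤ α+1 := min_le_left _ _
        nlinarith
      have h3 : 0 ≤ m * (1+M) := by positivity
      have h4 : (m*(1+M))^2 ≤ (α+1+M)^2 := by nlinarith
      have hm2 : m^2 ≤ 1 := by nlinarith
      have h5 : m^2*lam^2 ≤ lam^2 := by nlinarith [sq_nonneg lam]
      simp only [hX]
      nlinarith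
    have hstep : ((α+M+1)^2 + lam^2) ^ (-δ) ≤ (m^2)^(-δ) * X^(-δ) := by
      rw [← Real.mul_rpow (by positivity) hXpos.le]
      exact Real.rpow_le_rpow_of_nonpos (by positivity) hzsq (by linarith)
    have hfin : ‖Complex.Gamma z / Complex.Gamma ((β:ℂ) + (M:ℂ) + 1 + Complex.I * (lam:ℂ))‖^2
        ≤ (Real.sqrt (E * (m^2)^(-δ)) * X ^ ((α-β)/2))^2 := by
      have hr : (Real.sqrt (E * (m^2)^(-δ)) * X ^ ((α-β)/2))^2 = E * (m^2)^(-δ) * X^(-δ) := by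
        rw [mul_pow, Real.sq_sqrt (by positivity)]
        congr 1
        rw [← Real.rpow_natCast (X ^ ((α-β)/2)) 2, ← Real.rpow_mul hXpos.le]
        push_cast
        simp only [hδdef]
        ring
      rw [hr]
      calc ‖Complex.Gamma z / Complex.Gamma ((β:ℂ) + (M:ℂ) + 1 + Complex.I * (lam:ℂ))‖^2
          ≤ E * (((α+M+1)^2 + lam^2) ^ (-δ)) := hub
        _ ≤ E * ((m^2)^(-δ) * X^(-δ)) := mul_le_mul_of_nonneg_left hstep hE.le
        _ = E * (m^2)^(-δ) * X^(-δ) := by ring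
    calc ‖Complex.Gamma z / Complex.Gamma ((β:ℂ) + (M:ℂ) + 1 + Complex.I * (lam:ℂ))‖
        = Real.sqrt (‖Complex.Gamma z / Complex.Gamma ((β:ℂ) + (M:ℂ) + 1 + Complex.I * (lam:ℂ))‖^2) :=
          (Real.sqrt_sq (norm_nonneg _)).symm
      _ ≤ Real.sqrt ((Real.sqrt (E * (m^2)^(-δ)) * X ^ ((α-β)/2))^2) := Real.sqrt_le_sqrt hfin
      _ = Real.sqrt (E * (m^2)^(-δ)) * X ^ ((α-β)/2) := Real.sqrt_sq (by positivity)
  · -- β < α : use lower bound with z = β + M + 1 + iλ, δ = α - β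
    set δ := α - β with hδdef
    have hδ : 0 ≤ δ := by simp [hδdef]; linarith
    obtain ⟨E, hE, hcore⟩ := core (β+1) δ (by linarith) hδ
    set c := (max (β+1) 1)^2 with hc
    have hc1 : 1 ≤ c := by
      have : (1:ℝ) ≤ max (β+1) 1 := le_max_right _ _
      nlinarith
    have hc0 : 0 < c := by linarith
    refine ⟨Real.sqrt (E * c^δ), Real.sqrt_pos.mpr (mul_pos hE (Real.rpow_pos_of_pos hc0 δ)), ?_⟩
    intro M hM lam
    set z : ℂ := (β:ℂ) + (M:ℂ) + 1 + Complex.I * (lam:ℂ) with hz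
    have hzre : z.re = β + M + 1 := by simp [hz]
    have hzim : z.im = lam := by simp [hz]
    have hzd : z + (δ:ℂ) = (α:ℂ) + (M:ℂ) + 1 + Complex.I * (lam:ℂ) := by
      simp only [hz, hδdef]; push_cast; ring
    obtain ⟨-, hlb⟩ := hcore z (by rw [hzre]; linarith)
    rw [hzre, hzim] at hlb
    set X := (1+M)^2 + lam^2 with hX
    have hXpos : 0 < X := by positivity
    set V := (β+M+1)^2 + lam^2 with hV
    have hVpos : 0 < V := by
      have h0 : 0 < β+M+1 := by linarith
      have h0' : 0 < (β+M+1)^2 := by positivity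
      simp only [hV]; nlinarith [sq_nonneg lam]
    -- norm squared of target ratio is the inverse
    have hflip : ‖Complex.Gamma ((α:ℂ) + (M:ℂ) + 1 + Complex.I * (lam:ℂ)) /
        Complex.Gamma z‖^2 = (‖Complex.Gamma z / Complex.Gamma (z + (δ:ℂ))‖^2)⁻¹ := by
      rw [hzd, norm_div, norm_div, ← inv_pow, inv_div]
    have hq : E⁻¹ * V^(-δ) ≤ ‖Complex.Gamma z / Complex.Gamma (z + (δ:ℂ))‖^2 := hlb
    have hLpos : 0 < E⁻¹ * V^(-δ) := by positivity
    have hub : ‖Complex.Gamma ((α:ℂ) + (M:ℂ) + 1 + Complex.I * (lam:ℂ)) /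
        Complex.Gamma z‖^2 ≤ E * V^δ := by
      rw [hflip]
      have h1 : (‖Complex.Gamma z / Complex.Gamma (z + (δ:ℂ))‖^2)⁻¹ ≤ (E⁻¹ * V^(-δ))⁻¹ :=
        inv_anti₀ hLpos hq
      have h2 : (E⁻¹ * V^(-δ))⁻¹ = E * V^δ := by
        rw [mul_inv, inv_inv, ← Real.rpow_neg hVpos.le, neg_neg]
      linarith [h1, h2.le]
    have hVX : V ≤ c * X := by
      have h1 : β+1+M ≤ max (β+1) 1 * (1+M) := by
        have h2 : β+1 ≤ max (β+1) 1 := le_max_left _ _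
        have h3 : (1:ℝ) ≤ max (β+1) 1 := le_max_right _ _
        nlinarith
      have h4 : (β+M+1)^2 ≤ c * (1+M)^2 := by
        have h0 : 0 ≤ β+1+M := by linarith
        have := pow_le_pow_left₀ h0 h1 2
        simp only [hc]
        calc (β+M+1)^2 = (β+1+M)^2 := by ring
          _ ≤ (max (β+1) 1 * (1+M))^2 := this
          _ = (max (β+1) 1)^2 * (1+M)^2 := by ring
      have h5 : lam^2 ≤ c * lam^2 := by nlinarith [sq_nonneg lam]
      simp only [hV, hX]
      nlinarith
    have hstep : V^δ ≤ c^δ * X^δ := by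
      rw [← Real.mul_rpow (by positivity) hXpos.le]
      exact Real.rpow_le_rpow hVpos.le hVX hδ
    have hfin : ‖Complex.Gamma ((α:ℂ) + (M:ℂ) + 1 + Complex.I * (lam:ℂ)) /
        Complex.Gamma z‖^2 ≤ (Real.sqrt (E * c^δ) * X ^ ((α-β)/2))^2 := by
      have hr : (Real.sqrt (E * c^δ) * X ^ ((α-β)/2))^2 = E * c^δ * X^δ := by
        rw [mul_pow, Real.sq_sqrt (by positivity)]
        congr 1
        rw [← Real.rpow_natCast (X ^ ((α-β)/2)) 2, ← Real.rpow_mul hXpos.le]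
        push_cast
        simp only [hδdef]
        ring
      rw [hr]
      calc ‖Complex.Gamma ((α:ℂ) + (M:ℂ) + 1 + Complex.I * (lam:ℂ)) / Complex.Gamma z‖^2
          ≤ E * V^δ := hub
        _ ≤ E * (c^δ * X^δ) := mul_le_mul_of_nonneg_left hstep hE.le
        _ = E * c^δ * X^δ := by ring
    calc ‖Complex.Gamma ((α:ℂ) + (M:ℂ) + 1 + Complex.I * (lam:ℂ)) / Complex.Gamma z‖
        = Real.sqrt (‖Complex.Gamma ((α:ℂ) + (M:ℂ) + 1 + Complex.I * (lam:ℂ)) / Complex.Gamma z‖^2) :=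
          (Real.sqrt_sq (norm_nonneg _)).symm
      _ ≤ Real.sqrt ((Real.sqrt (E * c^δ) * X ^ ((α-β)/2))^2) := Real.sqrt_le_sqrt hfin
      _ = Real.sqrt (E * c^δ) * X ^ ((α-β)/2) := Real.sqrt_sq (by positivity)

lemma rpow_finset_sum {ι : Type*} (s : Finset ι) (x : ℝ) (hx : 0 < x) (f : ι → ℝ) :
    x ^ (∑ i ∈ s, f i) = ∏ i ∈ s, x ^ (f i) := by
  classical
  induction s using Finset.induction with
  | empty => simp
  | insert _ _ hns ih =>
    rw [Finset.sum_insert hns, Finset.prod_insert hns, Real.rpow_add hx, ih]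

/-- Uniform-in-shift Gamma product estimate, case `S = ∑(a_i − b_i) ≤ 0`:
`|∏ Γ(a_i+M+1+iλ)/Γ(b_i+M+1+iλ)| ≤ C (1+λ²)^{S/2}` with `C` independent of `M ≥ 0` and `λ`. -/
theorem gamma_product_shift_bound_nonpos (N : ℕ) (hN : 1 ≤ N) (a b : ℕ → ℝ)
    (ha : ∀ i ∈ Icc 1 N, -1 < a i) (hb : ∀ i ∈ Icc 1 N, -1 < b i)
    (hS : ∑ i ∈ Icc 1 N, (a i - b i) ≤ 0) :
    ∃ C > 0, ∀ M : ℝ, 0 ≤ M → ∀ lam : ℝ,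
      ‖∏ i ∈ Icc 1 N,
          Complex.Gamma ((a i : ℂ) + (M:ℂ) + 1 + Complex.I * lam) /
            Complex.Gamma ((b i : ℂ) + (M:ℂ) + 1 + Complex.I * lam)‖ ≤
        C * (1 + lam ^ 2) ^ ((∑ i ∈ Icc 1 N, (a i - b i)) / 2) := by
  have key : ∀ i : ℕ, ∃ D : ℝ, 0 < D ∧ (i ∈ Icc 1 N → ∀ M : ℝ, 0 ≤ M → ∀ lam : ℝ,
      ‖Complex.Gamma ((a i : ℂ) + (M:ℂ) + 1 + Complex.I * (lam:ℂ)) /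
        Complex.Gamma ((b i : ℂ) + (M:ℂ) + 1 + Complex.I * (lam:ℂ))‖
        ≤ D * ((1+M)^2 + lam^2) ^ ((a i - b i)/2)) := by
    intro i
    by_cases hi : i ∈ Icc 1 N
    · obtain ⟨D, hD, hprop⟩ := factor_bound (a i) (b i) (ha i hi) (hb i hi)
      exact ⟨D, hD, fun _ => hprop⟩
    · exact ⟨1, one_pos, fun h => absurd h hi⟩
  choose D hDpos hDprop using key
  refine ⟨∏ i ∈ Icc 1 N, D i, Finset.prod_pos (fun i _ => hDpos i), ?_⟩
  intro M hM lam
  set X : ℝ := (1+M)^2 + lam^2 with hX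
  have hXpos : 0 < X := by positivity
  have step1 : ‖∏ i ∈ Icc 1 N,
      Complex.Gamma ((a i : ℂ) + (M:ℂ) + 1 + Complex.I * lam) /
        Complex.Gamma ((b i : ℂ) + (M:ℂ) + 1 + Complex.I * lam)‖
      ≤ ∏ i ∈ Icc 1 N, (D i * X ^ ((a i - b i)/2)) := by
    rw [norm_prod]
    apply Finset.prod_le_prod (fun i _ => norm_nonneg _)
    intro i hi
    exact hDprop i hi M hM lam
  have step2 : ∏ i ∈ Icc 1 N, (D i * X ^ ((a i - b i)/2))
      = (∏ i ∈ Icc 1 N, D i) * X ^ ((∑ i ∈ Icc 1 N, (a i - b i))/2) := by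
    rw [Finset.prod_mul_distrib]
    congr 1
    rw [Finset.sum_div, rpow_finset_sum _ _ hXpos]
  have step3 : X ^ ((∑ i ∈ Icc 1 N, (a i - b i))/2)
      ≤ (1 + lam^2) ^ ((∑ i ∈ Icc 1 N, (a i - b i))/2) := by
    apply Real.rpow_le_rpow_of_nonpos (by positivity)
    · simp only [hX]; nlinarith [sq_nonneg lam, sq_nonneg M]
    · linarith
  calc ‖∏ i ∈ Icc 1 N, _‖ ≤ ∏ i ∈ Icc 1 N, (D i * X ^ ((a i - b i)/2)) := step1
    _ = (∏ i ∈ Icc 1 N, D i) * X ^ ((∑ i ∈ Icc 1 N, (a i - b i))/2) := step2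
    _ ≤ (∏ i ∈ Icc 1 N, D i) * (1 + lam^2) ^ ((∑ i ∈ Icc 1 N, (a i - b i))/2) :=
        mul_le_mul_of_nonneg_left step3 (Finset.prod_pos (fun i _ => hDpos i)).le
end
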